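/- arXiv:0906.4536 — 3 statements merged into one kernel-verified Lean document; each statement's English description precedes it below -/
import Mathlib

section
/- For every integer q ≥ 0, the generating function G_q of triangular-lattice directed animals over ℕ with single source {q} satisfies, in ℤ[[t]], the identity (1 − 𝒟(t)) · G_q(t) = (1 − 𝒟(t)^{q+1}) · 𝒟(t). -/
/-- A triangular-lattice directed animal over positions `Q ⊆ ℤ` with source `S`:
sites on line `0` are exactly the source, and every higher site is supported at
the left, at the right, or at the center (two lines below). -/
def IsTriAnimal (Q : Set ℤ) (S : Finset ℤ) (A : Finset (ℤ × ℕ)) : Prop :=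
  (∀ x ∈ A, x.1 ∈ Q) ∧
  (∀ q : ℤ, (q, 0) ∈ A ↔ q ∈ S) ∧
  ∀ x ∈ A, 1 ≤ x.2 →
    (x.1 - 1, x.2 - 1) ∈ A ∨ (x.1 + 1, x.2 - 1) ∈ A ∨ (2 ≤ x.2 ∧ (x.1, x.2 - 2) ∈ A)

/-- A square-lattice directed animal over positions `Q ⊆ ℤ` with source `S`. -/
def IsSqAnimal (Q : Set ℤ) (S : Finset ℤ) (A : Finset (ℤ × ℕ)) : Prop :=
  (∀ x ∈ A, x.1 ∈ Q) ∧
  (∀ q : ℤ, (q, 0) ∈ A ↔ q ∈ S) ∧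
  ∀ x ∈ A, 1 ≤ x.2 →
    (x.1 - 1, x.2 - 1) ∈ A ∨ (x.1 + 1, x.2 - 1) ∈ A

/-- Number of triangular-lattice directed animals over `Q` with source `S` and area `n`. -/
noncomputable def triCount (Q : Set ℤ) (S : Finset ℤ) (n : ℕ) : ℕ :=
  {A : Finset (ℤ × ℕ) | IsTriAnimal Q S A ∧ A.card = n}.ncard

/-- Number of square-lattice directed animals over `Q` with source `S` and area `n`. -/
noncomputable def sqCount (Q : Set ℤ) (S : Finset ℤ) (n : ℕ) : ℕ :=
  {A : Finset (ℤ × ℕ) | IsSqAnimal Q S A ∧ A.card = n}.ncard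

/-- Generating function of triangular-lattice directed animals over `Q` with source `S`. -/
noncomputable def triGF (Q : Set ℤ) (S : Finset ℤ) : PowerSeries ℤ :=
  PowerSeries.mk fun n => (triCount Q S n : ℤ)

/-- Generating function of square-lattice directed animals over `Q` with source `S`. -/
noncomputable def sqGF (Q : Set ℤ) (S : Finset ℤ) : PowerSeries ℤ :=
  PowerSeries.mk fun n => (sqCount Q S n : ℤ)
namespace Stmt13
attribute [local instance] Classical.propDecidable

/-- the vertical gap when a cell over column `d` rests on a cell over column `c`. -/
def gp (d c : ℤ) : ℕ := 2 - (d - c).natAbs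

abbrev Anim (s : ℤ) (A : Finset (ℤ × ℕ)) : Prop := IsTriAnimal (Set.Ici 0) {s} A

variable {s : ℤ} {A : Finset (ℤ × ℕ)}

lemma anim_col_nonneg (hA : Anim s A) {x : ℤ × ℕ} (hx : x ∈ A) : 0 ≤ x.1 := hA.1 x hx

lemma anim_line0 (hA : Anim s A) {x : ℤ × ℕ} (hx : x ∈ A) (h0 : x.2 = 0) : x = (s, 0) := by
  obtain ⟨c, l⟩ := x
  simp only at h0; subst h0
  have := (hA.2.1 c).mp hx
  simp only [Finset.mem_singleton] at this
  subst this; rfl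

lemma anim_source (hA : Anim s A) : (s, 0) ∈ A := (hA.2.1 s).mpr (Finset.mem_singleton_self s)

/-- uniform support: `x` (at positive level) rests on some `y ∈ A`. -/
lemma anim_sup (hA : Anim s A) {x : ℤ × ℕ} (hx : x ∈ A) (h1 : 1 ≤ x.2) :
    ∃ y ∈ A, (y.1 - x.1).natAbs ≤ 1 ∧ y.2 + gp y.1 x.1 = x.2 := by
  rcases hA.2.2 x hx h1 with h | h | ⟨h2, h⟩
  · refine ⟨(x.1 - 1, x.2 - 1), h, ?_, ?_⟩ <;> simp [gp] <;> omega
  · refine ⟨(x.1 + 1, x.2 - 1), h, ?_, ?_⟩ <;> simp [gp] <;> omega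
  · refine ⟨(x.1, x.2 - 2), h, ?_, ?_⟩ <;> simp [gp] <;> omega

/-- build the support disjunction from a uniform support. -/
lemma sup_build {B : Finset (ℤ × ℕ)} {x y : ℤ × ℕ} (hy : y ∈ B)
    (hn : (y.1 - x.1).natAbs ≤ 1) (hg : y.2 + gp y.1 x.1 = x.2) :
    (x.1 - 1, x.2 - 1) ∈ B ∨ (x.1 + 1, x.2 - 1) ∈ B ∨ (2 ≤ x.2 ∧ (x.1, x.2 - 2) ∈ B) := by
  simp only [gp] at hg
  interval_cases h : (y.1 - x.1).natAbs
  · right; right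
    have h1 : y.1 = x.1 := by omega
    have h2 : y.2 = x.2 - 2 ∧ 2 ≤ x.2 := by omega
    refine ⟨h2.2, ?_⟩
    have : y = (x.1, x.2 - 2) := Prod.ext h1 h2.1
    rwa [← this]
  · have h2 : y.2 = x.2 - 1 := by omega
    rcases Int.natAbs_eq_iff.mp h with h1 | h1
    · right; left
      have : y = (x.1 + 1, x.2 - 1) := Prod.ext (by omega) h2
      rwa [← this]
    · left
      have : y = (x.1 - 1, x.2 - 1) := Prod.ext (by omega) h2
      rwa [← this]

lemma anim_parity (hA : Anim s A) : ∀ x ∈ A, (x.1 + (x.2 : ℤ) - s) % 2 = 0 := by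
  suffices h : ∀ ℓ : ℕ, ∀ x ∈ A, x.2 ≤ ℓ → (x.1 + (x.2 : ℤ) - s) % 2 = 0 by
    exact fun x hx => h x.2 x hx le_rfl
  intro ℓ
  induction ℓ with
  | zero =>
    intro x hx h0
    have := anim_line0 hA hx (by omega)
    subst this; simp
  | succ n ih =>
    intro x hx hle
    rcases Nat.eq_zero_or_pos x.2 with h0 | h1
    · have := anim_line0 hA hx h0; subst this; simp
    · obtain ⟨y, hy, hn, hg⟩ := anim_sup hA hx h1
      have hp := ih y hy (by simp only [gp] at hg; omega)
      simp only [gp] at hg hn ⊢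
      omega

lemma anim_eq_of_level (hA : Anim s A) {x y : ℤ × ℕ} (hx : x ∈ A) (hy : y ∈ A)
    (hn : (y.1 - x.1).natAbs ≤ 1) (hl : y.2 = x.2) : y = x := by
  have p1 := anim_parity hA x hx
  have p2 := anim_parity hA y hy
  have : y.1 = x.1 := by omega
  exact Prod.ext this hl

/-- minimality: a colliding lower cell is at least `gp` below. -/
lemma anim_min (hA : Anim s A) {x y : ℤ × ℕ} (hx : x ∈ A) (hy : y ∈ A)
    (hn : (y.1 - x.1).natAbs ≤ 1) (hl : y.2 < x.2) : y.2 + gp y.1 x.1 ≤ x.2 := by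
  have p1 := anim_parity hA x hx
  have p2 := anim_parity hA y hy
  simp only [gp]
  omega



/-- fueled "unsafe" predicate: there is a descending collision chain reaching a column `< w`. -/
def UnsF (A : Finset (ℤ × ℕ)) (w : ℤ) : ℕ → (ℤ × ℕ) → Prop
  | 0, x => x.1 < w
  | f+1, x => x.1 < w ∨ ∃ y ∈ A, (y.1 - x.1).natAbs ≤ 1 ∧ y.2 < x.2 ∧ UnsF A w f y

def Uns (A : Finset (ℤ × ℕ)) (w : ℤ) (x : ℤ × ℕ) : Prop := UnsF A w x.2 x

variable {A : Finset (ℤ × ℕ)} {w : ℤ}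

lemma unsF_base {x : ℤ × ℕ} (h : x.1 < w) : ∀ f, UnsF A w f x := by
  intro f; cases f with
  | zero => exact h
  | succ f => exact Or.inl h

lemma unsF_mono : ∀ {f f' : ℕ}, f ≤ f' → ∀ {x : ℤ × ℕ}, UnsF A w f x → UnsF A w f' x := by
  intro f
  induction f with
  | zero => intro f' _ x h; exact unsF_base h f'
  | succ f ih =>
    intro f' hle x h
    obtain ⟨f'', rfl⟩ : ∃ g, f' = g + 1 := ⟨f' - 1, by omega⟩
    rcases h with h | ⟨y, hy, h1, h2, h3⟩
    · exact Or.inl h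
    · exact Or.inr ⟨y, hy, h1, h2, ih (by omega) h3⟩

lemma unsF_shrink : ∀ {f : ℕ} {x : ℤ × ℕ}, UnsF A w f x → UnsF A w x.2 x := by
  intro f
  induction f with
  | zero => intro x h; exact unsF_base h _
  | succ f ih =>
    intro x h
    rcases h with h | ⟨y, hy, h1, h2, h3⟩
    · exact unsF_base h _
    · obtain ⟨m, hm⟩ : ∃ m, x.2 = m + 1 := ⟨x.2 - 1, by omega⟩
      rw [hm]
      exact Or.inr ⟨y, hy, h1, by omega, unsF_mono (by omega) (ih h3)⟩

lemma uns_iff {x : ℤ × ℕ} :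
    Uns A w x ↔ x.1 < w ∨ ∃ y ∈ A, (y.1 - x.1).natAbs ≤ 1 ∧ y.2 < x.2 ∧ Uns A w y := by
  constructor
  · intro h
    have h' : UnsF A w (x.2 + 1) x := unsF_mono (by omega) h
    rcases h' with h' | ⟨y, hy, h1, h2, h3⟩
    · exact Or.inl h'
    · exact Or.inr ⟨y, hy, h1, h2, unsF_shrink h3⟩
  · rintro (h | ⟨y, hy, h1, h2, h3⟩)
    · exact unsF_base h _
    · obtain ⟨m, hm⟩ : ∃ m, x.2 = m + 1 := ⟨x.2 - 1, by omega⟩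
      unfold Uns; rw [hm]
      exact Or.inr ⟨y, hy, h1, by omega, unsF_mono (by omega) h3⟩

/-- the resting height over the floor `F` at column `c`. -/
def hsupp (F : Finset (ℤ × ℕ)) (c : ℤ) : ℕ :=
  (F.filter (fun y => (y.1 - c).natAbs ≤ 1)).sup (fun y => y.2 + gp y.1 c)

/-- fueled re-embedding level: the level of the cell `x` of `B` when `B` is dropped
onto the floor `F`. -/
def LvlF (F B : Finset (ℤ × ℕ)) : ℕ → (ℤ × ℕ) → ℕ
  | 0, x => hsupp F x.1
  | f+1, x => max (hsupp F x.1)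
      ((B.filter (fun y => (y.1 - x.1).natAbs ≤ 1 ∧ y.2 < x.2)).sup
        (fun y => LvlF F B f y + gp y.1 x.1))

def Lvl (F B : Finset (ℤ × ℕ)) (x : ℤ × ℕ) : ℕ := LvlF F B x.2 x

variable {F B : Finset (ℤ × ℕ)}

lemma lvlF_stable : ∀ f : ℕ, ∀ x : ℤ × ℕ, x.2 ≤ f → LvlF F B f x = LvlF F B x.2 x := by
  intro f
  induction f using Nat.strong_induction_on with
  | _ f ih =>
    intro x hx
    match f, hx with
    | 0, hx =>
      have h0 : x.2 = 0 := by omega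
      rw [h0]
    | f+1, hx =>
      rcases Nat.eq_zero_or_pos x.2 with h0 | h1
      · rw [h0]
        show max _ _ = _
        have he : B.filter (fun y => (y.1 - x.1).natAbs ≤ 1 ∧ y.2 < x.2) = ∅ := by
          apply Finset.filter_false_of_mem; intro y _; rw [h0]; rintro ⟨-, h⟩; omega
        rw [he]; simp [LvlF]
      · obtain ⟨m, hm⟩ : ∃ m, x.2 = m + 1 := ⟨x.2 - 1, by omega⟩
        rw [hm]
        show max _ _ = max _ _
        congr 1
        apply Finset.sup_congr rfl
        intro y hy
        simp only [Finset.mem_filter] at hy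
        have hy2 : y.2 ≤ m := by omega
        rw [ih f (by omega) y (by omega), ih m (by omega) y hy2]

lemma lvl_eq (x : ℤ × ℕ) :
    Lvl F B x = max (hsupp F x.1)
      ((B.filter (fun y => (y.1 - x.1).natAbs ≤ 1 ∧ y.2 < x.2)).sup
        (fun y => Lvl F B y + gp y.1 x.1)) := by
  unfold Lvl
  rcases Nat.eq_zero_or_pos x.2 with h0 | h1
  · have he : B.filter (fun y => (y.1 - x.1).natAbs ≤ 1 ∧ y.2 < x.2) = ∅ := by
      apply Finset.filter_false_of_mem; intro y _; rw [h0]; rintro ⟨-, h⟩; omega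
    rw [he, h0]; simp [LvlF]
  · obtain ⟨m, hm⟩ : ∃ m, x.2 = m + 1 := ⟨x.2 - 1, by omega⟩
    rw [hm]
    show max _ _ = max _ _
    congr 1
    apply Finset.sup_congr (by rw [hm])
    intro y hy
    simp only [Finset.mem_filter] at hy
    rw [lvlF_stable m y (by omega)]

lemma le_lvl_of_mem {x y : ℤ × ℕ} (hy : y ∈ B) (hn : (y.1 - x.1).natAbs ≤ 1)
    (hl : y.2 < x.2) : Lvl F B y + gp y.1 x.1 ≤ Lvl F B x := by
  rw [lvl_eq x]
  refine le_trans (Finset.le_sup (f := fun y => Lvl F B y + gp y.1 x.1) ?_) (le_max_right _ _)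
  exact Finset.mem_filter.mpr ⟨hy, hn, hl⟩

lemma hsupp_le_lvl (x : ℤ × ℕ) : hsupp F x.1 ≤ Lvl F B x := by
  rw [lvl_eq x]; exact le_max_left _ _

lemma le_hsupp {c : ℤ} {h : ℤ × ℕ} (hh : h ∈ F) (hn : (h.1 - c).natAbs ≤ 1) :
    h.2 + gp h.1 c ≤ hsupp F c :=
  Finset.le_sup (f := fun y => y.2 + gp y.1 c) (Finset.mem_filter.mpr ⟨hh, hn⟩)

lemma lvl_le {x : ℤ × ℕ} {v : ℕ}
    (h1 : ∀ h ∈ F, (h.1 - x.1).natAbs ≤ 1 → h.2 + gp h.1 x.1 ≤ v)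
    (h2 : ∀ y ∈ B, (y.1 - x.1).natAbs ≤ 1 → y.2 < x.2 → Lvl F B y + gp y.1 x.1 ≤ v) :
    Lvl F B x ≤ v := by
  rw [lvl_eq x]
  apply max_le
  · apply Finset.sup_le; intro h hh; simp only [Finset.mem_filter] at hh
    exact h1 h hh.1 hh.2
  · apply Finset.sup_le; intro y hy; simp only [Finset.mem_filter] at hy
    exact h2 y hy.1 hy.2.1 hy.2.2

lemma lvl_attained {x : ℤ × ℕ} (h1 : 1 ≤ Lvl F B x) :
    (∃ h ∈ F, (h.1 - x.1).natAbs ≤ 1 ∧ h.2 + gp h.1 x.1 = Lvl F B x) ∨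
    (∃ y ∈ B, (y.1 - x.1).natAbs ≤ 1 ∧ y.2 < x.2 ∧ Lvl F B y + gp y.1 x.1 = Lvl F B x) := by
  have heq := lvl_eq (F := F) (B := B) x
  rcases max_cases (hsupp F x.1)
      ((B.filter (fun y => (y.1 - x.1).natAbs ≤ 1 ∧ y.2 < x.2)).sup
        (fun y => Lvl F B y + gp y.1 x.1)) with ⟨hm, _⟩ | ⟨hm, _⟩ <;> rw [hm] at heq
  · left
    have hpos : 1 ≤ hsupp F x.1 := by omega
    have hne : (F.filter (fun y => (y.1 - x.1).natAbs ≤ 1)).Nonempty := by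
      rcases Finset.eq_empty_or_nonempty (F.filter (fun y => (y.1 - x.1).natAbs ≤ 1)) with he | hne
      · exfalso; unfold hsupp at hpos; rw [he] at hpos; simp at hpos
      · exact hne
    obtain ⟨h, hh, hv⟩ := Finset.exists_mem_eq_sup _ hne (fun y => y.2 + gp y.1 x.1)
    simp only [Finset.mem_filter] at hh
    exact ⟨h, hh.1, hh.2, by rw [heq]; unfold hsupp; rw [hv]⟩
  · right
    have hpos : 1 ≤ (B.filter (fun y => (y.1 - x.1).natAbs ≤ 1 ∧ y.2 < x.2)).sup
        (fun y => Lvl F B y + gp y.1 x.1) := by omega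
    have hne : (B.filter (fun y => (y.1 - x.1).natAbs ≤ 1 ∧ y.2 < x.2)).Nonempty := by
      rcases Finset.eq_empty_or_nonempty
          (B.filter (fun y => (y.1 - x.1).natAbs ≤ 1 ∧ y.2 < x.2)) with he | hne
      · exfalso; rw [he] at hpos; simp at hpos
      · exact hne
    obtain ⟨y, hy, hv⟩ := Finset.exists_mem_eq_sup _ hne (fun y => Lvl F B y + gp y.1 x.1)
    simp only [Finset.mem_filter] at hy
    exact ⟨y, hy.1, hy.2.1, hy.2.2, by rw [heq, hv]⟩

/-- shift all cells horizontally by `t`. -/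
def shf (t : ℤ) (X : Finset (ℤ × ℕ)) : Finset (ℤ × ℕ) := X.image (fun x => (x.1 + t, x.2))

lemma mem_shf {t : ℤ} {X : Finset (ℤ × ℕ)} {z : ℤ × ℕ} :
    z ∈ shf t X ↔ (z.1 - t, z.2) ∈ X := by
  constructor
  · rintro hz
    simp only [shf, Finset.mem_image] at hz
    obtain ⟨x, hx, hxz⟩ := hz
    have h1 : x.1 + t = z.1 := by rw [← hxz]
    have h2 : x.2 = z.2 := by rw [← hxz]
    have : (z.1 - t, z.2) = x := Prod.ext (by omega) h2.symm
    rwa [this]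
  · intro hz
    simp only [shf, Finset.mem_image]
    exact ⟨(z.1 - t, z.2), hz, Prod.ext (by simp) rfl⟩

lemma shf_shf (t u : ℤ) (X : Finset (ℤ × ℕ)) : shf t (shf u X) = shf (t + u) X := by
  unfold shf
  rw [Finset.image_image]
  apply Finset.image_congr
  intro x _
  simp only [Function.comp]
  exact Prod.ext (by simp; ring) rfl

lemma shf_card (t : ℤ) (X : Finset (ℤ × ℕ)) : (shf t X).card = X.card := by
  apply Finset.card_image_of_injective
  intro a b hab
  simp only [Prod.mk.injEq] at hab
  exact Prod.ext (by omega) hab.2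

lemma anim_shf {s t : ℤ} {A : Finset (ℤ × ℕ)} (hA : Anim s A)
    (hc : ∀ x ∈ A, 0 ≤ x.1 + t) : Anim (s + t) (shf t A) := by
  refine ⟨?_, ?_, ?_⟩
  · intro x hx
    rw [mem_shf] at hx
    have := hc _ hx
    simp only at this
    simp only [Set.mem_Ici]
    omega
  · intro c
    rw [mem_shf]
    show ((c - t, 0) : ℤ × ℕ) ∈ A ↔ _
    rw [hA.2.1 (c - t)]
    simp only [Finset.mem_singleton]
    omega
  · intro x hx h1
    rw [mem_shf] at hx
    rcases hA.2.2 _ hx h1 with h | h | ⟨h2, h⟩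
    · left; rw [mem_shf]; show ((x.1 - 1 - t, x.2 - 1) : ℤ × ℕ) ∈ A
      have : ((x.1 - 1 - t, x.2 - 1) : ℤ × ℕ) = ((x.1 - t) - 1, x.2 - 1) := by
        exact Prod.ext (by ring) rfl
      rwa [this]
    · right; left; rw [mem_shf]; show ((x.1 + 1 - t, x.2 - 1) : ℤ × ℕ) ∈ A
      have : ((x.1 + 1 - t, x.2 - 1) : ℤ × ℕ) = ((x.1 - t) + 1, x.2 - 1) := by
        exact Prod.ext (by ring) rfl
      rwa [this]
    · right; right; exact ⟨h2, by rw [mem_shf]; exact h⟩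


section Chunk4
variable {q : ℤ} {A : Finset (ℤ × ℕ)}

/-- the "safe" part of `A` (no descending collision chain reaches a column `< q`). -/
noncomputable def Hs (q : ℤ) (A : Finset (ℤ × ℕ)) : Finset (ℤ × ℕ) :=
  A.filter (fun x => ¬ Uns A q x)

/-- the "unsafe" part of `A`. -/
noncomputable def Bs (q : ℤ) (A : Finset (ℤ × ℕ)) : Finset (ℤ × ℕ) :=
  A.filter (fun x => Uns A q x)

/-- re-embed `B` by dropping its cells onto the floor `F`. -/
noncomputable def Rz (F B : Finset (ℤ × ℕ)) : Finset (ℤ × ℕ) :=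
  B.image (fun x => (x.1, Lvl F B x))

lemma mem_Hs {x : ℤ × ℕ} : x ∈ Hs q A ↔ x ∈ A ∧ ¬ Uns A q x := Finset.mem_filter

lemma mem_Bs {x : ℤ × ℕ} : x ∈ Bs q A ↔ x ∈ A ∧ Uns A q x := Finset.mem_filter

lemma Hs_union_Bs : Hs q A ∪ Bs q A = A := by
  unfold Hs Bs
  rw [Finset.union_comm, Finset.filter_union_filter_not_eq]

lemma Hs_card_add_Bs_card : (Hs q A).card + (Bs q A).card = A.card := by
  unfold Hs Bs
  rw [add_comm, Finset.card_filter_add_card_filter_not]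

lemma not_mem_Bs_of_Hs {x : ℤ × ℕ} (hx : x ∈ Hs q A) : x ∉ Bs q A := by
  rw [mem_Hs] at hx; rw [mem_Bs]; tauto

lemma mem_Hs_or_Bs {x : ℤ × ℕ} (hx : x ∈ A) : x ∈ Hs q A ∨ x ∈ Bs q A := by
  by_cases h : Uns A q x
  · exact Or.inr (mem_Bs.mpr ⟨hx, h⟩)
  · exact Or.inl (mem_Hs.mpr ⟨hx, h⟩)

lemma Hs_col {x : ℤ × ℕ} (hx : x ∈ Hs q A) : q ≤ x.1 := by
  rw [mem_Hs, uns_iff] at hx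
  push_neg at hx
  exact hx.2.1

lemma Hs_closed {x y : ℤ × ℕ} (hx : x ∈ Hs q A) (hy : y ∈ A)
    (hn : (y.1 - x.1).natAbs ≤ 1) (hl : y.2 < x.2) : y ∈ Hs q A := by
  rw [mem_Hs] at hx ⊢
  refine ⟨hy, fun hu => hx.2 ?_⟩
  exact uns_iff.mpr (Or.inr ⟨y, hy, hn, hl, hu⟩)

lemma Bs_up {x y : ℤ × ℕ} (hx : x ∈ A) (hy : y ∈ Bs q A)
    (hn : (y.1 - x.1).natAbs ≤ 1) (hl : y.2 < x.2) : x ∈ Bs q A := by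
  rw [mem_Bs] at hy ⊢
  exact ⟨hx, uns_iff.mpr (Or.inr ⟨y, hy.1, hn, hl, hy.2⟩)⟩

lemma mem_Bs_of_col {x : ℤ × ℕ} (hx : x ∈ A) (hc : x.1 < q) : x ∈ Bs q A :=
  mem_Bs.mpr ⟨hx, uns_iff.mpr (Or.inl hc)⟩

lemma source_mem_Hs (hA : Anim q A) : ((q, 0) : ℤ × ℕ) ∈ Hs q A := by
  rw [mem_Hs]
  refine ⟨anim_source hA, fun hu => ?_⟩
  rw [uns_iff] at hu
  rcases hu with h | ⟨y, _, _, h, _⟩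
  · omega
  · omega

lemma Bs_pos (hA : Anim q A) {x : ℤ × ℕ} (hx : x ∈ Bs q A) : 1 ≤ x.2 := by
  by_contra h
  have h0 : x.2 = 0 := by omega
  have := anim_line0 hA (mem_Bs.mp hx).1 h0
  rw [this] at hx
  exact not_mem_Bs_of_Hs (source_mem_Hs hA) hx

lemma gp_pos {d c : ℤ} (h : (d - c).natAbs ≤ 1) : 1 ≤ gp d c := by
  unfold gp; omega

lemma Hs_anim (hA : Anim q A) : Anim q (Hs q A) := by
  refine ⟨fun x hx => hA.1 x (mem_Hs.mp hx).1, fun c => ?_, fun x hx h1 => ?_⟩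
  · constructor
    · intro hc
      have := anim_line0 hA (mem_Hs.mp hc).1 rfl
      simp only [Prod.mk.injEq] at this
      simp [this.1]
    · intro hc
      simp only [Finset.mem_singleton] at hc
      rw [hc]
      exact source_mem_Hs hA
  · obtain ⟨y, hy, hn, hg⟩ := anim_sup hA (mem_Hs.mp hx).1 h1
    have hyH : y ∈ Hs q A := Hs_closed hx hy hn (by have := gp_pos hn; omega)
    exact sup_build hyH hn hg

lemma mem_Rz {F B : Finset (ℤ × ℕ)} {z : ℤ × ℕ} :
    z ∈ Rz F B ↔ ∃ x ∈ B, x.1 = z.1 ∧ Lvl F B x = z.2 := by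
  unfold Rz
  rw [Finset.mem_image]
  constructor
  · rintro ⟨x, hx, h⟩
    obtain ⟨h1, h2⟩ := Prod.ext_iff.mp h
    exact ⟨x, hx, h1, h2⟩
  · rintro ⟨x, hx, h1, h2⟩; exact ⟨x, hx, Prod.ext h1 h2⟩

lemma mem_Rz_of {F B : Finset (ℤ × ℕ)} {x : ℤ × ℕ} (hx : x ∈ B) :
    (x.1, Lvl F B x) ∈ Rz F B := Finset.mem_image_of_mem _ hx

lemma Rz_card {F B : Finset (ℤ × ℕ)} : (Rz F B).card = B.card := by
  apply Finset.card_image_of_injOn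
  intro a ha b hb hab
  simp only [Prod.mk.injEq] at hab
  rcases lt_trichotomy a.2 b.2 with h | h | h
  · exfalso
    have := le_lvl_of_mem (F := F) ha (by rw [hab.1]; simp) h
    have hp := gp_pos (d := a.1) (c := b.1) (by rw [hab.1]; simp)
    omega
  · exact Prod.ext hab.1 h
  · exfalso
    have := le_lvl_of_mem (F := F) hb (by rw [hab.1]; simp) h
    have hp := gp_pos (d := b.1) (c := a.1) (by rw [hab.1]; simp)
    omega

/-- strict monotonicity of re-embedding levels along collisions, given that `B` has
no colliding pair at equal levels. -/
lemma lvl_lt_iff {F B : Finset (ℤ × ℕ)} {x y : ℤ × ℕ}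
    (heq : ∀ u ∈ B, ∀ v ∈ B, (u.1 - v.1).natAbs ≤ 1 → u.2 = v.2 → u = v)
    (hx : x ∈ B) (hy : y ∈ B) (hn : (y.1 - x.1).natAbs ≤ 1) :
    Lvl F B y < Lvl F B x ↔ y.2 < x.2 := by
  constructor
  · intro h
    rcases lt_trichotomy y.2 x.2 with h' | h' | h'
    · exact h'
    · exact absurd (heq y hy x hx hn h') (by rintro rfl; omega)
    · have := le_lvl_of_mem (F := F) hx (by omega) h'
      have := gp_pos (d := x.1) (c := y.1) (by omega)
      omega
  · intro h
    have := le_lvl_of_mem (F := F) hy hn h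
    have := gp_pos hn
    omega

end Chunk4

section Forward
variable {q : ℤ} {A : Finset (ℤ × ℕ)}

lemma natAbs_symm (a b : ℤ) : (a - b).natAbs = (b - a).natAbs := by omega

lemma gp_symm (a b : ℤ) : gp a b = gp b a := by unfold gp; omega

lemma lvl_drop_zero_iff {B : Finset (ℤ × ℕ)} {x : ℤ × ℕ} :
    Lvl ∅ B x = 0 ↔ ∀ y ∈ B, (y.1 - x.1).natAbs ≤ 1 → ¬ y.2 < x.2 := by
  constructor
  · intro h0 y hy hn hl
    have h1 := le_lvl_of_mem (F := ∅) hy hn hl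
    have h2 := gp_pos hn
    omega
  · intro h
    refine Nat.le_zero.mp (lvl_le ?_ ?_)
    · intro z hz; exact absurd hz (Finset.notMem_empty z)
    · intro y hy hn hl; exact absurd hl (h y hy hn)

lemma anim_heq (hA : Anim q A) {C : Finset (ℤ × ℕ)} (hC : C ⊆ A) :
    ∀ u ∈ C, ∀ v ∈ C, (u.1 - v.1).natAbs ≤ 1 → u.2 = v.2 → u = v :=
  fun u hu v hv hn hl => anim_eq_of_level hA (hC hv) (hC hu) hn hl

lemma drop0_col (hA : Anim q A) {x : ℤ × ℕ} (hx : x ∈ Bs q A)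
    (h0 : ∀ y ∈ Bs q A, (y.1 - x.1).natAbs ≤ 1 → ¬ y.2 < x.2) : x.1 = q - 1 := by
  have hx2 := Bs_pos hA hx
  obtain ⟨y, hy, hn, hg⟩ := anim_sup hA (mem_Bs.mp hx).1 hx2
  have hylow : y.2 < x.2 := by have := gp_pos hn; omega
  have hyH : y ∈ Hs q A := by
    rcases mem_Hs_or_Bs hy with h | h
    · exact h
    · exact absurd hylow (h0 y h hn)
  have hcol : q ≤ y.1 := Hs_col hyH
  have hxq : x.1 < q := by
    have hu := (mem_Bs.mp hx).2
    rw [uns_iff] at hu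
    rcases hu with h | ⟨z, hz, hn', hl', hu'⟩
    · exact h
    · exact absurd hl' (h0 z (mem_Bs.mpr ⟨hz, hu'⟩) hn')
  omega

lemma drop_anim (hA : Anim q A) (hne : (Bs q A).Nonempty) :
    Anim (q - 1) (Rz ∅ (Bs q A)) := by
  refine ⟨?_, ?_, ?_⟩
  · intro z hz
    obtain ⟨x, hx, h1, -⟩ := mem_Rz.mp hz
    have := anim_col_nonneg hA (mem_Bs.mp hx).1
    simp only [Set.mem_Ici]
    omega
  · intro c
    simp only [Finset.mem_singleton]
    constructor
    · intro hc
      obtain ⟨x, hx, h1, h2⟩ := mem_Rz.mp hc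
      have := drop0_col hA hx (by
        intro y hy hn hl
        have h1 := le_lvl_of_mem (F := ∅) hy hn hl
        have h2' := gp_pos hn
        simp only at h2
        omega)
      simp only at h1
      omega
    · rintro rfl
      obtain ⟨x, hx, hmin⟩ := Finset.exists_min_image (Bs q A) Prod.snd hne
      have h0 : Lvl ∅ (Bs q A) x = 0 :=
        lvl_drop_zero_iff.mpr (fun y hy _ hl => by have := hmin y hy; omega)
      have hc := drop0_col hA hx (fun y hy _ hl => by have := hmin y hy; omega)
      have : ((q - 1, 0) : ℤ × ℕ) = (x.1, Lvl ∅ (Bs q A) x) := by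
        rw [h0, hc]
      rw [this]
      exact mem_Rz_of hx
  · intro z hz h1
    obtain ⟨x, hx, hc1, hc2⟩ := mem_Rz.mp hz
    have hlv : 1 ≤ Lvl ∅ (Bs q A) x := by omega
    rcases lvl_attained hlv with ⟨h, hh, -⟩ | ⟨y, hy, hn, hl, hg⟩
    · exact absurd hh (Finset.notMem_empty h)
    · refine sup_build (mem_Rz_of hy) ?_ ?_
      · show (y.1 - z.1).natAbs ≤ 1
        rw [← hc1]; exact hn
      · show Lvl ∅ (Bs q A) y + gp y.1 z.1 = z.2
        rw [← hc1, ← hc2]; exact hg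

/-- key roundtrip: raising the dropped unsafe part onto the safe part restores levels. -/
lemma raise_drop (hA : Anim q A) :
    ∀ x ∈ Bs q A,
      Lvl (Hs q A) (Rz ∅ (Bs q A)) (x.1, Lvl ∅ (Bs q A) x) = x.2 := by
  set H := Hs q A with hH
  set B := Bs q A with hB
  set D := Rz ∅ B with hD
  have heq := anim_heq hA (C := B) (fun y hy => (mem_Bs.mp hy).1)
  suffices hs : ∀ n : ℕ, ∀ x ∈ B, x.2 ≤ n → Lvl H D (x.1, Lvl ∅ B x) = x.2 by
    exact fun x hx => hs x.2 x hx le_rfl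
  intro n
  induction n with
  | zero => intro x hx h0; exact absurd (Bs_pos hA hx) (by omega)
  | succ n ih =>
    intro x hx hle
    have hxA : x ∈ A := (mem_Bs.mp hx).1
    apply le_antisymm
    · apply lvl_le
      · -- floor cells cannot reach above x.2
        intro h hh hn
        show h.2 + gp h.1 x.1 ≤ x.2
        have hhA : h ∈ A := (mem_Hs.mp hh).1
        rcases lt_trichotomy h.2 x.2 with hlt | heq' | hgt
        · exact anim_min hA hxA hhA hn hlt
        · exfalso
          have hhx : h = x := anim_eq_of_level hA hxA hhA hn heq'
          rw [hhx] at hh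
          exact not_mem_Bs_of_Hs hh hx
        · exfalso
          have : x ∈ Bs q A → h ∈ Bs q A := fun hxB =>
            Bs_up hhA hxB (by rw [natAbs_symm]; exact hn) hgt
          exact not_mem_Bs_of_Hs hh (this hx)
      · -- already-raised cells cannot reach above x.2
        intro z hz hn hl
        obtain ⟨y, hy, hz1, hz2⟩ := mem_Rz.mp hz
        have hny : (y.1 - x.1).natAbs ≤ 1 := by rw [hz1]; exact hn
        have hylt : y.2 < x.2 := by
          refine (lvl_lt_iff (F := ∅) heq hx hy hny).mp ?_
          simp only at hl hz2
          omega
        have hzy : z = (y.1, Lvl ∅ B y) := by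
          obtain ⟨zc, zl⟩ := z
          simp only at hz1 hz2
          rw [← hz1, ← hz2]
        rw [hzy]
        show Lvl H D (y.1, Lvl ∅ B y) + gp y.1 x.1 ≤ x.2
        rw [ih y hy (by omega)]
        exact anim_min hA hxA (mem_Bs.mp hy).1 hny hylt
    · -- attained from below
      obtain ⟨y, hy, hn, hg⟩ := anim_sup hA hxA (Bs_pos hA hx)
      have hylt : y.2 < x.2 := by have := gp_pos hn; omega
      rcases mem_Hs_or_Bs hy with hyH | hyB
      · calc x.2 = y.2 + gp y.1 x.1 := hg.symm
        _ ≤ hsupp H x.1 := le_hsupp hyH hn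
        _ ≤ _ := hsupp_le_lvl (B := D) (x.1, Lvl ∅ B x)
      · have hdy : Lvl ∅ B y < Lvl ∅ B x := (lvl_lt_iff (F := ∅) heq hx hyB hn).mpr hylt
        have hmem : (y.1, Lvl ∅ B y) ∈ D := mem_Rz_of hyB
        have := le_lvl_of_mem (F := H) (B := D) (x := (x.1, Lvl ∅ B x)) hmem
          (by simpa using hn) (by simpa using hdy)
        rw [ih y hyB (by omega)] at this
        calc x.2 = y.2 + gp y.1 x.1 := hg.symm
        _ ≤ _ := this

lemma recompose (hA : Anim q A) : Rz (Hs q A) (Rz ∅ (Bs q A)) = Bs q A := by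
  ext z
  constructor
  · intro hz
    obtain ⟨w, hw, h1, h2⟩ := mem_Rz.mp hz
    obtain ⟨x, hx, g1, g2⟩ := mem_Rz.mp hw
    have hwx : w = (x.1, Lvl ∅ (Bs q A) x) := by
      obtain ⟨wc, wl⟩ := w
      simp only at g1 g2
      rw [← g1, ← g2]
    have hxz : x = z := by
      refine Prod.ext ?_ ?_
      · rw [← h1, hwx]
      · rw [← h2, hwx]
        exact (raise_drop hA x hx).symm
    rw [← hxz]
    exact hx
  · intro hz
    refine mem_Rz.mpr ⟨(z.1, Lvl ∅ (Bs q A) z), mem_Rz_of hz, rfl, ?_⟩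
    exact raise_drop hA z hz

end Forward

section Backward
variable {q : ℤ} {H B' : Finset (ℤ × ℕ)}

lemma floor_lt (hb : ∀ x ∈ H, q ≤ x.1) {h b : ℤ × ℕ} (hh : h ∈ H) (hB' : b ∈ B')
    (hn : (h.1 - b.1).natAbs ≤ 1) : h.2 < Lvl H B' b := by
  have h1 := le_hsupp (F := H) (c := b.1) hh hn
  have h2 := hsupp_le_lvl (F := H) (B := B') b
  have h3 := gp_pos hn
  omega

lemma raise_pos (hH : Anim q H) (hB : Anim (q - 1) B') (hq : 1 ≤ q) :
    ∀ b ∈ B', 1 ≤ Lvl H B' b := by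
  intro b hb
  rcases Nat.eq_zero_or_pos b.2 with h0 | h1
  · have hb0 : b = (q - 1, 0) := anim_line0 hB hb h0
    have hb1 : b.1 = q - 1 := by rw [hb0]
    have hsrc : ((q, 0) : ℤ × ℕ) ∈ H := anim_source hH
    have h1 : ((q, 0) : ℤ × ℕ).2 + gp ((q, 0) : ℤ × ℕ).1 b.1 ≤ hsupp H b.1 :=
      le_hsupp hsrc (by show (q - b.1).natAbs ≤ 1; omega)
    simp only at h1
    have h2 := hsupp_le_lvl (F := H) (B := B') b
    have h3 : 1 ≤ gp q b.1 := gp_pos (by omega)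
    omega
  · obtain ⟨y, hy, hn, hg⟩ := anim_sup hB hb h1
    have := le_lvl_of_mem (F := H) hy hn (by have := gp_pos hn; omega)
    have := gp_pos hn
    omega

lemma raise_disj (hcol : ∀ x ∈ H, q ≤ x.1) : ∀ z ∈ Rz H B', z ∉ H := by
  intro z hz hzH
  obtain ⟨b, hb, h1, h2⟩ := mem_Rz.mp hz
  have := floor_lt hcol hzH hb (by rw [← h1]; simp)
  omega

lemma raise_anim (hH : Anim q H) (hcol : ∀ x ∈ H, q ≤ x.1) (hB : Anim (q - 1) B')
    (hq : 1 ≤ q) : Anim q (H ∪ Rz H B') := by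
  refine ⟨?_, ?_, ?_⟩
  · intro x hx
    rcases Finset.mem_union.mp hx with h | h
    · have := hcol x h; simp only [Set.mem_Ici]; omega
    · obtain ⟨b, hb, h1, -⟩ := mem_Rz.mp h
      have := anim_col_nonneg hB hb
      simp only [Set.mem_Ici]; omega
  · intro c
    simp only [Finset.mem_singleton]
    constructor
    · intro hc
      rcases Finset.mem_union.mp hc with h | h
      · have := anim_line0 hH h rfl
        simp only [Prod.mk.injEq] at this
        exact this.1
      · exfalso
        obtain ⟨b, hb, -, h2⟩ := mem_Rz.mp h
        have := raise_pos hH hB hq b hb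
        simp only at h2
        omega
    · rintro rfl
      exact Finset.mem_union_left _ (anim_source hH)
  · intro x hx h1
    rcases Finset.mem_union.mp hx with h | h
    · refine (hH.2.2 x h h1).imp ?_ (Or.imp ?_ ?_) <;>
        first
          | exact fun hh => Finset.mem_union_left _ hh
          | exact fun hh => ⟨hh.1, Finset.mem_union_left _ hh.2⟩
    · obtain ⟨b, hb, hc1, hc2⟩ := mem_Rz.mp h
      have hlv : 1 ≤ Lvl H B' b := by omega
      rcases lvl_attained hlv with ⟨y, hy, hn, hg⟩ | ⟨y, hy, hn, hl, hg⟩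
      · refine sup_build (Finset.mem_union_left _ hy) (x := x) ?_ ?_
        · rw [← hc1]; exact hn
        · rw [← hc1, ← hc2]; exact hg
      · refine sup_build (Finset.mem_union_right _ (mem_Rz_of hy)) (x := x) ?_ ?_
        · show (y.1 - x.1).natAbs ≤ 1
          rw [← hc1]; exact hn
        · show Lvl H B' y + gp y.1 x.1 = x.2
          rw [← hc1, ← hc2]; exact hg

lemma raise_card (hcol : ∀ x ∈ H, q ≤ x.1) :
    (H ∪ Rz H B').card = H.card + B'.card := by
  rw [Finset.card_union_of_disjoint, Rz_card]
  rw [Finset.disjoint_right]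
  exact fun _ hz => raise_disj hcol _ hz

lemma raise_Hs (hH : Anim q H) (hcol : ∀ x ∈ H, q ≤ x.1) (hB : Anim (q - 1) B')
    (hq : 1 ≤ q) :
    Hs q (H ∪ Rz H B') = H ∧ Bs q (H ∪ Rz H B') = Rz H B' := by
  set A := H ∪ Rz H B' with hAdef
  have hsafe : ∀ n : ℕ, ∀ h ∈ H, h.2 ≤ n → ¬ Uns A q h := by
    intro n
    induction n with
    | zero =>
      intro h hh h0 hu
      rw [uns_iff] at hu
      rcases hu with hu | ⟨y, hy, hn, hl, -⟩
      · have := hcol h hh; omega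
      · omega
    | succ n ih =>
      intro h hh hle hu
      rw [uns_iff] at hu
      rcases hu with hu | ⟨y, hy, hn, hl, hu⟩
      · have := hcol h hh; omega
      · rcases Finset.mem_union.mp hy with hyH | hyR
        · exact ih y hyH (by omega) hu
        · obtain ⟨b, hb, h1, h2⟩ := mem_Rz.mp hyR
          have := floor_lt hcol hh hb (by rw [natAbs_symm, h1]; exact hn)
          omega
  have huns : ∀ n : ℕ, ∀ b ∈ B', b.2 ≤ n → Uns A q (b.1, Lvl H B' b) := by
    intro n
    induction n with
    | zero =>
      intro b hb h0
      have hb0 : b = (q - 1, 0) := anim_line0 hB hb (by omega)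
      refine uns_iff.mpr (Or.inl ?_)
      show b.1 < q
      rw [hb0]; show q - 1 < q; omega
    | succ n ih =>
      intro b hb hle
      rcases Nat.eq_zero_or_pos b.2 with h0 | h1
      · have hb0 : b = (q - 1, 0) := anim_line0 hB hb h0
        refine uns_iff.mpr (Or.inl ?_)
        show b.1 < q
        rw [hb0]; show q - 1 < q; omega
      · obtain ⟨y, hy, hn, hg⟩ := anim_sup hB hb h1
        have hylt : y.2 < b.2 := by have := gp_pos hn; omega
        refine uns_iff.mpr (Or.inr ⟨(y.1, Lvl H B' y), ?_, ?_, ?_, ?_⟩)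
        · exact Finset.mem_union_right _ (mem_Rz_of hy)
        · show (y.1 - b.1).natAbs ≤ 1; exact hn
        · show Lvl H B' y < Lvl H B' b
          have := le_lvl_of_mem (F := H) hy hn hylt
          have := gp_pos hn
          omega
        · exact ih y hy (by omega)
  have hR : ∀ z ∈ Rz H B', Uns A q z := by
    intro z hz
    obtain ⟨b, hb, h1, h2⟩ := mem_Rz.mp hz
    have : z = (b.1, Lvl H B' b) := by
      obtain ⟨zc, zl⟩ := z
      simp only at h1 h2
      rw [← h1, ← h2]
    rw [this]
    exact huns b.2 b hb le_rfl
  constructor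
  · ext x
    rw [mem_Hs]
    constructor
    · rintro ⟨hxA, hxs⟩
      rcases Finset.mem_union.mp hxA with h | h
      · exact h
      · exact absurd (hR x h) hxs
    · intro hxH
      exact ⟨Finset.mem_union_left _ hxH, hsafe x.2 x hxH le_rfl⟩
  · ext x
    rw [mem_Bs]
    constructor
    · rintro ⟨hxA, hxu⟩
      rcases Finset.mem_union.mp hxA with h | h
      · exact absurd hxu (hsafe x.2 x h le_rfl)
      · exact h
    · intro hxR
      exact ⟨Finset.mem_union_right _ hxR, hR x hxR⟩

/-- the other key roundtrip: dropping the raised animal recovers it. -/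
lemma drop_raise (hH : Anim q H) (hcol : ∀ x ∈ H, q ≤ x.1) (hB : Anim (q - 1) B')
    (hq : 1 ≤ q) :
    ∀ b ∈ B', Lvl ∅ (Rz H B') (b.1, Lvl H B' b) = b.2 := by
  have heq' := anim_heq hB (C := B') Finset.Subset.rfl
  set R := Rz H B' with hR
  suffices hs : ∀ n : ℕ, ∀ b ∈ B', b.2 ≤ n → Lvl ∅ R (b.1, Lvl H B' b) = b.2 by
    exact fun b hb => hs b.2 b hb le_rfl
  intro n
  induction n with
  | zero =>
    intro b hb h0
    have hb2 : b.2 = 0 := by omega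
    apply le_antisymm _ (by omega)
    rw [hb2]
    refine lvl_le ?_ ?_
    · intro z hz; exact absurd hz (Finset.notMem_empty z)
    · intro z hz hn hl
      exfalso
      obtain ⟨y, hy, h1, h2⟩ := mem_Rz.mp hz
      have hny : (y.1 - b.1).natAbs ≤ 1 := by rw [h1]; exact hn
      have : y.2 < b.2 := by
        refine (lvl_lt_iff (F := H) heq' hb hy hny).mp ?_
        simp only at hl h2
        omega
      omega
  | succ n ih =>
    intro b hb hle
    apply le_antisymm
    · apply lvl_le
      · intro z hz; exact absurd hz (Finset.notMem_empty z)
      · intro z hz hn hl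
        obtain ⟨y, hy, h1, h2⟩ := mem_Rz.mp hz
        have hny : (y.1 - b.1).natAbs ≤ 1 := by rw [h1]; exact hn
        have hylt : y.2 < b.2 := by
          refine (lvl_lt_iff (F := H) heq' hb hy hny).mp ?_
          simp only at hl h2
          omega
        have hzy : z = (y.1, Lvl H B' y) := by
          obtain ⟨zc, zl⟩ := z
          simp only at h1 h2
          rw [← h1, ← h2]
        rw [hzy]
        show Lvl ∅ R (y.1, Lvl H B' y) + gp y.1 b.1 ≤ b.2
        rw [ih y hy (by omega)]
        exact anim_min hB hb hy hny hylt
    · rcases Nat.eq_zero_or_pos b.2 with h0 | h1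
      · omega
      · obtain ⟨y, hy, hn, hg⟩ := anim_sup hB hb h1
        have hylt : y.2 < b.2 := by have := gp_pos hn; omega
        have hdy : Lvl H B' y < Lvl H B' b := by
          have := le_lvl_of_mem (F := H) hy hn hylt
          have := gp_pos hn
          omega
        have hmem : (y.1, Lvl H B' y) ∈ R := mem_Rz_of hy
        have := le_lvl_of_mem (F := ∅) (B := R) (x := (b.1, Lvl H B' b)) hmem
          (by simpa using hn) (by simpa using hdy)
        simp only at this
        rw [ih y hy (by omega)] at this
        omega

lemma raise_recompose (hH : Anim q H) (hcol : ∀ x ∈ H, q ≤ x.1) (hB : Anim (q - 1) B')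
    (hq : 1 ≤ q) : Rz ∅ (Rz H B') = B' := by
  ext z
  constructor
  · intro hz
    obtain ⟨w, hw, h1, h2⟩ := mem_Rz.mp hz
    obtain ⟨b, hb, g1, g2⟩ := mem_Rz.mp hw
    have hwb : w = (b.1, Lvl H B' b) := by
      obtain ⟨wc, wl⟩ := w
      simp only at g1 g2
      rw [← g1, ← g2]
    have hbz : b = z := by
      refine Prod.ext ?_ ?_
      · rw [← h1, hwb]
      · rw [← h2, hwb]
        exact (drop_raise hH hcol hB hq b hb).symm
    rw [← hbz]
    exact hb
  · intro hz
    refine mem_Rz.mpr ⟨(z.1, Lvl H B' z), mem_Rz_of hz, rfl, ?_⟩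
    exact drop_raise hH hcol hB hq z hz

end Backward

section EmptyAndFinite
variable {q s : ℤ} {A : Finset (ℤ × ℕ)}

lemma Bs_empty_of_cols (hcol : ∀ x ∈ A, q ≤ x.1) : Bs q A = ∅ := by
  have hsafe : ∀ n : ℕ, ∀ x ∈ A, x.2 ≤ n → ¬ Uns A q x := by
    intro n
    induction n with
    | zero =>
      intro x hx h0 hu
      rw [uns_iff] at hu
      rcases hu with hu | ⟨y, hy, hn, hl, -⟩
      · have := hcol x hx; omega
      · omega
    | succ n ih =>
      intro x hx hle hu
      rw [uns_iff] at hu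
      rcases hu with hu | ⟨y, hy, hn, hl, hu⟩
      · have := hcol x hx; omega
      · exact ih y hy (by omega) hu
  rw [Finset.eq_empty_iff_forall_notMem]
  intro x hx
  exact hsafe x.2 x (mem_Bs.mp hx).1 le_rfl ((mem_Bs.mp hx).2)

lemma cols_of_Bs_empty (h : Bs q A = ∅) : ∀ x ∈ A, q ≤ x.1 := by
  intro x hx
  rcases mem_Hs_or_Bs (q := q) hx with hH | hB
  · exact Hs_col hH
  · rw [h] at hB; exact absurd hB (Finset.notMem_empty x)

lemma anim_level_lt (hA : Anim s A) : ∀ x ∈ A, x.2 < 2 * A.card := by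
  have key : ∀ n : ℕ, ∀ x ∈ A, x.2 ≤ n →
      x.2 < 2 * (A.filter (fun y => y.2 ≤ x.2)).card := by
    intro n
    induction n with
    | zero =>
      intro x hx h0
      have : x ∈ A.filter (fun y => y.2 ≤ x.2) := Finset.mem_filter.mpr ⟨hx, le_rfl⟩
      have := Finset.card_pos.mpr ⟨x, this⟩
      omega
    | succ n ih =>
      intro x hx hle
      rcases Nat.eq_zero_or_pos x.2 with h0 | h1
      · have : x ∈ A.filter (fun y => y.2 ≤ x.2) := Finset.mem_filter.mpr ⟨hx, le_rfl⟩
        have := Finset.card_pos.mpr ⟨x, this⟩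
        omega
      · obtain ⟨y, hy, hn, hg⟩ := anim_sup hA hx h1
        have hg2 : 1 ≤ gp y.1 x.1 ∧ gp y.1 x.1 ≤ 2 := ⟨gp_pos hn, by unfold gp; omega⟩
        have hylt : y.2 < x.2 := by omega
        have hih := ih y hy (by omega)
        have hsub : insert x (A.filter (fun z => z.2 ≤ y.2)) ⊆
            A.filter (fun z => z.2 ≤ x.2) := by
          intro z hz
          rcases Finset.mem_insert.mp hz with rfl | hz'
          · exact Finset.mem_filter.mpr ⟨hx, le_rfl⟩
          · have := Finset.mem_filter.mp hz'
            exact Finset.mem_filter.mpr ⟨this.1, by omega⟩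
        have hcard := Finset.card_le_card hsub
        rw [Finset.card_insert_of_notMem (by
          intro hmem
          have := (Finset.mem_filter.mp hmem).2
          omega)] at hcard
        omega
  intro x hx
  have h1 := key x.2 x hx le_rfl
  have h2 : (A.filter (fun y => y.2 ≤ x.2)).card ≤ A.card :=
    Finset.card_le_card (Finset.filter_subset _ _)
  omega

lemma anim_col_bound (hA : Anim s A) : ∀ x ∈ A, (x.1 - s).natAbs ≤ x.2 := by
  have key : ∀ n : ℕ, ∀ x ∈ A, x.2 ≤ n → (x.1 - s).natAbs ≤ x.2 := by
    intro n
    induction n with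
    | zero =>
      intro x hx h0
      rw [anim_line0 hA hx (by omega)]
      simp
    | succ n ih =>
      intro x hx hle
      rcases Nat.eq_zero_or_pos x.2 with h0 | h1
      · rw [anim_line0 hA hx h0]; simp
      · obtain ⟨y, hy, hn, hg⟩ := anim_sup hA hx h1
        have := ih y hy (by have := gp_pos hn; omega)
        have := gp_pos hn
        omega
  exact fun x hx => key x.2 x hx le_rfl

lemma anim_finite (s : ℤ) (n : ℕ) :
    {A : Finset (ℤ × ℕ) | Anim s A ∧ A.card = n}.Finite := by
  classical
  set box : Finset (ℤ × ℕ) :=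
    (Finset.Icc (s - 2 * n) (s + 2 * n)) ×ˢ (Finset.range (2 * n)) with hbox
  apply Set.Finite.subset (Finset.finite_toSet box.powerset)
  rintro A ⟨hA, hcard⟩
  simp only [Finset.coe_powerset, Set.mem_preimage, Set.mem_powerset_iff]
  intro x hx
  rw [Finset.mem_coe] at hx ⊢
  have h1 := anim_level_lt hA x hx
  have h2 := anim_col_bound hA x hx
  rw [Finset.mem_product, Finset.mem_Icc, Finset.mem_range]
  rw [hcard] at h1
  refine ⟨⟨?_, ?_⟩, ?_⟩ <;> omega

end EmptyAndFinite

section Counting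

lemma shf_zero (X : Finset (ℤ × ℕ)) : shf 0 X = X := by
  ext z
  rw [mem_shf]
  norm_num

lemma shf_cancel (t : ℤ) (X : Finset (ℤ × ℕ)) : shf t (shf (-t) X) = X := by
  rw [shf_shf]
  norm_num [shf_zero]

lemma shf_cancel' (t : ℤ) (X : Finset (ℤ × ℕ)) : shf (-t) (shf t X) = X := by
  rw [shf_shf]
  norm_num [shf_zero]

/-- the finset of animals over `Ici 0` with source `{s}` and area `n`. -/
noncomputable def FS (s : ℤ) (n : ℕ) : Finset (Finset (ℤ × ℕ)) :=
  (anim_finite s n).toFinset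

lemma mem_FS {s : ℤ} {n : ℕ} {A : Finset (ℤ × ℕ)} :
    A ∈ FS s n ↔ Anim s A ∧ A.card = n := by
  unfold FS
  rw [Set.Finite.mem_toFinset]
  rfl

lemma anim_shf_to (s t u : ℤ) {A : Finset (ℤ × ℕ)} (hA : Anim s A)
    (hc : ∀ x ∈ A, 0 ≤ x.1 + t) (h : s + t = u) : Anim u (shf t A) :=
  h ▸ anim_shf hA hc

lemma card_P0 (q : ℤ) (hq : 1 ≤ q) (n : ℕ) :
    ((FS q n).filter (fun A => Bs q A = ∅)).card = (FS 0 n).card := by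
  apply Finset.card_nbij' (i := fun A => shf (-q) A) (j := fun H => shf q H)
  · intro A hA
    obtain ⟨hFS, hB0⟩ := Finset.mem_filter.mp hA
    obtain ⟨hAq, hcn⟩ := mem_FS.mp hFS
    refine mem_FS.mpr ⟨?_, by rw [shf_card]; exact hcn⟩
    refine anim_shf_to q (-q) 0 hAq ?_ (by ring)
    intro x hx
    have := cols_of_Bs_empty hB0 x hx
    omega
  · intro H hH
    obtain ⟨hH0, hck⟩ := mem_FS.mp hH
    have hAq : Anim q (shf q H) := by
      refine anim_shf_to 0 q q hH0 ?_ (by ring)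
      intro x hx
      have := anim_col_nonneg hH0 hx
      omega
    refine Finset.mem_filter.mpr ⟨mem_FS.mpr ⟨hAq, by rw [shf_card]; exact hck⟩, ?_⟩
    apply Bs_empty_of_cols
    intro x hx
    have := anim_col_nonneg hH0 (mem_shf.mp hx)
    simp only at this
    omega
  · intro A _; exact shf_cancel q A
  · intro H _; exact shf_cancel' q H

lemma card_P1 (q : ℤ) (hq : 1 ≤ q) (n k : ℕ) (hk : k ≤ n) :
    (((FS q n).filter (fun A => ¬ Bs q A = ∅)).filter (fun A => (Hs q A).card = k)).card
      = (FS 0 k).card * (FS (q - 1) (n - k)).card := by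
  rw [← Finset.card_product]
  apply Finset.card_nbij' (i := fun A => (shf (-q) (Hs q A), Rz ∅ (Bs q A)))
    (j := fun p => shf q p.1 ∪ Rz (shf q p.1) p.2)
  · intro A hA
    obtain ⟨hA', hHk⟩ := Finset.mem_filter.mp hA
    obtain ⟨hFS, hBne⟩ := Finset.mem_filter.mp hA'
    obtain ⟨hAq, hcn⟩ := mem_FS.mp hFS
    rw [Finset.mem_coe, Finset.mem_product]
    constructor
    · refine mem_FS.mpr ⟨?_, by rw [shf_card]; exact hHk⟩
      refine anim_shf_to q (-q) 0 (Hs_anim hAq) ?_ (by ring)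
      intro x hx
      have := Hs_col hx
      omega
    · refine mem_FS.mpr ⟨?_, ?_⟩
      · exact drop_anim hAq (Finset.nonempty_iff_ne_empty.mpr hBne)
      · rw [Rz_card]
        have := Hs_card_add_Bs_card (q := q) (A := A)
        omega
  · rintro ⟨H₀, B'⟩ hp
    rw [Finset.mem_coe, Finset.mem_product] at hp
    obtain ⟨hm1, hm2⟩ := hp
    dsimp only at hm1 hm2
    obtain ⟨hH0, hck⟩ := mem_FS.mp hm1
    obtain ⟨hB', hcB⟩ := mem_FS.mp hm2
    have hAq : Anim q (shf q H₀) := by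
      refine anim_shf_to 0 q q hH0 ?_ (by ring)
      intro x hx
      have := anim_col_nonneg hH0 hx
      omega
    have hcol : ∀ x ∈ shf q H₀, q ≤ x.1 := by
      intro x hx
      have := anim_col_nonneg hH0 (mem_shf.mp hx)
      simp only at this
      omega
    have hHs := raise_Hs hAq hcol hB' hq
    dsimp only
    refine Finset.mem_filter.mpr ⟨Finset.mem_filter.mpr ⟨mem_FS.mpr ⟨?_, ?_⟩, ?_⟩, ?_⟩
    · exact raise_anim hAq hcol hB' hq
    · rw [raise_card hcol, shf_card]
      omega
    · rw [hHs.2]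
      apply Finset.nonempty_iff_ne_empty.mp
      exact ⟨_, mem_Rz_of (anim_source hB')⟩
    · rw [hHs.1, shf_card]
      exact hck
  · intro A hA
    obtain ⟨hA', hHk⟩ := Finset.mem_filter.mp hA
    obtain ⟨hFS, hBne⟩ := Finset.mem_filter.mp hA'
    obtain ⟨hAq, hcn⟩ := mem_FS.mp hFS
    simp only
    rw [shf_cancel q (Hs q A), recompose hAq, Hs_union_Bs]
  · rintro ⟨H₀, B'⟩ hp
    rw [Finset.mem_coe, Finset.mem_product] at hp
    obtain ⟨hm1, hm2⟩ := hp
    dsimp only at hm1 hm2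
    obtain ⟨hH0, hck⟩ := mem_FS.mp hm1
    obtain ⟨hB', hcB⟩ := mem_FS.mp hm2
    have hAq : Anim q (shf q H₀) := by
      refine anim_shf_to 0 q q hH0 ?_ (by ring)
      intro x hx
      have := anim_col_nonneg hH0 hx
      omega
    have hcol : ∀ x ∈ shf q H₀, q ≤ x.1 := by
      intro x hx
      have := anim_col_nonneg hH0 (mem_shf.mp hx)
      simp only at this
      omega
    have hHs := raise_Hs hAq hcol hB' hq
    simp only
    rw [hHs.1, hHs.2, shf_cancel' q H₀, raise_recompose hAq hcol hB' hq]

lemma count_rec (q : ℤ) (hq : 1 ≤ q) (n : ℕ) :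
    (FS q n).card = (FS 0 n).card
      + ∑ k ∈ Finset.range (n + 1), (FS 0 k).card * (FS (q - 1) (n - k)).card := by
  classical
  rw [← Finset.card_filter_add_card_filter_not (s := FS q n)
    (p := fun A => Bs q A = ∅)]
  congr 1
  · exact card_P0 q hq n
  · rw [Finset.card_eq_sum_card_fiberwise (f := fun A => (Hs q A).card)
      (t := Finset.range (n + 1)) ?_]
    · refine Finset.sum_congr rfl (fun k hk => ?_)
      exact card_P1 q hq n k (by simpa using Nat.lt_succ_iff.mp (Finset.mem_range.mp hk))
    · intro A hA
      obtain ⟨hFS, -⟩ := Finset.mem_filter.mp hA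
      obtain ⟨-, hcn⟩ := mem_FS.mp hFS
      rw [Finset.mem_coe, Finset.mem_range, Nat.lt_succ_iff, ← hcn]
      exact Finset.card_le_card (Finset.filter_subset _ _)

end Counting

lemma triCount_eq (s : ℤ) (n : ℕ) : triCount (Set.Ici 0) {s} n = (FS s n).card :=
  Set.ncard_eq_toFinset_card _ (anim_finite s n)

lemma gf_rec (q : ℤ) (hq : 1 ≤ q) :
    triGF (Set.Ici 0) {q} = triGF (Set.Ici 0) {0}
      + triGF (Set.Ici 0) {0} * triGF (Set.Ici 0) {q - 1} := by
  ext n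
  simp only [triGF, PowerSeries.coeff_mk, map_add, PowerSeries.coeff_mul,
    Finset.Nat.sum_antidiagonal_eq_sum_range_succ_mk]
  simp only [triCount_eq]
  exact_mod_cast count_rec q hq n

end Stmt13

theorem stmt13 (q : ℕ) :
    (1 - triGF (Set.Ici 0) {0}) * triGF (Set.Ici 0) {(q : ℤ)}
      = (1 - triGF (Set.Ici 0) {0} ^ (q + 1)) * triGF (Set.Ici 0) {0} := by
  induction q with
  | zero =>
    simp only [Nat.cast_zero, zero_add, pow_one]
  | succ q ih =>
    have key := Stmt13.gf_rec ((q + 1 : ℕ) : ℤ) (by exact_mod_cast Nat.succ_le_succ (Nat.zero_le q))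
    have hc : ((q + 1 : ℕ) : ℤ) - 1 = (q : ℤ) := by push_cast; ring
    rw [hc] at key
    linear_combination (1 - triGF (Set.Ici 0) {0}) * key + triGF (Set.Ici 0) {0} * ih
end

section
/- For every integer k ≥ 1, the generating function ℋ_{C_k} of triangular-lattice directed animals over ℤ with compact source C_k = {0, 2, 4, …, 2k−2} satisfies ℋ_{C_k}(t) = 𝒜(t) · 𝒟(t)^{k−1} in ℤ[[t]]. -/
abbrev Cell := ℤ × ℕ

namespace Anim
open Finset

def w (x y : Cell) : ℕ := if x.1 = y.1 then 2 else 1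

lemma w_pos (x y : Cell) : 1 ≤ w x y := by unfold w; split <;> omega

lemma w_eq_two {x y : Cell} (h : x.1 = y.1) : w x y = 2 := if_pos h

lemma w_eq_one {x y : Cell} (h : x.1 ≠ y.1) : w x y = 1 := if_neg h

def Step (A : Finset Cell) (y x : Cell) : Prop :=
  y ∈ A ∧ x ∈ A ∧ (x.1 - y.1).natAbs ≤ 1 ∧ y.2 < x.2

def Desc (A : Finset Cell) : Cell → Cell → Prop := Relation.ReflTransGen (Step A)

noncomputable def placeL (B V : Finset Cell) : Cell → ℕ
  | x =>
    max
      (((B.filter (fun y => (x.1 - y.1).natAbs ≤ 1 ∧ y.2 < x.2)).attach).sup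
        (fun y => placeL B V y.1 + w x y.1))
      ((V.filter (fun z => (x.1 - z.1).natAbs ≤ 1)).sup (fun z => z.2 + w x z))
  termination_by x => x.2
  decreasing_by
    have := y.2
    simp only [Finset.mem_filter] at this
    exact this.2.2

lemma placeL_def (B V : Finset Cell) (x : Cell) :
    placeL B V x =
      max
        ((B.filter (fun y => (x.1 - y.1).natAbs ≤ 1 ∧ y.2 < x.2)).sup
          (fun y => placeL B V y + w x y))
        ((V.filter (fun z => (x.1 - z.1).natAbs ≤ 1)).sup (fun z => z.2 + w x z)) := by
  rw [placeL]
  have h := Finset.sup_attach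
    (Finset.filter (fun y => (x.1 - y.1).natAbs ≤ 1 ∧ y.2 < x.2) B)
    (fun y => placeL B V y + w x y)
  rw [h]

lemma le_placeL_of_memB {B V : Finset Cell} {x y : Cell} (hy : y ∈ B)
    (hc : (x.1 - y.1).natAbs ≤ 1) (hl : y.2 < x.2) :
    placeL B V y + w x y ≤ placeL B V x := by
  rw [placeL_def B V x]
  refine le_max_of_le_left ?_
  have hmem : y ∈ B.filter (fun y => (x.1 - y.1).natAbs ≤ 1 ∧ y.2 < x.2) := by
    simp only [Finset.mem_filter]; exact ⟨hy, hc, hl⟩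
  exact Finset.le_sup (f := fun y => placeL B V y + w x y) hmem

lemma le_placeL_of_memV {B V : Finset Cell} {x z : Cell} (hz : z ∈ V)
    (hc : (x.1 - z.1).natAbs ≤ 1) :
    z.2 + w x z ≤ placeL B V x := by
  rw [placeL_def B V x]
  refine le_max_of_le_right ?_
  have hmem : z ∈ V.filter (fun z => (x.1 - z.1).natAbs ≤ 1) := by
    simp only [Finset.mem_filter]; exact ⟨hz, hc⟩
  exact Finset.le_sup (f := fun z => z.2 + w x z) hmem

lemma placeL_lt_of_memB {B V : Finset Cell} {x y : Cell} (hy : y ∈ B)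
    (hc : (x.1 - y.1).natAbs ≤ 1) (hl : y.2 < x.2) :
    placeL B V y < placeL B V x :=
  lt_of_lt_of_le (by have := w_pos x y; omega) (le_placeL_of_memB hy hc hl)

lemma placeL_gt_of_memV {B V : Finset Cell} {x z : Cell} (hz : z ∈ V)
    (hc : (x.1 - z.1).natAbs ≤ 1) :
    z.2 < placeL B V x :=
  lt_of_lt_of_le (by have := w_pos x z; omega) (le_placeL_of_memV hz hc)

/-- attainment of the sup -/
lemma placeL_attained {B V : Finset Cell} {x : Cell} (h : 1 ≤ placeL B V x) :
    (∃ y ∈ B, (x.1 - y.1).natAbs ≤ 1 ∧ y.2 < x.2 ∧ placeL B V y + w x y = placeL B V x) ∨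
    (∃ z ∈ V, (x.1 - z.1).natAbs ≤ 1 ∧ z.2 + w x z = placeL B V x) := by
  rw [placeL_def B V x] at h ⊢
  rcases max_cases ((B.filter (fun y => (x.1 - y.1).natAbs ≤ 1 ∧ y.2 < x.2)).sup
          (fun y => placeL B V y + w x y))
      ((V.filter (fun z => (x.1 - z.1).natAbs ≤ 1)).sup (fun z => z.2 + w x z)) with
    hm | hm <;> rw [hm.1] at h ⊢
  · left
    have hne : (B.filter (fun y => (x.1 - y.1).natAbs ≤ 1 ∧ y.2 < x.2)).Nonempty := by
      by_contra hc
      rw [Finset.not_nonempty_iff_eq_empty] at hc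
      rw [hc] at h; simp at h
    obtain ⟨y, hy, hval⟩ := Finset.exists_mem_eq_sup _ hne (fun y => placeL B V y + w x y)
    simp only [Finset.mem_filter] at hy
    exact ⟨y, hy.1, hy.2.1, hy.2.2, hval.symm⟩
  · right
    have hne : (V.filter (fun z => (x.1 - z.1).natAbs ≤ 1)).Nonempty := by
      by_contra hc
      rw [Finset.not_nonempty_iff_eq_empty] at hc
      rw [hc] at h; simp at h
    obtain ⟨z, hz, hval⟩ := Finset.exists_mem_eq_sup _ hne (fun z => z.2 + w x z)
    simp only [Finset.mem_filter] at hz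
    exact ⟨z, hz.1, hz.2, hval.symm⟩

/-- a support cell, in `(w)`-form -/
lemma exists_supp {Q S A} (hA : IsTriAnimal Q S A) {x : Cell} (hx : x ∈ A) (hl : 1 ≤ x.2) :
    ∃ s ∈ A, (x.1 - s.1).natAbs ≤ 1 ∧ s.2 < x.2 ∧ s.2 + w x s = x.2 := by
  rcases hA.2.2 x hx hl with h | h | h
  · refine ⟨_, h, by simp, by simp; omega, ?_⟩
    rw [w_eq_one (by simp; omega)]
    simp; omega
  · refine ⟨_, h, by simp, by simp; omega, ?_⟩
    rw [w_eq_one (by simp)]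
    show x.2 - 1 + 1 = x.2
    omega
  · refine ⟨_, h.2, by simp, by simp; omega, ?_⟩
    rw [w_eq_two (by simp)]
    simp; omega

/-- conversely, a cell with a `(w)`-support satisfies the animal condition -/
lemma supp_of_eq {A : Finset Cell} {x s : Cell} (hs : s ∈ A)
    (hc : (x.1 - s.1).natAbs ≤ 1) (he : s.2 + w x s = x.2) :
    (x.1 - 1, x.2 - 1) ∈ A ∨ (x.1 + 1, x.2 - 1) ∈ A ∨ (2 ≤ x.2 ∧ (x.1, x.2 - 2) ∈ A) := by
  by_cases hq : x.1 = s.1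
  · right; right
    simp only [w, if_pos hq] at he
    have : s = (x.1, x.2 - 2) := by
      obtain ⟨a, b⟩ := s; simp_all; omega
    rw [← this]; exact ⟨by omega, hs⟩
  · simp only [w, if_neg hq] at he
    have h1 : s.1 = x.1 - 1 ∨ s.1 = x.1 + 1 := by omega
    rcases h1 with h1 | h1
    · left
      have : s = (x.1 - 1, x.2 - 1) := by obtain ⟨a, b⟩ := s; simp_all; omega
      rwa [← this]
    · right; left
      have : s = (x.1 + 1, x.2 - 1) := by obtain ⟨a, b⟩ := s; simp_all; omega
      rwa [← this]

/-- parity: all cells of an animal with even sources satisfy `Even (q + ℓ)` -/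
lemma parity {Q S A} (hA : IsTriAnimal Q S A) (hS : ∀ q ∈ S, Even q) :
    ∀ x ∈ A, Even (x.1 + (x.2 : ℤ)) := by
  intro x
  induction x using (measure (fun x : Cell => x.2)).wf.induction with
  | _ x ih =>
  intro hx
  rcases Nat.eq_zero_or_pos x.2 with h0 | h1
  · have : x = (x.1, 0) := by obtain ⟨a,b⟩ := x; simp_all
    rw [this] at hx
    have := hS x.1 ((hA.2.1 x.1).1 hx)
    simpa [h0] using this
  · obtain ⟨s, hs, hc, hl, he⟩ := exists_supp hA hx h1
    have hps := ih s hl hs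
    by_cases hq : x.1 = s.1
    · simp only [w, if_pos hq] at he
      have : x.1 + (x.2:ℤ) = s.1 + (s.2:ℤ) + 2 := by rw [hq]; omega
      rw [this]
      exact (Even.add hps (by norm_num))
    · simp only [w, if_neg hq] at he
      have habs : x.1 - s.1 = 1 ∨ x.1 - s.1 = -1 := by omega
      rcases habs with h | h
      · have hh : x.1 + (x.2:ℤ) = s.1 + (s.2:ℤ) + 2 := by omega
        rw [hh]; exact Even.add hps (by norm_num)
      · have hh : x.1 + (x.2:ℤ) = s.1 + (s.2:ℤ) := by omega
        rw [hh]; exact hps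

/-- tightness: in an even animal the level of every cell is computed by the `w`-sup formula -/
lemma tight {Q S A} (hA : IsTriAnimal Q S A) (hS : ∀ q ∈ S, Even q) :
    ∀ x ∈ A,
      ((A.filter (fun y => (x.1 - y.1).natAbs ≤ 1 ∧ y.2 < x.2)).sup (fun y => y.2 + w x y))
        = x.2 := by
  intro x hx
  apply le_antisymm
  · apply Finset.sup_le
    intro y hy
    simp only [Finset.mem_filter] at hy
    obtain ⟨hyA, hc, hl⟩ := hy
    by_cases hq : x.1 = y.1
    · simp only [w, if_pos hq]
      have h1 := parity hA hS x hx
      have h2 := parity hA hS y hyA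
      rw [← hq] at h2
      have : (2:ℤ) ∣ ((x.2:ℤ) - (y.2:ℤ)) := by
        obtain ⟨a, ha⟩ := h1; obtain ⟨b, hb⟩ := h2
        exact ⟨a - b, by omega⟩
      omega
    · simp only [w, if_neg hq]; omega
  · rcases Nat.eq_zero_or_pos x.2 with h0 | h1
    · omega
    · obtain ⟨s, hs, hc, hl, he⟩ := exists_supp hA hx h1
      have hmem : s ∈ A.filter (fun y => (x.1 - y.1).natAbs ≤ 1 ∧ y.2 < x.2) := by
        simp only [Finset.mem_filter]; exact ⟨hs, hc, hl⟩
      have := Finset.le_sup (f := fun y => y.2 + w x y) hmem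
      rwa [he] at this

/-! ### descendant relation lemmas -/

lemma desc_cases {A : Finset Cell} {y x : Cell} (h : Desc A y x) :
    y = x ∨ (∃ c, Desc A y c ∧ Step A c x) := by
  rcases Relation.ReflTransGen.cases_tail h with h | h
  · left; exact h.symm
  · right; exact h

lemma desc_level {A : Finset Cell} {y x : Cell} (h : Desc A y x) :
    y = x ∨ (y.2 < x.2 ∧ y ∈ A ∧ x ∈ A) := by
  induction h with
  | refl => left; rfl
  | tail hbc hstep ih =>
    rcases ih with h | h
    · right; rw [h]; exact ⟨hstep.2.2.2, hstep.1, hstep.2.1⟩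
    · right; exact ⟨lt_trans h.1 hstep.2.2.2, h.2.1, hstep.2.1⟩

lemma desc_trans {A : Finset Cell} {z y x : Cell} (h1 : Desc A z y) (h2 : Desc A y x) :
    Desc A z x := Relation.ReflTransGen.trans h1 h2

lemma desc_single {A : Finset Cell} {y x : Cell} (h : Step A y x) : Desc A y x :=
  Relation.ReflTransGen.single h

/-! ### the extraction -/

noncomputable def Vpart (A : Finset Cell) (m : ℤ) : Finset Cell :=
  @Finset.filter _ (fun x => ∀ y, Desc A y x → m ≤ y.1) (Classical.decPred _) A

lemma mem_Vpart {A : Finset Cell} {m : ℤ} {x : Cell} :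
    x ∈ Vpart A m ↔ x ∈ A ∧ ∀ y, Desc A y x → m ≤ y.1 := by
  unfold Vpart
  exact @Finset.mem_filter _ _ (Classical.decPred _) _ _

lemma Vpart_pos {A : Finset Cell} {m : ℤ} {x : Cell} (h : x ∈ Vpart A m) : m ≤ x.1 :=
  (mem_Vpart.1 h).2 x Relation.ReflTransGen.refl

lemma Vpart_subset {A : Finset Cell} {m : ℤ} : Vpart A m ⊆ A := by
  intro x hx; exact (mem_Vpart.1 hx).1

lemma Vpart_downclosed {A : Finset Cell} {m : ℤ} {x y : Cell} (hx : x ∈ Vpart A m)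
    (hd : Desc A y x) (hy : y ∈ A) : y ∈ Vpart A m := by
  rw [mem_Vpart] at hx ⊢
  exact ⟨hy, fun z hz => hx.2 z (desc_trans hz hd)⟩

noncomputable def Bpart (A : Finset Cell) (m : ℤ) : Finset Cell :=
  (A \ Vpart A m).image (fun x => (x.1, placeL (A \ Vpart A m) ∅ x))

noncomputable def Dpart (A : Finset Cell) (m : ℤ) : Finset Cell :=
  (Vpart A m).image (fun x => (x.1 - m, x.2))

def Wset (D : Finset Cell) (m : ℤ) : Finset Cell := D.image (fun z => (z.1 + m, z.2))

noncomputable def glue (B D : Finset Cell) (m : ℤ) : Finset Cell :=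
  Wset D m ∪ (B.image (fun x => (x.1, placeL B (Wset D m) x)))

/-! ### sources -/

def Csrc (k : ℕ) : Finset ℤ := (Finset.range k).image (fun i : ℕ => 2*(i:ℤ))

lemma mem_Csrc {k : ℕ} {q : ℤ} : q ∈ Csrc k ↔ ∃ i : ℕ, i < k ∧ q = 2*(i:ℤ) := by
  simp [Csrc, Finset.mem_image, Finset.mem_range]
  tauto

lemma Csrc_even {k : ℕ} {q : ℤ} (h : q ∈ Csrc k) : Even q := by
  obtain ⟨i, _, rfl⟩ := mem_Csrc.1 h; exact ⟨i, by ring⟩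

lemma Csrc_le {k : ℕ} {q : ℤ} (h : q ∈ Csrc (k+1)) : q ≤ 2*(k:ℤ) := by
  obtain ⟨i, hi, rfl⟩ := mem_Csrc.1 h; omega

lemma Csrc_nonneg {k : ℕ} {q : ℤ} (h : q ∈ Csrc k) : 0 ≤ q := by
  obtain ⟨i, _, rfl⟩ := mem_Csrc.1 h; omega

lemma m_mem_Csrc {k : ℕ} : (2*(k:ℤ)) ∈ Csrc (k+1) := mem_Csrc.2 ⟨k, by omega, rfl⟩

lemma msub_mem_Csrc {k : ℕ} (hk : 1 ≤ k) : (2*(k:ℤ) - 2) ∈ Csrc (k+1) :=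
  mem_Csrc.2 ⟨k - 1, by omega, by have : ((k-1:ℕ):ℤ) = (k:ℤ)-1 := by omega
                                  rw [this]; ring⟩

lemma mem_Csrc_succ {k : ℕ} {q : ℤ} :
    q ∈ Csrc (k+1) ↔ q ∈ Csrc k ∨ q = 2*(k:ℤ) := by
  simp only [mem_Csrc]
  constructor
  · rintro ⟨i, hi, rfl⟩
    rcases Nat.lt_succ_iff_lt_or_eq.1 hi with h | h
    · exact Or.inl ⟨i, h, rfl⟩
    · right; rw [h]
  · rintro (⟨i, hi, rfl⟩ | h)
    · exact ⟨i, by omega, rfl⟩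
    · exact ⟨k, by omega, h⟩

/-! ### generic translation of animals -/

lemma translate_anim {a : ℤ} {S : Finset ℤ} {A : Finset Cell} (t : ℤ)
    (h : IsTriAnimal (Set.Ici a) S A) :
    IsTriAnimal (Set.Ici (a+t)) (S.image (· + t)) (A.image (fun x => (x.1 + t, x.2))) := by
  refine ⟨?_, ?_, ?_⟩
  · rintro x hx
    simp only [Finset.mem_image] at hx
    obtain ⟨y, hy, rfl⟩ := hx
    have := h.1 y hy
    simp only [Set.mem_Ici] at this ⊢
    omega
  · intro q
    simp only [Finset.mem_image, Prod.ext_iff]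
    constructor
    · rintro ⟨y, hy, h1, h2⟩
      have : y = (q - t, 0) := by obtain ⟨c,d⟩ := y; simp_all; omega
      rw [this] at hy
      exact ⟨q - t, (h.2.1 _).1 hy, by omega⟩
    · rintro ⟨r, hr, rfl⟩
      exact ⟨(r, 0), (h.2.1 r).2 hr, by simp, rfl⟩
  · rintro x hx hl
    simp only [Finset.mem_image] at hx
    obtain ⟨y, hy, rfl⟩ := hx
    simp only at hl
    rcases h.2.2 y hy hl with hs | hs | hs
    · left
      simp only [Finset.mem_image]
      exact ⟨(y.1 - 1, y.2 - 1), hs, by simp; ring⟩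
    · right; left
      simp only [Finset.mem_image]
      exact ⟨(y.1 + 1, y.2 - 1), hs, by simp; ring⟩
    · right; right
      simp only [Finset.mem_image]
      exact ⟨hs.1, ⟨(y.1, y.2 - 2), hs.2, by simp⟩⟩

/-! ### extraction lemmas -/

section Extract

variable {k : ℕ} {A : Finset Cell}

lemma A_parity (hA : IsTriAnimal Set.univ (Csrc (k+1)) A) :
    ∀ x ∈ A, Even (x.1 + (x.2:ℤ)) :=
  parity hA (fun _ hq => Csrc_even hq)

lemma Vm_mem (hA : IsTriAnimal Set.univ (Csrc (k+1)) A) :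
    ((2*(k:ℤ)), 0) ∈ Vpart A (2*(k:ℤ)) := by
  rw [mem_Vpart]
  refine ⟨(hA.2.1 _).2 m_mem_Csrc, ?_⟩
  intro y hd
  rcases desc_level hd with h | h
  · rw [h]
  · exact absurd h.1 (by simp)

lemma Vpart_src (hA : IsTriAnimal Set.univ (Csrc (k+1)) A) {q : ℤ} :
    (q, 0) ∈ Vpart A (2*(k:ℤ)) ↔ q = 2*(k:ℤ) := by
  constructor
  · intro h
    have h1 : (2*(k:ℤ)) ≤ q := Vpart_pos h
    have h2 : q ∈ Csrc (k+1) := (hA.2.1 q).1 (Vpart_subset h)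
    have := Csrc_le h2
    omega
  · rintro rfl
    exact Vm_mem hA

lemma Vpart_anim (hA : IsTriAnimal Set.univ (Csrc (k+1)) A) :
    IsTriAnimal (Set.Ici (2*(k:ℤ))) {2*(k:ℤ)} (Vpart A (2*(k:ℤ))) := by
  refine ⟨fun x hx => Vpart_pos hx, ?_, ?_⟩
  · intro q
    rw [Vpart_src hA, Finset.mem_singleton]
  · intro x hx hl
    obtain ⟨s, hs, hc, hlow, he⟩ := exists_supp hA (Vpart_subset hx) hl
    have hsV : s ∈ Vpart A (2*(k:ℤ)) :=
      Vpart_downclosed hx (desc_single ⟨hs, Vpart_subset hx, hc, hlow⟩) hs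
    exact supp_of_eq hsV hc he

lemma conc_ne_level' {x z : Cell} (p1 : Even (x.1 + (x.2:ℤ))) (p2 : Even (z.1 + (z.2:ℤ)))
    (hc : (x.1 - z.1).natAbs ≤ 1) (hne : x ≠ z) : x.2 ≠ z.2 := by
  intro heq
  have : (2:ℤ) ∣ (x.1 - z.1) := by
    obtain ⟨a, ha⟩ := p1; obtain ⟨b, hb⟩ := p2
    exact ⟨a - b, by omega⟩
  have hx1 : x.1 = z.1 := by omega
  exact hne (Prod.ext hx1 heq)

lemma conc_ne_level (hA : IsTriAnimal Set.univ (Csrc (k+1)) A) {x z : Cell}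
    (hx : x ∈ A) (hz : z ∈ A) (hc : (x.1 - z.1).natAbs ≤ 1) (hne : x ≠ z) :
    x.2 ≠ z.2 :=
  conc_ne_level' (A_parity hA x hx) (A_parity hA z hz) hc hne

/-- strict monotonicity is an equivalence, for cells of an even animal -/
lemma placeL_lt_iff {B V : Finset Cell} {x y : Cell}
    (p1 : Even (x.1 + (x.2:ℤ))) (p2 : Even (y.1 + (y.2:ℤ)))
    (hx : x ∈ B) (hy : y ∈ B) (hc : (x.1 - y.1).natAbs ≤ 1) :
    placeL B V y < placeL B V x ↔ y.2 < x.2 := by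
  constructor
  · intro h
    rcases lt_trichotomy y.2 x.2 with h1 | h1 | h1
    · exact h1
    · exfalso
      have : x = y := by
        by_contra hne
        exact conc_ne_level' p1 p2 hc hne h1.symm
      rw [this] at h; omega
    · have := placeL_lt_of_memB (V := V) hx (by omega) h1
      omega
  · intro h
    exact placeL_lt_of_memB hy hc h

/-- the bound on concurrent lower cells, using parity -/
lemma w_le {x y : Cell} (p1 : Even (x.1 + (x.2:ℤ))) (p2 : Even (y.1 + (y.2:ℤ)))
    (hc : (x.1 - y.1).natAbs ≤ 1) (hl : y.2 < x.2) : y.2 + w x y ≤ x.2 := by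
  by_cases hq : x.1 = y.1
  · rw [w_eq_two hq]
    have : (2:ℤ) ∣ ((x.2:ℤ) - (y.2:ℤ)) := by
      rw [hq] at p1
      obtain ⟨a, ha⟩ := p1; obtain ⟨b, hb⟩ := p2
      exact ⟨a - b, by omega⟩
    omega
  · rw [w_eq_one hq]; omega

lemma V_below_B0 (hA : IsTriAnimal Set.univ (Csrc (k+1)) A) {x z : Cell}
    (hx : x ∈ A \ Vpart A (2*(k:ℤ))) (hz : z ∈ Vpart A (2*(k:ℤ)))
    (hc : (x.1 - z.1).natAbs ≤ 1) : z.2 < x.2 := by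
  rw [Finset.mem_sdiff] at hx
  have hne : x ≠ z := by rintro rfl; exact hx.2 hz
  have hlev := conc_ne_level hA hx.1 (Vpart_subset hz) hc hne
  rcases lt_trichotomy z.2 x.2 with h | h | h
  · exact h
  · exact absurd h.symm hlev
  · exfalso
    refine hx.2 (Vpart_downclosed hz (desc_single ⟨hx.1, Vpart_subset hz, ?_, h⟩) hx.1)
    omega

lemma mem_B0 {m : ℤ} {x : Cell} :
    x ∈ A \ Vpart A m ↔ x ∈ A ∧ ∃ y, Desc A y x ∧ y.1 < m := by
  rw [Finset.mem_sdiff, mem_Vpart]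
  constructor
  · rintro ⟨hx, hv⟩
    refine ⟨hx, ?_⟩
    by_contra hc
    push_neg at hc
    exact hv ⟨hx, hc⟩
  · rintro ⟨hx, y, hd, hy⟩
    exact ⟨hx, fun hv => absurd (hv.2 y hd) (by omega)⟩

lemma B0_has_lower (hk : 1 ≤ k) (hA : IsTriAnimal Set.univ (Csrc (k+1)) A) {x : Cell}
    (hx : x ∈ A \ Vpart A (2*(k:ℤ))) (hl : 1 ≤ x.2) :
    ∃ y ∈ A \ Vpart A (2*(k:ℤ)), (x.1 - y.1).natAbs ≤ 1 ∧ y.2 < x.2 := by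
  obtain ⟨hxA, y, hd, hy⟩ := mem_B0.1 hx
  rcases desc_cases hd with heq | ⟨c, hdc, hstep⟩
  · rw [heq] at hy
    -- x itself is left of m
    obtain ⟨s, hs, hc, hlow, he⟩ := exists_supp hA hxA hl
    by_cases hsm : s.1 < 2*(k:ℤ)
    · exact ⟨s, mem_B0.2 ⟨hs, s, Relation.ReflTransGen.refl, hsm⟩, hc, hlow⟩
    · -- x.1 = 2k - 1 ; use the source 2k-2
      push_neg at hsm
      have hx1 : x.1 = 2*(k:ℤ) - 1 := by omega
      refine ⟨(2*(k:ℤ) - 2, 0), ?_, by rw [hx1]; simp, hl⟩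
      refine mem_B0.2 ⟨(hA.2.1 _).2 (msub_mem_Csrc hk), _, Relation.ReflTransGen.refl, by omega⟩
  · refine ⟨c, ?_, hstep.2.2.1, hstep.2.2.2⟩
    exact mem_B0.2 ⟨hstep.1, y, hdc, hy⟩

lemma placeL_level0 {B V : Finset Cell} {x : Cell}
    (hV : ∀ z ∈ V, ¬ ((x.1 - z.1).natAbs ≤ 1)) (hx2 : x.2 = 0) :
    placeL B V x = 0 := by
  rw [placeL_def]
  have h1 : B.filter (fun y => (x.1 - y.1).natAbs ≤ 1 ∧ y.2 < x.2) = ∅ := by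
    apply Finset.filter_false_of_mem
    rintro y _ ⟨_, h2⟩
    omega
  have h2 : V.filter (fun z => (x.1 - z.1).natAbs ≤ 1) = ∅ := by
    apply Finset.filter_false_of_mem
    intro z hz
    exact hV z hz
  rw [h1, h2]
  simp

lemma g_pos (hk : 1 ≤ k) (hA : IsTriAnimal Set.univ (Csrc (k+1)) A) {x : Cell}
    (hx : x ∈ A \ Vpart A (2*(k:ℤ))) (hl : 1 ≤ x.2) :
    1 ≤ placeL (A \ Vpart A (2*(k:ℤ))) ∅ x := by
  obtain ⟨y, hy, hc, hlow⟩ := B0_has_lower hk hA hx hl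
  have := le_placeL_of_memB (V := ∅) hy hc hlow
  have := w_pos x y
  omega

lemma Csrc_lt {k : ℕ} {q : ℤ} (h : q ∈ Csrc k) : q ≤ 2*(k:ℤ) - 2 := by
  obtain ⟨i, hi, rfl⟩ := mem_Csrc.1 h; omega

lemma g_zero_iff (hk : 1 ≤ k) (hA : IsTriAnimal Set.univ (Csrc (k+1)) A) {x : Cell}
    (hx : x ∈ A \ Vpart A (2*(k:ℤ))) :
    placeL (A \ Vpart A (2*(k:ℤ))) ∅ x = 0 ↔ x.2 = 0 := by
  constructor
  · intro h
    by_contra hc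
    have := g_pos hk hA hx (by omega)
    omega
  · intro h
    exact placeL_level0 (by simp) h

lemma g_injOn :
    Set.InjOn (fun x : Cell => (x.1, placeL (A \ Vpart A (2*(k:ℤ))) ∅ x))
      ↑(A \ Vpart A (2*(k:ℤ))) := by
  intro x hx y hy he
  simp only [Prod.ext_iff] at he
  rw [Finset.mem_coe] at hx hy
  rcases lt_trichotomy x.2 y.2 with h | h | h
  · have := placeL_lt_of_memB (V := (∅ : Finset Cell)) hx (by rw [he.1]; simp) h
    omega
  · exact Prod.ext he.1 h
  · have := placeL_lt_of_memB (V := (∅ : Finset Cell)) hy (by rw [he.1]; simp) h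
    omega

lemma Bpart_src (hk : 1 ≤ k) (hA : IsTriAnimal Set.univ (Csrc (k+1)) A) {q : ℤ} :
    (q, 0) ∈ Bpart A (2*(k:ℤ)) ↔ q ∈ Csrc k := by
  unfold Bpart
  simp only [Finset.mem_image, Prod.ext_iff]
  constructor
  · rintro ⟨x, hx, hq, hg⟩
    have hx2 : x.2 = 0 := (g_zero_iff hk hA hx).1 hg
    have hxe : x = (q, 0) := Prod.ext hq hx2
    subst hxe
    have hmem : q ∈ Csrc (k+1) := (hA.2.1 q).1 (Finset.mem_sdiff.1 hx).1
    rcases mem_Csrc_succ.1 hmem with h | h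
    · exact h
    · exfalso
      subst h
      exact (Finset.mem_sdiff.1 hx).2 (Vm_mem hA)
  · intro hq
    have hqA : (q, 0) ∈ A := (hA.2.1 q).2 (mem_Csrc_succ.2 (Or.inl hq))
    have hq2 : q ≤ 2*(k:ℤ) - 2 := Csrc_lt hq
    have hB0 : (q, 0) ∈ A \ Vpart A (2*(k:ℤ)) := by
      rw [Finset.mem_sdiff]
      refine ⟨hqA, fun hv => ?_⟩
      have := Vpart_pos hv
      simp only at this
      omega
    exact ⟨(q, 0), hB0, rfl, (g_zero_iff hk hA hB0).2 rfl⟩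

lemma Bpart_anim (hk : 1 ≤ k) (hA : IsTriAnimal Set.univ (Csrc (k+1)) A) :
    IsTriAnimal Set.univ (Csrc k) (Bpart A (2*(k:ℤ))) := by
  refine ⟨fun x _ => Set.mem_univ _, fun q => Bpart_src hk hA, ?_⟩
  rintro x' hx' hl
  obtain ⟨x, hx, rfl⟩ := Finset.mem_image.1 hx'
  rcases placeL_attained hl with ⟨y, hy, hc, hlow, he⟩ | ⟨z, hz, _⟩
  · refine supp_of_eq (A := Bpart A (2*(k:ℤ)))
      (s := (y.1, placeL (A \ Vpart A (2*(k:ℤ))) ∅ y)) ?_ hc ?_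
    · exact Finset.mem_image_of_mem _ hy
    · exact he
  · exact absurd hz (Finset.notMem_empty z)

lemma Bpart_card : (Bpart A (2*(k:ℤ))).card = (A \ Vpart A (2*(k:ℤ))).card :=
  Finset.card_image_of_injOn g_injOn

lemma Dpart_card {m : ℤ} : (Dpart A m).card = (Vpart A m).card := by
  apply Finset.card_image_of_injective
  intro x y he
  simp only [Prod.ext_iff] at he
  exact Prod.ext (by omega) he.2

lemma extract_card : (Bpart A (2*(k:ℤ))).card + (Dpart A (2*(k:ℤ))).card = A.card := by
  rw [Bpart_card, Dpart_card]
  exact Finset.card_sdiff_add_card_eq_card Vpart_subset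

lemma Dpart_anim (hA : IsTriAnimal Set.univ (Csrc (k+1)) A) :
    IsTriAnimal (Set.Ici 0) {0} (Dpart A (2*(k:ℤ))) := by
  have h := translate_anim (-(2*(k:ℤ))) (Vpart_anim hA)
  have him : (Vpart A (2*(k:ℤ))).image (fun x => (x.1 + -(2*(k:ℤ)), x.2))
      = Dpart A (2*(k:ℤ)) := by
    unfold Dpart
    apply Finset.image_congr
    intro x _
    simp [sub_eq_add_neg]
  rw [him] at h
  have h1 : ({2*(k:ℤ)} : Finset ℤ).image (· + -(2*(k:ℤ))) = {0} := by simp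
  have h2 : (2*(k:ℤ)) + -(2*(k:ℤ)) = 0 := by ring
  rwa [h1, h2] at h

end Extract

/-- every cell of an animal is connected down to a source cell -/
lemma chain_to_src {Q S B} (hB : IsTriAnimal Q S B) :
    ∀ x ∈ B, ∃ s ∈ B, s.2 = 0 ∧ Desc B s x := by
  intro x
  induction x using (measure (fun x : Cell => x.2)).wf.induction with
  | _ x ih =>
  intro hx
  rcases Nat.eq_zero_or_pos x.2 with h0 | h1
  · exact ⟨x, hx, h0, Relation.ReflTransGen.refl⟩
  · obtain ⟨s, hs, hc, hlow, _⟩ := exists_supp hB hx h1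
    obtain ⟨s0, hs0, hs00, hd⟩ := ih s hlow hs
    exact ⟨s0, hs0, hs00, desc_trans hd (desc_single ⟨hs, hx, hc, hlow⟩)⟩

section Glue

variable {k : ℕ} {B D : Finset Cell}

lemma W_anim (hD : IsTriAnimal (Set.Ici 0) {0} D) :
    IsTriAnimal (Set.Ici (2*(k:ℤ))) {2*(k:ℤ)} (Wset D (2*(k:ℤ))) := by
  have h := translate_anim (2*(k:ℤ)) hD
  have h1 : ({0} : Finset ℤ).image (· + 2*(k:ℤ)) = {2*(k:ℤ)} := by simp
  have h2 : (0:ℤ) + 2*(k:ℤ) = 2*(k:ℤ) := by ring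
  rw [h1, h2] at h
  exact h

lemma W_pos (hD : IsTriAnimal (Set.Ici 0) {0} D) {z : Cell}
    (hz : z ∈ Wset D (2*(k:ℤ))) : 2*(k:ℤ) ≤ z.1 := (W_anim hD).1 z hz

lemma B_parity (hB : IsTriAnimal Set.univ (Csrc k) B) :
    ∀ x ∈ B, Even (x.1 + (x.2:ℤ)) := parity hB (fun _ hq => Csrc_even hq)

lemma W_parity (hD : IsTriAnimal (Set.Ici 0) {0} D) :
    ∀ z ∈ Wset D (2*(k:ℤ)), Even (z.1 + (z.2:ℤ)) :=
  parity (W_anim hD) (by intro q hq; rw [Finset.mem_singleton] at hq; exact ⟨k, by omega⟩)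

lemma src_noconc_W (hB : IsTriAnimal Set.univ (Csrc k) B)
    (hD : IsTriAnimal (Set.Ici 0) {0} D) {x : Cell} (hx : x ∈ B) (hx2 : x.2 = 0) :
    ∀ z ∈ Wset D (2*(k:ℤ)), ¬ ((x.1 - z.1).natAbs ≤ 1) := by
  intro z hz
  have h1 : x.1 ∈ Csrc k := by
    have : x = (x.1, 0) := Prod.ext rfl hx2
    rw [this] at hx
    exact (hB.2.1 x.1).1 hx
  have h2 := Csrc_lt h1
  have h3 := W_pos hD hz
  omega

lemma G_zero_iff (hB : IsTriAnimal Set.univ (Csrc k) B)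
    (hD : IsTriAnimal (Set.Ici 0) {0} D) {x : Cell} (hx : x ∈ B) :
    placeL B (Wset D (2*(k:ℤ))) x = 0 ↔ x.2 = 0 := by
  constructor
  · intro h
    by_contra hc
    obtain ⟨s, hs, hcc, hlow, _⟩ := exists_supp hB hx (by omega)
    have := le_placeL_of_memB (V := Wset D (2*(k:ℤ))) hs hcc hlow
    have := w_pos x s
    omega
  · intro h
    exact placeL_level0 (src_noconc_W hB hD hx h) h

lemma G_injOn (hB : IsTriAnimal Set.univ (Csrc k) B) {V : Finset Cell} :
    Set.InjOn (fun x : Cell => (x.1, placeL B V x)) ↑B := by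
  intro x hx y hy he
  simp only [Prod.ext_iff] at he
  rw [Finset.mem_coe] at hx hy
  rcases lt_trichotomy x.2 y.2 with h | h | h
  · have := placeL_lt_of_memB (V := V) hx (by rw [he.1]; simp) h
    omega
  · exact Prod.ext he.1 h
  · have := placeL_lt_of_memB (V := V) hy (by rw [he.1]; simp) h
    omega

lemma W_disj_img (hB : IsTriAnimal Set.univ (Csrc k) B)
    (hD : IsTriAnimal (Set.Ici 0) {0} D) :
    Disjoint (Wset D (2*(k:ℤ)))
      (B.image (fun x => (x.1, placeL B (Wset D (2*(k:ℤ))) x))) := by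
  rw [Finset.disjoint_right]
  intro c hc hcW
  obtain ⟨x, hx, rfl⟩ := Finset.mem_image.1 hc
  have := placeL_gt_of_memV (B := B) (x := x)
    (z := (x.1, placeL B (Wset D (2*(k:ℤ))) x)) hcW (by simp)
  simp only at this
  omega

lemma glue_card (hB : IsTriAnimal Set.univ (Csrc k) B)
    (hD : IsTriAnimal (Set.Ici 0) {0} D) :
    (glue B D (2*(k:ℤ))).card = B.card + D.card := by
  unfold glue
  rw [Finset.card_union_of_disjoint (W_disj_img hB hD)]
  rw [Finset.card_image_of_injOn (G_injOn hB)]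
  rw [add_comm]
  congr 1
  unfold Wset
  apply Finset.card_image_of_injective
  intro x y he
  simp only [Prod.ext_iff] at he
  exact Prod.ext (by omega) he.2

lemma glue_anim (hk : 1 ≤ k) (hB : IsTriAnimal Set.univ (Csrc k) B)
    (hD : IsTriAnimal (Set.Ici 0) {0} D) :
    IsTriAnimal Set.univ (Csrc (k+1)) (glue B D (2*(k:ℤ))) := by
  refine ⟨fun x _ => Set.mem_univ _, ?_, ?_⟩
  · intro q
    unfold glue
    rw [Finset.mem_union, mem_Csrc_succ]
    constructor
    · rintro (h | h)
      · right
        have := ((W_anim hD).2.1 q).1 h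
        rwa [Finset.mem_singleton] at this
      · left
        obtain ⟨x, hx, he⟩ := Finset.mem_image.1 h
        simp only [Prod.ext_iff] at he
        have hx2 : x.2 = 0 := (G_zero_iff hB hD hx).1 he.2
        have : x = (q, 0) := Prod.ext he.1 hx2
        rw [this] at hx
        exact (hB.2.1 q).1 hx
    · rintro (h | h)
      · right
        refine Finset.mem_image.2 ⟨(q, 0), (hB.2.1 q).2 h, ?_⟩
        have : ((q:ℤ), (0:ℕ)).2 = 0 := rfl
        rw [Prod.ext_iff]
        exact ⟨rfl, (G_zero_iff hB hD ((hB.2.1 q).2 h)).2 rfl⟩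
      · left
        subst h
        exact ((W_anim hD).2.1 _).2 (Finset.mem_singleton_self _)
  · rintro c hc hl
    unfold glue at hc ⊢
    rcases Finset.mem_union.1 hc with h | h
    · rcases (W_anim hD).2.2 c h hl with hs | hs | hs
      · exact Or.inl (Finset.mem_union_left _ hs)
      · exact Or.inr (Or.inl (Finset.mem_union_left _ hs))
      · exact Or.inr (Or.inr ⟨hs.1, Finset.mem_union_left _ hs.2⟩)
    · obtain ⟨x, hx, rfl⟩ := Finset.mem_image.1 h
      rcases placeL_attained hl with ⟨y, hy, hcc, hlow, he⟩ | ⟨z, hz, hcc, he⟩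
      · exact supp_of_eq (s := (y.1, placeL B (Wset D (2*(k:ℤ))) y))
          (Finset.mem_union_right _ (Finset.mem_image_of_mem _ hy)) hcc he
      · exact supp_of_eq (s := z) (Finset.mem_union_left _ hz) hcc he

lemma step_into_W (hD : IsTriAnimal (Set.Ici 0) {0} D) {y z : Cell}
    (hs : Step (glue B D (2*(k:ℤ))) y z) (hz : z ∈ Wset D (2*(k:ℤ))) :
    y ∈ Wset D (2*(k:ℤ)) := by
  obtain ⟨hy, _, hc, hl⟩ := hs
  unfold glue at hy
  rcases Finset.mem_union.1 hy with h | h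
  · exact h
  · exfalso
    obtain ⟨x, hx, rfl⟩ := Finset.mem_image.1 h
    have := placeL_gt_of_memV (B := B) (x := x) (z := z) hz (by
      have : (z.1 - (x.1, placeL B (Wset D (2*(k:ℤ))) x).1).natAbs ≤ 1 := hc
      simp only at this
      omega)
    simp only at hl
    omega

lemma desc_into_W (hD : IsTriAnimal (Set.Ici 0) {0} D) {y z : Cell}
    (hd : Desc (glue B D (2*(k:ℤ))) y z) (hz : z ∈ Wset D (2*(k:ℤ))) :
    y ∈ Wset D (2*(k:ℤ)) := by
  induction hd using Relation.ReflTransGen.head_induction_on with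
  | refl => exact hz
  | head hstep _ ih => exact step_into_W hD hstep ih

lemma img_chain {s x : Cell} (hd : Desc B s x) :
    Desc (glue B D (2*(k:ℤ))) (s.1, placeL B (Wset D (2*(k:ℤ))) s)
      (x.1, placeL B (Wset D (2*(k:ℤ))) x) := by
  induction hd with
  | refl => exact Relation.ReflTransGen.refl
  | tail hbc hstep ih =>
    refine Relation.ReflTransGen.tail ih ?_
    obtain ⟨hb, hcmem, hconc, hlt⟩ := hstep
    refine ⟨?_, ?_, ?_, ?_⟩
    · exact Finset.mem_union_right _ (Finset.mem_image_of_mem _ hb)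
    · exact Finset.mem_union_right _ (Finset.mem_image_of_mem _ hcmem)
    · exact hconc
    · exact placeL_lt_of_memB hb hconc hlt

lemma Vpart_glue (hB : IsTriAnimal Set.univ (Csrc k) B)
    (hD : IsTriAnimal (Set.Ici 0) {0} D) :
    Vpart (glue B D (2*(k:ℤ))) (2*(k:ℤ)) = Wset D (2*(k:ℤ)) := by
  ext c
  rw [mem_Vpart]
  constructor
  · rintro ⟨hc, hall⟩
    rcases Finset.mem_union.1 hc with h | h
    · exact h
    · exfalso
      obtain ⟨x, hx, rfl⟩ := Finset.mem_image.1 h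
      obtain ⟨s, hsB, hs0, hd⟩ := chain_to_src hB x hx
      have hchain := img_chain (D := D) (k := k) hd
      have h1 := hall _ hchain
      have hsrc : s.1 ∈ Csrc k := by
        have : s = (s.1, 0) := Prod.ext rfl hs0
        rw [this] at hsB
        exact (hB.2.1 s.1).1 hsB
      have := Csrc_lt hsrc
      simp only at h1
      omega
  · intro hc
    refine ⟨Finset.mem_union_left _ hc, ?_⟩
    intro y hd
    exact W_pos hD (desc_into_W hD hd hc)

lemma glue_sdiff (hB : IsTriAnimal Set.univ (Csrc k) B)
    (hD : IsTriAnimal (Set.Ici 0) {0} D) :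
    glue B D (2*(k:ℤ)) \ Wset D (2*(k:ℤ))
      = B.image (fun x => (x.1, placeL B (Wset D (2*(k:ℤ))) x)) := by
  have hdisj := Finset.disjoint_right.1 (W_disj_img hB hD)
  ext c
  simp only [Finset.mem_sdiff, glue, Finset.mem_union]
  constructor
  · rintro ⟨h | h, hn⟩
    · exact absurd h hn
    · exact h
  · intro h
    exact ⟨Or.inr h, fun hw => hdisj h hw⟩

lemma redrop (hB : IsTriAnimal Set.univ (Csrc k) B)
    (hD : IsTriAnimal (Set.Ici 0) {0} D) :
    ∀ x ∈ B,
      placeL (B.image (fun x => (x.1, placeL B (Wset D (2*(k:ℤ))) x))) ∅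
        (x.1, placeL B (Wset D (2*(k:ℤ))) x) = x.2 := by
  intro x
  induction x using (measure (fun x : Cell => x.2)).wf.induction with
  | _ x ih =>
  intro hx
  apply le_antisymm
  · rw [placeL_def]
    apply max_le
    · apply Finset.sup_le
      intro c hc
      rw [Finset.mem_filter] at hc
      obtain ⟨hcI, hconc, hclt⟩ := hc
      obtain ⟨y, hy, rfl⟩ := Finset.mem_image.1 hcI
      have hcxy : (x.1 - y.1).natAbs ≤ 1 := hconc
      have hyx : y.2 < x.2 :=
        (placeL_lt_iff (B_parity hB x hx) (B_parity hB y hy) hx hy hcxy).1 hclt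
      rw [ih y hyx hy]
      exact w_le (B_parity hB x hx) (B_parity hB y hy) hcxy hyx
    · simp
  · rcases Nat.eq_zero_or_pos x.2 with h0 | h1
    · omega
    · obtain ⟨s, hs, hc, hlow, he⟩ := exists_supp hB hx h1
      have hGs : placeL B (Wset D (2*(k:ℤ))) s < placeL B (Wset D (2*(k:ℤ))) x :=
        placeL_lt_of_memB hs hc hlow
      have hmem : (s.1, placeL B (Wset D (2*(k:ℤ))) s)
          ∈ B.image (fun x => (x.1, placeL B (Wset D (2*(k:ℤ))) x)) :=
        Finset.mem_image_of_mem _ hs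
      have h2 := le_placeL_of_memB (V := (∅ : Finset Cell))
        (x := (x.1, placeL B (Wset D (2*(k:ℤ))) x)) hmem hc hGs
      rw [ih s hlow hs] at h2
      have h3 : s.2 + w x s ≤ placeL (B.image (fun x => (x.1, placeL B (Wset D (2*(k:ℤ))) x))) ∅
          (x.1, placeL B (Wset D (2*(k:ℤ))) x) := h2
      omega

lemma Bpart_glue (hB : IsTriAnimal Set.univ (Csrc k) B)
    (hD : IsTriAnimal (Set.Ici 0) {0} D) :
    Bpart (glue B D (2*(k:ℤ))) (2*(k:ℤ)) = B := by
  unfold Bpart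
  rw [Vpart_glue hB hD, glue_sdiff hB hD]
  rw [Finset.image_image]
  have heq : Set.EqOn
      ((fun c : Cell => (c.1, placeL (B.image (fun x => (x.1, placeL B (Wset D (2*(k:ℤ))) x))) ∅ c))
        ∘ (fun x : Cell => (x.1, placeL B (Wset D (2*(k:ℤ))) x)))
      id ↑B := by
    intro x hx
    rw [Finset.mem_coe] at hx
    exact Prod.ext rfl (redrop hB hD x hx)
  rw [Finset.image_congr heq, Finset.image_id]

lemma Dpart_glue (hB : IsTriAnimal Set.univ (Csrc k) B)
    (hD : IsTriAnimal (Set.Ici 0) {0} D) :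
    Dpart (glue B D (2*(k:ℤ))) (2*(k:ℤ)) = D := by
  unfold Dpart
  rw [Vpart_glue hB hD]
  unfold Wset
  rw [Finset.image_image]
  have heq : Set.EqOn
      ((fun x : Cell => (x.1 - 2*(k:ℤ), x.2)) ∘ (fun z : Cell => (z.1 + 2*(k:ℤ), z.2)))
      id ↑D := by
    intro z _
    exact Prod.ext (by simp) rfl
  rw [Finset.image_congr heq, Finset.image_id]

end Glue

section Extract2

variable {k : ℕ} {A : Finset Cell}

lemma Wset_Dpart {m : ℤ} : Wset (Dpart A m) m = Vpart A m := by
  unfold Wset Dpart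
  rw [Finset.image_image]
  have heq : Set.EqOn
      ((fun z : Cell => (z.1 + m, z.2)) ∘ (fun x : Cell => (x.1 - m, x.2)))
      id ↑(Vpart A m) := by
    intro z _
    exact Prod.ext (by simp) rfl
  rw [Finset.image_congr heq, Finset.image_id]

lemma replace_level (hk : 1 ≤ k) (hA : IsTriAnimal Set.univ (Csrc (k+1)) A) :
    ∀ x ∈ A \ Vpart A (2*(k:ℤ)),
      placeL (Bpart A (2*(k:ℤ))) (Vpart A (2*(k:ℤ)))
        (x.1, placeL (A \ Vpart A (2*(k:ℤ))) ∅ x) = x.2 := by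
  intro x
  induction x using (measure (fun x : Cell => x.2)).wf.induction with
  | _ x ih =>
  intro hx
  have hxA : x ∈ A := (Finset.mem_sdiff.1 hx).1
  apply le_antisymm
  · rw [placeL_def]
    apply max_le
    · apply Finset.sup_le
      intro c hc
      rw [Finset.mem_filter] at hc
      obtain ⟨hcI, hconc, hclt⟩ := hc
      obtain ⟨y, hy, rfl⟩ := Finset.mem_image.1 hcI
      have hyA : y ∈ A := (Finset.mem_sdiff.1 hy).1
      have hcxy : (x.1 - y.1).natAbs ≤ 1 := hconc
      have hyx : y.2 < x.2 :=
        (placeL_lt_iff (V := (∅ : Finset Cell)) (A_parity hA x hxA) (A_parity hA y hyA)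
          hx hy hcxy).1 hclt
      rw [ih y hyx hy]
      exact w_le (A_parity hA x hxA) (A_parity hA y hyA) hcxy hyx
    · apply Finset.sup_le
      intro z hz
      rw [Finset.mem_filter] at hz
      obtain ⟨hzV, hconc⟩ := hz
      have hcxz : (x.1 - z.1).natAbs ≤ 1 := hconc
      have hzx : z.2 < x.2 := V_below_B0 hA hx hzV hcxz
      have : z.2 + w x z ≤ x.2 :=
        w_le (A_parity hA x hxA) (A_parity hA z (Vpart_subset hzV)) hcxz hzx
      exact this
  · rcases Nat.eq_zero_or_pos x.2 with h0 | h1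
    · omega
    · obtain ⟨s, hs, hc, hlow, he⟩ := exists_supp hA hxA h1
      by_cases hsV : s ∈ Vpart A (2*(k:ℤ))
      · have h2 := le_placeL_of_memV (B := Bpart A (2*(k:ℤ)))
          (x := (x.1, placeL (A \ Vpart A (2*(k:ℤ))) ∅ x)) hsV hc
        have h3 : s.2 + w x s ≤ placeL (Bpart A (2*(k:ℤ))) (Vpart A (2*(k:ℤ)))
            (x.1, placeL (A \ Vpart A (2*(k:ℤ))) ∅ x) := h2
        omega
      · have hsB0 : s ∈ A \ Vpart A (2*(k:ℤ)) := Finset.mem_sdiff.2 ⟨hs, hsV⟩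
        have hGs : placeL (A \ Vpart A (2*(k:ℤ))) ∅ s < placeL (A \ Vpart A (2*(k:ℤ))) ∅ x :=
          placeL_lt_of_memB hsB0 hc hlow
        have hmem : (s.1, placeL (A \ Vpart A (2*(k:ℤ))) ∅ s) ∈ Bpart A (2*(k:ℤ)) :=
          Finset.mem_image_of_mem _ hsB0
        have h2 := le_placeL_of_memB (V := Vpart A (2*(k:ℤ)))
          (x := (x.1, placeL (A \ Vpart A (2*(k:ℤ))) ∅ x)) hmem hc hGs
        rw [ih s hlow hsB0] at h2
        have h3 : s.2 + w x s ≤ placeL (Bpart A (2*(k:ℤ))) (Vpart A (2*(k:ℤ)))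
            (x.1, placeL (A \ Vpart A (2*(k:ℤ))) ∅ x) := h2
        omega

lemma glue_extract (hk : 1 ≤ k) (hA : IsTriAnimal Set.univ (Csrc (k+1)) A) :
    glue (Bpart A (2*(k:ℤ))) (Dpart A (2*(k:ℤ))) (2*(k:ℤ)) = A := by
  unfold glue
  rw [Wset_Dpart]
  unfold Bpart
  rw [Finset.image_image]
  have heq : Set.EqOn
      ((fun c : Cell => (c.1,
          placeL ((A \ Vpart A (2*(k:ℤ))).image
              (fun x => (x.1, placeL (A \ Vpart A (2*(k:ℤ))) ∅ x)))
            (Vpart A (2*(k:ℤ))) c))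
        ∘ (fun x : Cell => (x.1, placeL (A \ Vpart A (2*(k:ℤ))) ∅ x)))
      id ↑(A \ Vpart A (2*(k:ℤ))) := by
    intro x hx
    rw [Finset.mem_coe] at hx
    have hrl := replace_level hk hA x hx
    unfold Bpart at hrl
    exact Prod.ext rfl hrl
  rw [Finset.image_congr heq, Finset.image_id]
  rw [Finset.union_comm]
  exact Finset.sdiff_union_of_subset Vpart_subset

end Extract2

/-! ### finiteness -/

lemma level_bound {Q S A} (hA : IsTriAnimal Q S A) : ∀ x ∈ A, x.2 ≤ 2 * A.card := by
  have key : ∀ x ∈ A, x.2 ≤ 2 * (A.filter (fun y => y.2 < x.2)).card := by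
    intro x
    induction x using (measure (fun x : Cell => x.2)).wf.induction with
    | _ x ih =>
    intro hx
    rcases Nat.eq_zero_or_pos x.2 with h0 | h1
    · omega
    · obtain ⟨s, hs, hc, hlow, he⟩ := exists_supp hA hx h1
      have ihs := ih s hlow hs
      have hsub : insert s (A.filter (fun y => y.2 < s.2)) ⊆ A.filter (fun y => y.2 < x.2) := by
        apply Finset.insert_subset
        · exact Finset.mem_filter.2 ⟨hs, hlow⟩
        · intro y hy
          rw [Finset.mem_filter] at hy ⊢
          exact ⟨hy.1, by omega⟩
      have hns : s ∉ A.filter (fun y => y.2 < s.2) := by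
        rw [Finset.mem_filter]; rintro ⟨_, h⟩; omega
      have hcard := Finset.card_le_card hsub
      rw [Finset.card_insert_of_notMem hns] at hcard
      have hw : x.2 ≤ s.2 + 2 := by
        have := w_pos x s
        unfold w at he
        split at he <;> omega
      omega
  intro x hx
  have h1 := key x hx
  have h2 := Finset.card_filter_le A (fun y => y.2 < x.2)
  omega

lemma pos_bound {Q S A} (hA : IsTriAnimal Q S A) :
    ∀ x ∈ A, ∃ s ∈ S, (x.1 - s).natAbs ≤ x.2 := by
  intro x
  induction x using (measure (fun x : Cell => x.2)).wf.induction with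
  | _ x ih =>
  intro hx
  rcases Nat.eq_zero_or_pos x.2 with h0 | h1
  · refine ⟨x.1, ?_, by omega⟩
    have : x = (x.1, 0) := Prod.ext rfl h0
    rw [this] at hx
    exact (hA.2.1 x.1).1 hx
  · obtain ⟨s, hs, hc, hlow, _⟩ := exists_supp hA hx h1
    obtain ⟨q, hq, hb⟩ := ih s hlow hs
    refine ⟨q, hq, ?_⟩
    have := Int.natAbs_add_le (x.1 - s.1) (s.1 - q)
    have heq : x.1 - s.1 + (s.1 - q) = x.1 - q := by ring
    rw [heq] at this
    omega

lemma finite_anim (Q : Set ℤ) (S : Finset ℤ) (n : ℕ) (M : ℕ)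
    (hM : ∀ q ∈ S, q.natAbs ≤ M) :
    {A : Finset Cell | IsTriAnimal Q S A ∧ A.card = n}.Finite := by
  apply Set.Finite.subset (Finset.finite_toSet
    ((Finset.Icc (-((M:ℤ) + 2*n)) ((M:ℤ) + 2*n) ×ˢ Finset.range (2*n+1)).powerset))
  rintro A ⟨hA, hcard⟩
  rw [Finset.mem_coe, Finset.mem_powerset]
  intro x hx
  rw [Finset.mem_product]
  constructor
  · obtain ⟨s, hsS, hb⟩ := pos_bound hA x hx
    have h1 := hM s hsS
    have h2 := level_bound hA x hx
    rw [Finset.mem_Icc]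
    rw [hcard] at h2
    omega
  · rw [Finset.mem_range]
    have h2 := level_bound hA x hx
    rw [hcard] at h2
    omega

/-! ### the counting recurrence -/

lemma ncard_prod {α β : Type*} (s : Set α) (t : Set β) :
    (s ×ˢ t).ncard = s.ncard * t.ncard := by
  rw [← Nat.card_coe_set_eq, ← Nat.card_coe_set_eq, ← Nat.card_coe_set_eq]
  rw [Nat.card_congr (Equiv.Set.prod s t)]
  exact Nat.card_prod _ _

lemma count_rec (k : ℕ) (hk : 1 ≤ k) (n : ℕ) :
    triCount Set.univ (Csrc (k+1)) n
      = ∑ p ∈ Finset.HasAntidiagonal.antidiagonal n,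
          triCount Set.univ (Csrc k) p.1 * triCount (Set.Ici 0) {0} p.2 := by
  classical
  have finB : ∀ i : ℕ, ({B | IsTriAnimal Set.univ (Csrc k) B ∧ B.card = i}).Finite := by
    intro i
    apply finite_anim _ _ _ (2*k)
    intro q hq
    have h1 := Csrc_lt hq
    have h2 := Csrc_nonneg hq
    omega
  have finD : ∀ j : ℕ, ({D | IsTriAnimal (Set.Ici 0) {0} D ∧ D.card = j}).Finite := by
    intro j
    apply finite_anim _ _ _ 0
    intro q hq
    rw [Finset.mem_singleton] at hq
    simp [hq]
  have hfin : ∀ p : ℕ × ℕ,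
      (({B | IsTriAnimal Set.univ (Csrc k) B ∧ B.card = p.1}) ×ˢ
        ({D | IsTriAnimal (Set.Ici 0) {0} D ∧ D.card = p.2})).Finite :=
    fun p => (finB p.1).prod (finD p.2)
  set f : Finset Cell → Finset Cell × Finset Cell :=
    fun A => (Bpart A (2*(k:ℤ)), Dpart A (2*(k:ℤ))) with hf
  set SA : Set (Finset Cell) :=
    {A | IsTriAnimal Set.univ (Csrc (k+1)) A ∧ A.card = n} with hSA
  set T : Set (Finset Cell × Finset Cell) :=
    ⋃ p ∈ Finset.HasAntidiagonal.antidiagonal n,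
      (({B | IsTriAnimal Set.univ (Csrc k) B ∧ B.card = p.1}) ×ˢ
        ({D | IsTriAnimal (Set.Ici 0) {0} D ∧ D.card = p.2})) with hTdef
  have hmaps : ∀ A ∈ SA, f A ∈ T := by
    rintro A ⟨hA, hcard⟩
    have hBa := Bpart_anim hk hA
    have hDa := Dpart_anim hA
    have hcards := extract_card (k := k) (A := A)
    rw [hTdef]
    rw [Set.mem_iUnion₂]
    refine ⟨((Bpart A (2*(k:ℤ))).card, (Dpart A (2*(k:ℤ))).card), ?_, ?_⟩
    · rw [Finset.HasAntidiagonal.mem_antidiagonal]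
      omega
    · exact Set.mem_prod.2 ⟨⟨hBa, rfl⟩, ⟨hDa, rfl⟩⟩
  have hinj : Set.InjOn f SA := by
    rintro A ⟨hA, _⟩ A' ⟨hA', _⟩ he
    rw [hf] at he
    simp only [Prod.ext_iff] at he
    have h1 := glue_extract hk hA
    have h2 := glue_extract hk hA'
    rw [← h1, ← h2, he.1, he.2]
  have hsurj : ∀ y ∈ T, ∃ A ∈ SA, f A = y := by
    intro y hy
    rw [hTdef, Set.mem_iUnion₂] at hy
    obtain ⟨p, hp, hyp⟩ := hy
    rw [Finset.HasAntidiagonal.mem_antidiagonal] at hp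
    obtain ⟨⟨hB, hBc⟩, ⟨hD, hDc⟩⟩ := Set.mem_prod.1 hyp
    refine ⟨glue y.1 y.2 (2*(k:ℤ)), ⟨glue_anim hk hB hD, ?_⟩, ?_⟩
    · rw [glue_card hB hD]
      omega
    · rw [hf]
      simp only
      rw [Bpart_glue hB hD, Dpart_glue hB hD]
  have himg : f '' SA = T := by
    apply Set.Subset.antisymm
    · rintro y ⟨A, hA, rfl⟩
      exact hmaps A hA
    · intro y hy
      obtain ⟨A, hA, he⟩ := hsurj y hy
      exact ⟨A, hA, he⟩
  have h1 : SA.ncard = T.ncard := by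
    rw [← himg, Set.ncard_image_of_injOn hinj]
  -- express T as a biUnion finset
  set TF : Finset (Finset Cell × Finset Cell) :=
    (Finset.HasAntidiagonal.antidiagonal n).biUnion (fun p => (hfin p).toFinset) with hTF
  have hT : T = ↑TF := by
    rw [hTdef, hTF]
    ext y
    simp only [Set.mem_iUnion₂, Finset.coe_biUnion, Set.mem_iUnion, Finset.mem_coe,
      Set.Finite.mem_toFinset]
  have hdisj : ∀ p ∈ Finset.HasAntidiagonal.antidiagonal n, ∀ q ∈ Finset.HasAntidiagonal.antidiagonal n, p ≠ q →
      Disjoint ((hfin p).toFinset) ((hfin q).toFinset) := by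
    intro p _ q _ hne
    rw [Finset.disjoint_left]
    intro y hyp hyq
    rw [Set.Finite.mem_toFinset] at hyp hyq
    obtain ⟨⟨_, h1⟩, ⟨_, h2⟩⟩ := Set.mem_prod.1 hyp
    obtain ⟨⟨_, h3⟩, ⟨_, h4⟩⟩ := Set.mem_prod.1 hyq
    exact hne (Prod.ext (by omega) (by omega))
  have h2 : T.ncard = TF.card := by rw [hT, Set.ncard_coe_finset]
  have h3 : TF.card = ∑ p ∈ Finset.HasAntidiagonal.antidiagonal n, ((hfin p).toFinset).card :=
    Finset.card_biUnion hdisj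
  have h4 : ∀ p : ℕ × ℕ, ((hfin p).toFinset).card
      = triCount Set.univ (Csrc k) p.1 * triCount (Set.Ici 0) {0} p.2 := by
    intro p
    have : ((hfin p).toFinset).card
        = (({B | IsTriAnimal Set.univ (Csrc k) B ∧ B.card = p.1}) ×ˢ
            ({D | IsTriAnimal (Set.Ici 0) {0} D ∧ D.card = p.2})).ncard := by
      rw [← Set.ncard_coe_finset ((hfin p).toFinset), Set.Finite.coe_toFinset]
    rw [this, ncard_prod]
    rfl
  have hSAcount : triCount Set.univ (Csrc (k+1)) n = SA.ncard := rfl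
  rw [hSAcount, h1, h2, h3]
  exact Finset.sum_congr rfl (fun p _ => h4 p)

lemma gf_rec (k : ℕ) (hk : 1 ≤ k) :
    triGF Set.univ (Csrc (k+1))
      = triGF Set.univ (Csrc k) * triGF (Set.Ici 0) {0} := by
  apply PowerSeries.ext
  intro n
  rw [PowerSeries.coeff_mul]
  simp only [triGF, PowerSeries.coeff_mk]
  rw [count_rec k hk n]
  push_cast
  rfl

end Anim

theorem stmt14 (k : ℕ) (hk : 1 ≤ k) :
    triGF Set.univ ((Finset.range k).image fun i : ℕ => 2 * (i : ℤ))
      = triGF Set.univ {0} * triGF (Set.Ici 0) {0} ^ (k - 1) := by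
  
  induction k, hk using Nat.le_induction with
  | base =>
    have h1 : (Finset.range 1).image (fun i : ℕ => 2 * (i : ℤ)) = {0} := by
      simp
    rw [h1]
    simp
  | succ k hk ih =>
    have h2 : triGF Set.univ (Anim.Csrc (k+1))
        = triGF Set.univ (Anim.Csrc k) * triGF (Set.Ici 0) {0} := Anim.gf_rec k hk
    have hc : Anim.Csrc (k+1) = (Finset.range (k+1)).image (fun i : ℕ => 2 * (i : ℤ)) := rfl
    have hc2 : Anim.Csrc k = (Finset.range k).image (fun i : ℕ => 2 * (i : ℤ)) := rfl
    rw [← hc, h2, hc2, ih]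
    rw [mul_assoc, ← pow_succ]
    congr 2
    omega
end

section
/- For all integers q ≥ 0 and k ≥ 1, the generating function H of triangular-lattice directed animals over ℕ with compact source C_{q,k} = {q, q+2, …, q+2k−2} satisfies, in ℤ[[t]], the identity (1 − 𝒟(t)) · H(t) = (1 − 𝒟(t)^{q+1}) · 𝒟(t)^k. -/
open scoped Classical

noncomputable section

abbrev Site := ℤ × ℕ

def collide (p q : Site) : Prop := p.1 = q.1 ∨ p.1 + 1 = q.1 ∨ q.1 + 1 = p.1

def wt (p q : Site) : ℕ := if p.1 = q.1 then 2 else 1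

lemma collide_symm {p q : Site} (h : collide p q) : collide q p := by
  unfold collide at *; tauto

lemma one_le_wt (p q : Site) : 1 ≤ wt p q := by unfold wt; split <;> omega

noncomputable def llev (V B : Finset Site) (p : Site) : ℕ :=
  max ((V.filter fun v => collide v p).sup fun v => v.2 + wt v p)
      ((B.filter fun b => collide b p ∧ b.2 < p.2).attach.sup
        fun b => llev V B b.1 + wt b.1 p)
termination_by p.2
decreasing_by
  · have hb := b.2; simp only [Finset.mem_filter] at hb; exact hb.2.2

lemma llev_def (V B : Finset Site) (p : Site) :
    llev V B p =
      max ((V.filter fun v => collide v p).sup fun v => v.2 + wt v p)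
        ((B.filter fun b => collide b p ∧ b.2 < p.2).attach.sup
          fun b => llev V B b.1 + wt b.1 p) := by
  rw [llev]

lemma le_llev_of_V {V B : Finset Site} {v p : Site} (hv : v ∈ V) (hc : collide v p) :
    v.2 + wt v p ≤ llev V B p := by
  rw [llev_def]
  exact le_max_of_le_left (Finset.le_sup (f := fun v => v.2 + wt v p) (Finset.mem_filter.2 ⟨hv, hc⟩))

lemma le_llev_of_B {V B : Finset Site} {b p : Site} (hb : b ∈ B) (hc : collide b p)
    (hlt : b.2 < p.2) : llev V B b + wt b p ≤ llev V B p := by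
  rw [llev_def _ _ p]
  refine le_max_of_le_right ?_
  have hmem : b ∈ B.filter fun x => collide x p ∧ x.2 < p.2 := by
    simp [Finset.mem_filter, hb, hc, hlt]
  exact Finset.le_sup (f := fun b => llev V B b.1 + wt b.1 p) (Finset.mem_attach _ ⟨b, hmem⟩)

lemma llev_achieved {V B : Finset Site} {p : Site} (h : 1 ≤ llev V B p) :
    (∃ v ∈ V, collide v p ∧ llev V B p = v.2 + wt v p) ∨
      (∃ b ∈ B, collide b p ∧ b.2 < p.2 ∧ llev V B p = llev V B b + wt b p) := by
  rw [llev_def] at h ⊢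
  rcases max_cases ((V.filter fun v => collide v p).sup fun v => v.2 + wt v p)
      ((B.filter fun b => collide b p ∧ b.2 < p.2).attach.sup
        fun b => llev V B b.1 + wt b.1 p) with ⟨heq, _⟩ | ⟨heq, _⟩ <;> rw [heq] at h ⊢
  · left
    have hne : (V.filter fun v => collide v p).Nonempty := by
      by_contra hcon
      rw [Finset.not_nonempty_iff_eq_empty] at hcon
      simp [hcon] at h
    obtain ⟨v, hv, hveq⟩ := Finset.exists_mem_eq_sup _ hne fun v => v.2 + wt v p
    simp only [Finset.mem_filter] at hv
    exact ⟨v, hv.1, hv.2, hveq⟩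
  · right
    have hne : ((B.filter fun b => collide b p ∧ b.2 < p.2)).Nonempty := by
      by_contra hcon
      rw [Finset.not_nonempty_iff_eq_empty] at hcon
      simp [hcon] at h
    obtain ⟨b, hb, hbeq⟩ := Finset.exists_mem_eq_sup _ hne.attach
      fun b : {x // x ∈ B.filter fun y => collide y p ∧ y.2 < p.2} => llev V B b.1 + wt b.1 p
    have hb' := b.2
    simp only [Finset.mem_filter] at hb'
    exact ⟨b.1, hb'.1, hb'.2.1, hb'.2.2, hbeq⟩

lemma llev_le {V B : Finset Site} {p : Site} {n : ℕ}
    (hV : ∀ v ∈ V, collide v p → v.2 + wt v p ≤ n)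
    (hB : ∀ b ∈ B, collide b p → b.2 < p.2 → llev V B b + wt b p ≤ n) :
    llev V B p ≤ n := by
  rw [llev_def]
  refine max_le (Finset.sup_le fun v hv => ?_) (Finset.sup_le fun b _ => ?_)
  · simp only [Finset.mem_filter] at hv; exact hV v hv.1 hv.2
  · have hb := b.2; simp only [Finset.mem_filter] at hb
    exact hB b.1 hb.1 hb.2.1 hb.2.2


section AniBasic

variable {S : Finset ℤ} {A : Finset Site}

lemma ani_pos (hA : IsTriAnimal (Set.Ici 0) S A) : ∀ p ∈ A, 0 ≤ p.1 := by
  intro p hp; exact hA.1 p hp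

/-- exact support -/
lemma ani_supp (hA : IsTriAnimal (Set.Ici 0) S A) {p : Site} (hp : p ∈ A) (h1 : 1 ≤ p.2) :
    ∃ s ∈ A, collide s p ∧ s.2 < p.2 ∧ s.2 + wt s p = p.2 := by
  rcases hA.2.2 p hp h1 with h | h | ⟨h2, h⟩
  · refine ⟨(p.1 - 1, p.2 - 1), h, Or.inr (Or.inl (by simp)), by omega, ?_⟩
    have : wt (p.1 - 1, p.2 - 1) p = 1 := by unfold wt; have : p.1 - 1 ≠ p.1 := by omega
                                             simp [this]
    simp only [this]; omega
  · refine ⟨(p.1 + 1, p.2 - 1), h, Or.inr (Or.inr (by simp)), by omega, ?_⟩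
    have : wt (p.1 + 1, p.2 - 1) p = 1 := by unfold wt; have : p.1 + 1 ≠ p.1 := by omega
                                             simp [this]
    simp only [this]; omega
  · refine ⟨(p.1, p.2 - 2), h, Or.inl (by simp), by omega, ?_⟩
    have : wt ((p.1 : ℤ), p.2 - 2) p = 2 := by unfold wt; simp
    simp only [this]; omega

lemma ani_parity (hA : IsTriAnimal (Set.Ici 0) S A) {e : ℤ} (hp : ∀ s ∈ S, Even (s - e)) :
    ∀ p ∈ A, Even (p.1 + (p.2 : ℤ) - e) := by
  suffices h : ∀ n : ℕ, ∀ p ∈ A, p.2 = n → Even (p.1 + (p.2 : ℤ) - e) by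
    intro p hp'; exact h p.2 p hp' rfl
  intro n
  induction n using Nat.strong_induction_on with
  | _ n IH =>
    intro p hpA hpn
    rcases Nat.eq_zero_or_pos n with h0 | h1
    · subst h0
      have : p = (p.1, 0) := by ext; rfl; omega
      rw [this] at hpA
      have := hp p.1 ((hA.2.1 p.1).1 hpA)
      simpa [hpn] using this
    · obtain ⟨s, hsA, hsc, hslt, hsw⟩ := ani_supp hA hpA (by omega)
      have hse := IH s.2 (by omega) s hsA rfl
      rcases hsc with hc | hc | hc
      · have hw : wt s p = 2 := by unfold wt; simp [hc]
        rw [hw] at hsw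
        obtain ⟨r, hr⟩ := hse
        refine ⟨r + 1, ?_⟩
        have : (p.2 : ℤ) = (s.2 : ℤ) + 2 := by omega
        omega
      · have hne : s.1 ≠ p.1 := by omega
        have hw : wt s p = 1 := by unfold wt; simp [hne]
        rw [hw] at hsw
        obtain ⟨r, hr⟩ := hse
        refine ⟨r + 1, ?_⟩
        have : (p.2 : ℤ) = (s.2 : ℤ) + 1 := by omega
        omega
      · have hne : s.1 ≠ p.1 := by omega
        have hw : wt s p = 1 := by unfold wt; simp [hne]
        rw [hw] at hsw
        obtain ⟨r, hr⟩ := hse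
        refine ⟨r, ?_⟩
        have : (p.2 : ℤ) = (s.2 : ℤ) + 1 := by omega
        omega

/-- tightness -/
lemma ani_tight (hA : IsTriAnimal (Set.Ici 0) S A) {e : ℤ} (hp : ∀ s ∈ S, Even (s - e))
    {p q : Site} (hpA : p ∈ A) (hqA : q ∈ A) (hc : collide q p) (hlt : q.2 < p.2) :
    q.2 + wt q p ≤ p.2 := by
  have h1 := ani_parity hA hp p hpA
  have h2 := ani_parity hA hp q hqA
  obtain ⟨r1, hr1⟩ := h1
  obtain ⟨r2, hr2⟩ := h2
  rcases hc with hc | hc | hc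
  · have hw : wt q p = 2 := by unfold wt; simp [hc]
    rw [hw]; omega
  · have hne : q.1 ≠ p.1 := by omega
    have hw : wt q p = 1 := by unfold wt; simp [hne]
    rw [hw]; omega
  · have hne : q.1 ≠ p.1 := by omega
    have hw : wt q p = 1 := by unfold wt; simp [hne]
    rw [hw]; omega

/-- colliding sites at equal level are equal -/
lemma ani_level_inj (hA : IsTriAnimal (Set.Ici 0) S A) {e : ℤ} (hp : ∀ s ∈ S, Even (s - e))
    {p q : Site} (hpA : p ∈ A) (hqA : q ∈ A) (hc : collide q p) (hl : q.2 = p.2) : q = p := by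
  obtain ⟨r1, hr1⟩ := ani_parity hA hp p hpA
  obtain ⟨r2, hr2⟩ := ani_parity hA hp q hqA
  rcases hc with hc | hc | hc
  · ext
    · exact hc
    · exact hl
  · exfalso; omega
  · exfalso; omega

lemma ani_empty (hA : IsTriAnimal (Set.Ici 0) (∅ : Finset ℤ) A) : A = ∅ := by
  rw [Finset.eq_empty_iff_forall_notMem]
  suffices h : ∀ n : ℕ, ∀ p : Site, p.2 = n → p ∉ A by
    intro p hp; exact h p.2 p rfl hp
  intro n
  induction n using Nat.strong_induction_on with
  | _ n IH =>
    intro p hpn hpA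
    rcases Nat.eq_zero_or_pos n with h0 | h1
    · subst h0
      have : p = (p.1, 0) := by ext; rfl; omega
      rw [this] at hpA
      simpa using (hA.2.1 p.1).1 hpA
    · obtain ⟨s, hsA, _, hslt, _⟩ := ani_supp hA hpA (by omega)
      exact IH s.2 (by omega) s rfl hsA

lemma ani_level_bound (hA : IsTriAnimal (Set.Ici 0) S A) :
    ∀ p ∈ A, p.2 ≤ 2 * A.card := by
  suffices h : ∀ n : ℕ, ∀ p ∈ A, p.2 = n → p.2 ≤ 2 * (A.filter fun a => a.2 < p.2).card by
    intro p hp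
    refine le_trans (h p.2 p hp rfl) ?_
    have := Finset.card_filter_le A fun a => a.2 < p.2
    omega
  intro n
  induction n using Nat.strong_induction_on with
  | _ n IH =>
    intro p hpA hpn
    rcases Nat.eq_zero_or_pos n with h0 | h1
    · omega
    · obtain ⟨s, hsA, hsc, hslt, hsw⟩ := ani_supp hA hpA (by omega)
      have hs2 := IH s.2 (by omega) s hsA rfl
      have hsub : insert s (A.filter fun a => a.2 < s.2) ⊆ A.filter fun a => a.2 < p.2 := by
        intro x hx
        rcases Finset.mem_insert.1 hx with rfl | hx
        · exact Finset.mem_filter.2 ⟨hsA, hslt⟩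
        · have := Finset.mem_filter.1 hx
          exact Finset.mem_filter.2 ⟨this.1, by omega⟩
      have hcard := Finset.card_le_card hsub
      rw [Finset.card_insert_of_notMem (by simp)] at hcard
      have hwle : wt s p ≤ 2 := by unfold wt; split <;> omega
      omega

lemma ani_pos_bound (hA : IsTriAnimal (Set.Ici 0) S A) {Z : ℤ} (hZ : ∀ s ∈ S, s ≤ Z) :
    ∀ p ∈ A, p.1 ≤ Z + p.2 := by
  suffices h : ∀ n : ℕ, ∀ p ∈ A, p.2 = n → p.1 ≤ Z + p.2 by
    intro p hp; exact h p.2 p hp rfl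
  intro n
  induction n using Nat.strong_induction_on with
  | _ n IH =>
    intro p hpA hpn
    rcases Nat.eq_zero_or_pos n with h0 | h1
    · subst h0
      have : p = (p.1, 0) := by ext; rfl; omega
      rw [this] at hpA
      have := hZ p.1 ((hA.2.1 p.1).1 hpA)
      omega
    · obtain ⟨s, hsA, hsc, hslt, _⟩ := ani_supp hA hpA (by omega)
      have := IH s.2 (by omega) s hsA rfl
      rcases hsc with hc | hc | hc <;> omega

lemma ani_finite (C : Finset Site → Prop) (hC : ∀ A, C A → IsTriAnimal (Set.Ici 0) S A)
    (n : ℕ) : {A : Finset Site | C A ∧ A.card = n}.Finite := by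
  obtain ⟨Z, hZ⟩ := S.bddAbove
  refine Set.Finite.subset
    (Finset.finite_toSet ((Finset.Icc (0:ℤ) (Z + 2*n) ×ˢ Finset.range (2*n+1)).powerset)) ?_
  intro A hA
  obtain ⟨hCA, hcard⟩ := hA
  have hAn := hC A hCA
  refine Finset.mem_coe.2 (Finset.mem_powerset.2 ?_)
  intro p hp
  have h1 := ani_pos hAn p hp
  have h2 := ani_level_bound hAn p hp
  have h3 := ani_pos_bound hAn (fun s hs => hZ hs) p hp
  rw [Finset.mem_product, Finset.mem_Icc, Finset.mem_range]
  constructor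
  · constructor
    · exact h1
    · omega
  · omega

end AniBasic

end

section Core

lemma collide_pos {p q : Site} {a b : ℕ} : collide (p.1, a) (q.1, b) ↔ collide p q := Iff.rfl

lemma wt_pos {p q : Site} {a b : ℕ} : wt (p.1, a) (q.1, b) = wt p q := rfl

/-- CORE: recomputed levels of a relabelled tight configuration recover original levels. -/
lemma core_recompute (V₀ W : Finset Site) (g : Site → ℕ)
    (ha : ∀ w ∈ W, ∀ w' ∈ W, collide w' w → (w'.2 < w.2 ↔ g w' < g w))
    (hb1 : ∀ w ∈ W, ∀ v ∈ V₀, collide v w → v.2 + wt v w ≤ w.2)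
    (hb2 : ∀ w ∈ W, ∀ w' ∈ W, collide w' w → w'.2 < w.2 → w'.2 + wt w' w ≤ w.2)
    (hc : ∀ w ∈ W, 1 ≤ w.2 →
      ∃ s, (s ∈ V₀ ∨ s ∈ W) ∧ collide s w ∧ s.2 < w.2 ∧ s.2 + wt s w = w.2) :
    ∀ w ∈ W, llev V₀ (W.image fun u => (u.1, g u)) (w.1, g w) = w.2 := by
  set σ : Site → Site := fun u => (u.1, g u) with hσ
  suffices h : ∀ n : ℕ, ∀ w ∈ W, w.2 = n → llev V₀ (W.image σ) (σ w) = w.2 by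
    intro w hw; exact h w.2 w hw rfl
  intro n
  induction n using Nat.strong_induction_on with
  | _ n IH =>
    intro w hw hwn
    apply le_antisymm
    · apply llev_le
      · intro v hv hcvw
        have : collide v w := hcvw
        calc v.2 + wt v (σ w) = v.2 + wt v w := rfl
          _ ≤ w.2 := hb1 w hw v hv this
      · intro b hb hcb hblt
        obtain ⟨w', hw', rfl⟩ := Finset.mem_image.1 hb
        have hcol : collide w' w := hcb
        have hlt' : w'.2 < w.2 := (ha w hw w' hw' hcol).2 hblt
        have hIH : llev V₀ (W.image σ) (σ w') = w'.2 := IH w'.2 (by omega) w' hw' rfl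
        calc llev V₀ (W.image σ) (σ w') + wt (σ w') (σ w)
            = w'.2 + wt w' w := by rw [hIH]; rfl
          _ ≤ w.2 := hb2 w hw w' hw' hcol hlt'
    · rcases Nat.eq_zero_or_pos w.2 with h0 | h1
      · omega
      · obtain ⟨s, hsmem, hsc, hslt, hsw⟩ := hc w hw h1
        rcases hsmem with hsV | hsW
        · have : s.2 + wt s (σ w) ≤ llev V₀ (W.image σ) (σ w) :=
            le_llev_of_V hsV hsc
          have hwt : wt s (σ w) = wt s w := rfl
          omega
        · have hmem : σ s ∈ W.image σ := Finset.mem_image_of_mem σ hsW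
          have hcs : collide (σ s) (σ w) := hsc
          have hlt : (σ s).2 < (σ w).2 := (ha w hw s hsW hsc).1 hslt
          have h2 := le_llev_of_B (V := V₀) hmem hcs hlt
          have hIH : llev V₀ (W.image σ) (σ s) = s.2 := IH s.2 (by omega) s hsW rfl
          have hwt : wt (σ s) (σ w) = wt s w := rfl
          omega

end Core

/-! ### Extraction and composition -/

def upstep (A : Finset Site) (p q : Site) : Prop := q ∈ A ∧ collide p q ∧ p.2 < q.2

def above (A : Finset Site) (m p : Site) : Prop := Relation.ReflTransGen (upstep A) m p

noncomputable def upar (A : Finset Site) (m : Site) : Finset Site := A.filter (above A m)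

noncomputable def lvl0 (A : Finset Site) : ℕ := sInf {l | ((0:ℤ), l) ∈ A}

noncomputable def mm (A : Finset Site) : Site := ((0:ℤ), lvl0 A)

noncomputable def exV (A : Finset Site) : Finset Site := A \ upar A (mm A)

noncomputable def exP (A : Finset Site) : Finset Site :=
  (upar A (mm A)).image fun u => (u.1, llev ∅ (upar A (mm A)) u)

noncomputable def comp (V B : Finset Site) : Finset Site :=
  V ∪ B.image fun p => (p.1, llev V B p)

section Extraction

variable {S : Finset ℤ} {A : Finset Site} {e : ℤ}

lemma above_mem {m p : Site} (hm : m ∈ A) (h : above A m p) : p ∈ A := by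
  induction h with
  | refl => exact hm
  | tail _ hstep _ => exact hstep.1

lemma above_le {m p : Site} (h : above A m p) : p = m ∨ m.2 < p.2 := by
  induction h with
  | refl => exact Or.inl rfl
  | tail _ hstep IH =>
    have h2 := hstep.2.2
    rcases IH with rfl | hlt
    · right; exact h2
    · right; omega

lemma mem_upar {m p : Site} : p ∈ upar A m ↔ p ∈ A ∧ above A m p := Finset.mem_filter

variable (hA : IsTriAnimal (Set.Ici 0) S A) (hp : ∀ s ∈ S, Even (s - e))
  (ht : ∃ l : ℕ, ((0:ℤ), l) ∈ A)

include hA ht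

lemma mm_mem : mm A ∈ A := Nat.sInf_mem ht

lemma col0_in_upar {l : ℕ} (hl : ((0:ℤ), l) ∈ A) : ((0:ℤ), l) ∈ upar A (mm A) := by
  have hle : lvl0 A ≤ l := Nat.sInf_le hl
  rcases eq_or_lt_of_le hle with heq | hlt
  · rw [mem_upar]
    refine ⟨hl, ?_⟩
    have : mm A = ((0:ℤ), l) := by rw [mm, heq]
    rw [this]
    exact Relation.ReflTransGen.refl
  · rw [mem_upar]
    refine ⟨hl, Relation.ReflTransGen.single ⟨hl, Or.inl rfl, hlt⟩⟩

lemma exV_pos1 : ∀ p ∈ exV A, 1 ≤ p.1 := by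
  intro p hpm
  rw [exV, Finset.mem_sdiff] at hpm
  have h0 : 0 ≤ p.1 := ani_pos hA p hpm.1
  rcases eq_or_lt_of_le h0 with heq | hlt
  · exfalso
    apply hpm.2
    have : p = ((0:ℤ), p.2) := by ext; omega; rfl
    rw [this] at hpm ⊢
    exact col0_in_upar hA ht hpm.1
  · omega

lemma exV_animal : IsTriAnimal (Set.Ici 0) (S.erase 0) (exV A) := by
  refine ⟨?_, ?_, ?_⟩
  · intro x hx
    rw [exV, Finset.mem_sdiff] at hx
    exact hA.1 x hx.1
  · intro x
    constructor
    · intro hx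
      have hx' := hx
      rw [exV, Finset.mem_sdiff] at hx'
      refine Finset.mem_erase.2 ⟨?_, (hA.2.1 x).1 hx'.1⟩
      intro hx0
      subst hx0
      have := exV_pos1 hA ht _ hx
      simp at this
    · intro hx
      rw [Finset.mem_erase] at hx
      have hxA : (x, 0) ∈ A := (hA.2.1 x).2 hx.2
      rw [exV, Finset.mem_sdiff]
      refine ⟨hxA, ?_⟩
      intro hU
      rcases above_le (mem_upar.1 hU).2 with heq | hlt
      · apply hx.1
        have : x = (mm A).1 := by rw [← heq]
        rw [this, mm]
      · simp [mm] at hlt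
  · intro x hx h1
    rw [exV, Finset.mem_sdiff] at hx
    have hsupp := hA.2.2 x hx.1 h1
    -- each candidate support, if in upar, pulls x into upar
    have key : ∀ s : Site, s ∈ A → collide s x → s.2 < x.2 → s ∈ upar A (mm A) → False := by
      intro s hsA hsc hslt hsU
      apply hx.2
      rw [mem_upar]
      exact ⟨hx.1, Relation.ReflTransGen.tail (mem_upar.1 hsU).2 ⟨hx.1, hsc, hslt⟩⟩
    rcases hsupp with h | h | ⟨h2, h⟩
    · left
      rw [exV, Finset.mem_sdiff]
      refine ⟨h, fun hU => key _ h (Or.inr (Or.inl (by simp))) (by omega) hU⟩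
    · right; left
      rw [exV, Finset.mem_sdiff]
      refine ⟨h, fun hU => key _ h (Or.inr (Or.inr (by simp))) (by omega) hU⟩
    · right; right
      refine ⟨h2, ?_⟩
      rw [exV, Finset.mem_sdiff]
      refine ⟨h, fun hU => key _ h (Or.inl (by simp)) (by omega) hU⟩

include hp

lemma exV_colliders_below {u v : Site} (hu : u ∈ upar A (mm A)) (hv : v ∈ exV A)
    (hc : collide v u) : v.2 < u.2 := by
  rw [mem_upar] at hu
  rw [exV, Finset.mem_sdiff] at hv
  rcases lt_trichotomy v.2 u.2 with h | h | h
  · exact h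
  · exfalso
    exact hv.2 (mem_upar.2 ⟨hv.1, by rw [ani_level_inj hA hp hu.1 hv.1 hc h]; exact hu.2⟩)
  · exfalso
    exact hv.2 (mem_upar.2 ⟨hv.1, Relation.ReflTransGen.tail hu.2 ⟨hv.1, collide_symm hc, h⟩⟩)

end Extraction

section Extraction2

variable {S : Finset ℤ} {A : Finset Site} {e : ℤ}
variable (hA : IsTriAnimal (Set.Ici 0) S A) (hp : ∀ s ∈ S, Even (s - e))
  (ht : ∃ l : ℕ, ((0:ℤ), l) ∈ A)

/-- dropped level inside the extracted up-set -/
noncomputable def dl (A : Finset Site) : Site → ℕ := llev ∅ (upar A (mm A))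

lemma dl_lt {u u' : Site} (hu' : u' ∈ upar A (mm A)) (hc : collide u' u) (hlt : u'.2 < u.2) :
    dl A u' < dl A u := by
  have := le_llev_of_B (V := (∅ : Finset Site)) hu' hc hlt
  have := one_le_wt u' u
  unfold dl; omega

include hA ht

lemma dl_mm : dl A (mm A) = 0 := by
  refine Nat.le_antisymm (llev_le ?_ ?_) (Nat.zero_le _)
  · intro v hv; exact absurd hv (Finset.notMem_empty v)
  · intro b hb hc hlt
    exfalso
    rcases above_le (mem_upar.1 hb).2 with heq | h
    · rw [heq] at hlt; omega
    · omega

lemma dl_pos {u : Site} (hu : u ∈ upar A (mm A)) (hne : u ≠ mm A) : 1 ≤ dl A u := by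
  rw [mem_upar] at hu
  rcases (Relation.ReflTransGen.cases_tail hu.2) with heq | ⟨w, hw, hstep⟩
  · exact absurd heq hne
  · have hwA : w ∈ A := above_mem (mm_mem hA ht) hw
    have hwU : w ∈ upar A (mm A) := mem_upar.2 ⟨hwA, hw⟩
    have := le_llev_of_B (V := (∅ : Finset Site)) hwU hstep.2.1 hstep.2.2
    have := one_le_wt w u
    unfold dl; omega

include hp

lemma dl_strict_iff {u u' : Site} (hu : u ∈ upar A (mm A)) (hu' : u' ∈ upar A (mm A)) :
    collide u' u → (u'.2 < u.2 ↔ dl A u' < dl A u) := by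
  intro hc
  constructor
  · exact dl_lt hu' hc
  · intro hdl
    rcases lt_trichotomy u'.2 u.2 with h | h | h
    · exact h
    · exfalso
      have : u' = u := ani_level_inj hA hp (mem_upar.1 hu).1 (mem_upar.1 hu').1 hc h
      rw [this] at hdl; omega
    · exfalso
      have := dl_lt (A := A) hu (collide_symm hc) h
      omega

lemma dl_injOn : Set.InjOn (fun u => (u.1, dl A u)) (upar A (mm A)) := by
  intro u hu u' hu' heq
  simp only [Finset.mem_coe] at hu hu'
  simp only [Prod.mk.injEq] at heq
  obtain ⟨h1, h2⟩ := heq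
  have hc : collide u u' := Or.inl h1
  rcases lt_trichotomy u.2 u'.2 with h | h | h
  · exfalso; have := dl_lt (A := A) hu hc h; omega
  · ext
    · exact h1
    · exact h
  · exfalso; have := dl_lt (A := A) hu' (collide_symm hc) h; omega

lemma exP_card : (exP A).card = (upar A (mm A)).card :=
  Finset.card_image_of_injOn (dl_injOn hA hp ht)

lemma cards_split : (exV A).card + (exP A).card = A.card := by
  rw [exP_card hA hp ht, exV]
  have hsub : upar A (mm A) ⊆ A := Finset.filter_subset _ _
  have := Finset.card_sdiff_add_card_eq_card hsub
  omega

lemma exP_animal : IsTriAnimal (Set.Ici 0) ({0} : Finset ℤ) (exP A) := by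
  refine ⟨?_, ?_, ?_⟩
  · intro x hx
    obtain ⟨u, hu, rfl⟩ := Finset.mem_image.1 hx
    exact hA.1 u (mem_upar.1 hu).1
  · intro x
    constructor
    · intro hx
      obtain ⟨u, hu, hequ⟩ := Finset.mem_image.1 hx
      have hdl0 : dl A u = 0 := congrArg Prod.snd hequ
      have hueq : u = mm A := by
        by_contra hne
        have := dl_pos hA ht hu hne
        omega
      have : x = u.1 := (congrArg Prod.fst hequ).symm
      rw [this, hueq]
      simp [mm]
    · intro hx
      rw [Finset.mem_singleton] at hx
      subst hx
      have hmU : mm A ∈ upar A (mm A) :=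
        mem_upar.2 ⟨mm_mem hA ht, Relation.ReflTransGen.refl⟩
      have : ((0:ℤ), (0:ℕ)) = ((mm A).1, dl A (mm A)) := by
        rw [dl_mm hA ht, mm]
      rw [this]
      exact Finset.mem_image_of_mem _ hmU
  · intro x hx h1
    obtain ⟨u, hu, rfl⟩ := Finset.mem_image.1 hx
    have hach := llev_achieved (V := (∅:Finset Site)) (B := upar A (mm A)) (p := u) (by
      show 1 ≤ llev ∅ (upar A (mm A)) u
      exact h1)
    rcases hach with ⟨v, hv, _⟩ | ⟨b, hb, hbc, hblt, hbeq⟩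
    · exact absurd hv (Finset.notMem_empty v)
    · have hbP : (b.1, dl A b) ∈ exP A := Finset.mem_image_of_mem _ hb
      rcases hbc with hc | hc | hc
      · right; right
        have hw : wt b u = 2 := by unfold wt; simp [hc]
        rw [hw] at hbeq
        change dl A u = dl A b + 2 at hbeq
        refine ⟨by change 2 ≤ dl A u; omega, ?_⟩
        have : ((u.1, dl A u).1, (u.1, dl A u).2 - 2) = (b.1, dl A b) := by
          ext
          · exact hc.symm
          · change dl A u - 2 = dl A b; omega
        show ((u.1, dl A u).1, (u.1, dl A u).2 - 2) ∈ exP A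
        rw [this]
        exact hbP
      · left
        have hww : b.1 ≠ u.1 := by omega
        have hw : wt b u = 1 := by unfold wt; simp [hww]
        rw [hw] at hbeq
        change dl A u = dl A b + 1 at hbeq
        have : ((u.1, dl A u).1 - 1, (u.1, dl A u).2 - 1) = (b.1, dl A b) := by
          ext
          · change u.1 - 1 = b.1; omega
          · change dl A u - 1 = dl A b; omega
        show ((u.1, dl A u).1 - 1, (u.1, dl A u).2 - 1) ∈ exP A
        rw [this]
        exact hbP
      · right; left
        have hww : b.1 ≠ u.1 := by omega
        have hw : wt b u = 1 := by unfold wt; simp [hww]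
        rw [hw] at hbeq
        change dl A u = dl A b + 1 at hbeq
        have : ((u.1, dl A u).1 + 1, (u.1, dl A u).2 - 1) = (b.1, dl A b) := by
          ext
          · change u.1 + 1 = b.1; omega
          · change dl A u - 1 = dl A b; omega
        show ((u.1, dl A u).1 + 1, (u.1, dl A u).2 - 1) ∈ exP A
        rw [this]
        exact hbP

end Extraction2

section Extraction3

variable {S : Finset ℤ} {A : Finset Site} {e : ℤ}
variable (hA : IsTriAnimal (Set.Ici 0) S A) (hp : ∀ s ∈ S, Even (s - e))
  (ht : ∃ l : ℕ, ((0:ℤ), l) ∈ A)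

include hA ht

lemma lvl0_pos (h0 : 0 ∉ S) : 1 ≤ lvl0 A := by
  by_contra h
  have h00 : lvl0 A = 0 := by omega
  have := mm_mem hA ht
  rw [mm, h00] at this
  exact h0 ((hA.2.1 0).1 this)

lemma exV_touch1 (h0 : 0 ∉ S) : ∃ l : ℕ, ((1:ℤ), l) ∈ exV A := by
  have hm := mm_mem hA ht
  have hm1 : 1 ≤ (mm A).2 := lvl0_pos hA ht h0
  obtain ⟨s, hsA, hsc, hslt, _⟩ := ani_supp hA hm hm1
  rcases hsc with hc | hc | hc
  · exfalso
    have hc0 : s.1 = 0 := by simpa [mm] using hc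
    have hs0 : s = ((0:ℤ), s.2) := by rw [← hc0]
    rw [hs0] at hsA
    have := Nat.sInf_le (show s.2 ∈ {l | ((0:ℤ),l) ∈ A} from hsA)
    have : lvl0 A ≤ s.2 := this
    simp only [mm] at hslt
    omega
  · exfalso
    have := ani_pos hA s hsA
    simp only [mm] at hc
    omega
  · have hs1 : s.1 = 1 := by simp only [mm] at hc; omega
    refine ⟨s.2, ?_⟩
    have hs : s = ((1:ℤ), s.2) := by rw [← hs1]
    rw [← hs]
    rw [exV, Finset.mem_sdiff]
    refine ⟨hsA, fun hU => ?_⟩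
    rcases above_le (mem_upar.1 hU).2 with heq | hlt
    · rw [heq] at hs1; simp [mm] at hs1
    · omega

include hp

lemma exV_pos2 (h0 : 0 ∈ S) : ∀ p ∈ exV A, 2 ≤ p.1 := by
  intro p hpV
  have h1 := exV_pos1 hA ht p hpV
  rcases eq_or_lt_of_le h1 with heq | hlt
  · exfalso
    rw [exV, Finset.mem_sdiff] at hpV
    have h00 : ((0:ℤ), (0:ℕ)) ∈ A := (hA.2.1 0).2 h0
    have hlv : lvl0 A = 0 :=
      Nat.le_antisymm (Nat.sInf_le (show (0:ℕ) ∈ {l | ((0:ℤ),l) ∈ A} from h00)) (Nat.zero_le _)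
    rcases Nat.eq_zero_or_pos p.2 with hp2 | hp2
    · have hep : p = ((1:ℤ), (0:ℕ)) := by
        rw [show ((1:ℤ),(0:ℕ)) = (p.1, p.2) by rw [← heq, show p.2 = 0 from hp2]]
      rw [hep] at hpV
      have h1S : (1:ℤ) ∈ S := (hA.2.1 1).1 hpV.1
      obtain ⟨r1, hr1⟩ := hp 0 h0
      obtain ⟨r2, hr2⟩ := hp 1 h1S
      omega
    · apply hpV.2
      rw [mem_upar]
      refine ⟨hpV.1, Relation.ReflTransGen.single ⟨hpV.1, ?_, ?_⟩⟩
      · right; left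
        simp only [mm]
        omega
      · simp only [mm, hlv]
        omega
  · omega


lemma rt1 : comp (exV A) (exP A) = A := by
  have hcore := core_recompute (exV A) (upar A (mm A)) (dl A)
    (fun w hw w' hw' hc => dl_strict_iff hA hp ht hw hw' hc)
    (fun w hw v hv hc => by
      have hlt := exV_colliders_below hA hp ht hw hv hc
      exact ani_tight hA hp (mem_upar.1 hw).1 ((Finset.mem_sdiff.1 hv).1) hc hlt)
    (fun w hw w' hw' hc hlt =>
      ani_tight hA hp (mem_upar.1 hw).1 (mem_upar.1 hw').1 hc hlt)
    (fun w hw h1 => by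
      obtain ⟨s, hsA, hsc, hslt, hsw⟩ := ani_supp hA (mem_upar.1 hw).1 h1
      by_cases hsU : s ∈ upar A (mm A)
      · exact ⟨s, Or.inr hsU, hsc, hslt, hsw⟩
      · exact ⟨s, Or.inl (Finset.mem_sdiff.2 ⟨hsA, hsU⟩), hsc, hslt, hsw⟩)
  have hPdef : exP A = (upar A (mm A)).image fun u => (u.1, dl A u) := rfl
  rw [comp, hPdef, Finset.image_image]
  have hEq : Set.EqOn
      ((fun p : Site => (p.1, llev (exV A) ((upar A (mm A)).image fun u => (u.1, dl A u)) p))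
        ∘ fun u => (u.1, dl A u)) id ↑(upar A (mm A)) := by
    intro u hu
    rw [Finset.mem_coe] at hu
    have hc := hcore u hu
    show ((u.1 : ℤ), llev (exV A) ((upar A (mm A)).image fun u => (u.1, dl A u)) (u.1, dl A u))
        = u
    rw [hc]
  rw [Finset.image_congr hEq, Finset.image_id, exV]
  exact Finset.sdiff_union_of_subset (Finset.filter_subset _ _)

end Extraction3

section Composition

variable {S : Finset ℤ} {V B : Finset Site} {e : ℤ}
variable (hV : IsTriAnimal (Set.Ici 0) (S.erase 0) V)
  (hB : IsTriAnimal (Set.Ici 0) ({0} : Finset ℤ) B)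
  (hpS : ∀ s ∈ S, Even (s - e))
  (hV1 : ∀ p ∈ V, 1 ≤ p.1)

lemma hpB : ∀ s ∈ ({0} : Finset ℤ), Even (s - 0) := by intro s hs; simp at hs; simp [hs]

include hpS in
lemma hpV : ∀ s ∈ S.erase 0, Even (s - e) := fun s hs => hpS s (Finset.mem_erase.1 hs).2

include hB

lemma b00 : ((0:ℤ), (0:ℕ)) ∈ B := (hB.2.1 0).2 (Finset.mem_singleton_self 0)

lemma n_L_lt {b b' : Site} (hb' : b' ∈ B) (hc : collide b' b) (hlt : b'.2 < b.2) :
    llev V B b' < llev V B b := by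
  have := le_llev_of_B (V := V) hb' hc hlt
  have := one_le_wt b' b
  omega

lemma n_L_strict_iff {b b' : Site} (hb : b ∈ B) (hb' : b' ∈ B) (hc : collide b' b) :
    b'.2 < b.2 ↔ llev V B b' < llev V B b := by
  constructor
  · exact n_L_lt hB hb' hc
  · intro h
    rcases lt_trichotomy b'.2 b.2 with h2 | h2 | h2
    · exact h2
    · exfalso
      have : b' = b := ani_level_inj hB hpB hb hb' hc h2
      rw [this] at h; omega
    · exfalso
      have := n_L_lt hB (V := V) hb (collide_symm hc) h2
      omega

lemma n_supp_chain : ∀ b ∈ B, above B ((0:ℤ), (0:ℕ)) b := by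
  suffices h : ∀ n : ℕ, ∀ b ∈ B, b.2 = n → above B ((0:ℤ), (0:ℕ)) b by
    intro b hb; exact h b.2 b hb rfl
  intro n
  induction n using Nat.strong_induction_on with
  | _ n IH =>
    intro b hb hbn
    rcases Nat.eq_zero_or_pos n with h0 | h1
    · have hb0 : b = (b.1, (0:ℕ)) := by rw [show (0:ℕ) = b.2 by omega]
      have hb1 : b.1 ∈ ({0} : Finset ℤ) := by
        rw [hb0] at hb
        exact (hB.2.1 b.1).1 hb
      simp only [Finset.mem_singleton] at hb1
      have : b = ((0:ℤ), (0:ℕ)) := by rw [hb0, hb1]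
      rw [this]
      exact Relation.ReflTransGen.refl
    · obtain ⟨s, hsB, hsc, hslt, _⟩ := ani_supp hB hb (by omega)
      exact Relation.ReflTransGen.tail (IH s.2 (by omega) s hsB rfl) ⟨hb, hsc, hslt⟩

lemma n_lift_pos {b : Site} (hb : b ∈ B) (h1 : 1 ≤ b.2) : 1 ≤ llev V B b := by
  obtain ⟨s, hsB, hsc, hslt, _⟩ := ani_supp hB hb h1
  have := le_llev_of_B (V := V) hsB hsc hslt
  have := one_le_wt s b
  omega

include hV1

lemma n_L00_touch1 {l : ℕ} (hl : ((1:ℤ), l) ∈ V) : 1 ≤ llev V B ((0:ℤ), (0:ℕ)) := by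
  have := le_llev_of_V (B := B) (p := ((0:ℤ), (0:ℕ))) hl (Or.inr (Or.inr (by norm_num)))
  have := one_le_wt ((1:ℤ), l) ((0:ℤ), (0:ℕ))
  omega

lemma n_L00_pos2 (h2 : ∀ p ∈ V, 2 ≤ p.1) : llev V B ((0:ℤ), (0:ℕ)) = 0 := by
  refine Nat.le_antisymm (llev_le ?_ ?_) (Nat.zero_le _)
  · intro v hv hc
    exfalso
    have := h2 v hv
    rcases hc with hc | hc | hc <;> simp at hc <;> omega
  · intro b hb hc hlt
    exact absurd hlt (by omega)

end Composition

section Composition2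

variable {S : Finset ℤ} {V B : Finset Site} {e : ℤ}
variable (hV : IsTriAnimal (Set.Ici 0) (S.erase 0) V)
  (hB : IsTriAnimal (Set.Ici 0) ({0} : Finset ℤ) B)
  (hpS : ∀ s ∈ S, Even (s - e))
  (hV1 : ∀ p ∈ V, 1 ≤ p.1)

include hB

lemma mem_comp {x : Site} :
    x ∈ comp V B ↔ x ∈ V ∨ ∃ b ∈ B, (b.1, llev V B b) = x := by
  rw [comp, Finset.mem_union, Finset.mem_image]

lemma r_disj : ∀ x ∈ V, x ∉ (B.image fun b => (b.1, llev V B b)) := by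
  intro x hx hmem
  obtain ⟨b, hb, hbe⟩ := Finset.mem_image.1 hmem
  have h1 : b.1 = x.1 := by rw [← hbe]
  have h2 : llev V B b = x.2 := by rw [← hbe]
  have hc : collide x b := Or.inl h1.symm
  have := le_llev_of_V (B := B) (p := b) hx hc
  have := one_le_wt x b
  omega

lemma n_injOn : Set.InjOn (fun b => (b.1, llev V B b)) B := by
  intro b hb b' hb' heq
  simp only [Finset.mem_coe] at hb hb'
  simp only [Prod.mk.injEq] at heq
  obtain ⟨h1, h2⟩ := heq
  have hc : collide b b' := Or.inl h1
  rcases lt_trichotomy b.2 b'.2 with h | h | h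
  · exfalso; have := n_L_lt hB (V := V) hb hc h; omega
  · ext
    · exact h1
    · exact h
  · exfalso; have := n_L_lt hB (V := V) hb' (collide_symm hc) h; omega

lemma comp_card : (comp V B).card = V.card + B.card := by
  rw [comp, Finset.card_union_of_disjoint (Finset.disjoint_left.2 fun {a} ha => r_disj hB a ha),
    Finset.card_image_of_injOn (n_injOn hB)]

include hV hpS hV1

lemma comp_source (hx2 : 0 ∈ S → ∀ p ∈ V, 2 ≤ p.1) (hx1 : 0 ∉ S → ∃ l, ((1:ℤ), l) ∈ V) :
    ∀ x : ℤ, ((x, (0:ℕ)) ∈ comp V B ↔ x ∈ S) := by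
  intro x
  rw [mem_comp hB]
  constructor
  · rintro (h | ⟨b, hb, hbe⟩)
    · have := (hV.2.1 x).1 h
      exact (Finset.mem_erase.1 this).2
    · simp only [Prod.mk.injEq] at hbe
      obtain ⟨h1, h2⟩ := hbe
      have hb2 : b.2 = 0 := by
        by_contra hb2
        have := n_lift_pos hB (V := V) hb (by omega)
        omega
      have hbeq : b = ((0:ℤ), (0:ℕ)) := by
        have : b = (b.1, (0:ℕ)) := by rw [show (0:ℕ) = b.2 from hb2.symm]
        rw [this]
        have : b.1 ∈ ({0}:Finset ℤ) := (hB.2.1 b.1).1 (by rw [← this]; exact hb)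
        simp only [Finset.mem_singleton] at this
        rw [this]
      by_contra hxS
      have hx0 : x = 0 := by rw [hbeq] at h1; exact h1.symm
      subst hx0
      obtain ⟨l, hl⟩ := hx1 hxS
      have := n_L00_touch1 hB hV1 hl
      rw [hbeq] at h2
      omega
  · intro hxS
    by_cases hx0 : x = 0
    · subst hx0
      right
      refine ⟨((0:ℤ), (0:ℕ)), b00 hB, ?_⟩
      have := n_L00_pos2 hB hV1 (hx2 hxS)
      rw [this]
    · left
      exact (hV.2.1 x).2 (Finset.mem_erase.2 ⟨hx0, hxS⟩)

lemma comp_animal (hx2 : 0 ∈ S → ∀ p ∈ V, 2 ≤ p.1) (hx1 : 0 ∉ S → ∃ l, ((1:ℤ), l) ∈ V) :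
    IsTriAnimal (Set.Ici 0) S (comp V B) := by
  refine ⟨?_, comp_source hV hB hpS hV1 hx2 hx1, ?_⟩
  · intro x hx
    rcases (mem_comp hB).1 hx with h | ⟨b, hb, hbe⟩
    · exact hV.1 x h
    · rw [← hbe]
      exact hB.1 b hb
  · intro x hx h1
    rcases (mem_comp hB).1 hx with h | ⟨b, hb, hbe⟩
    · rcases hV.2.2 x h h1 with h' | h' | ⟨h2, h'⟩
      · exact Or.inl (Finset.mem_union_left _ h')
      · exact Or.inr (Or.inl (Finset.mem_union_left _ h'))
      · exact Or.inr (Or.inr ⟨h2, Finset.mem_union_left _ h'⟩)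
    · subst hbe
      have hL1 : 1 ≤ llev V B b := h1
      rcases llev_achieved hL1 with ⟨v, hv, hvc, hveq⟩ | ⟨b', hb', hbc, hblt, hbeq⟩
      · rcases hvc with hc | hc | hc
        · right; right
          have hw : wt v b = 2 := by unfold wt; simp [hc]
          rw [hw] at hveq
          refine ⟨by omega, ?_⟩
          have : ((b.1, llev V B b).1, (b.1, llev V B b).2 - 2) = v := by
            have : v = (v.1, v.2) := rfl
            rw [this]
            show ((b.1 : ℤ), llev V B b - 2) = (v.1, v.2)
            rw [Prod.mk.injEq]
            exact ⟨hc.symm, by omega⟩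
          rw [this]
          exact Finset.mem_union_left _ hv
        · left
          have hww : v.1 ≠ b.1 := by omega
          have hw : wt v b = 1 := by unfold wt; simp [hww]
          rw [hw] at hveq
          have : ((b.1, llev V B b).1 - 1, (b.1, llev V B b).2 - 1) = v := by
            show ((b.1 : ℤ) - 1, llev V B b - 1) = v
            have : v = (v.1, v.2) := rfl
            rw [this, Prod.mk.injEq]
            exact ⟨by omega, by omega⟩
          rw [this]
          exact Finset.mem_union_left _ hv
        · right; left
          have hww : v.1 ≠ b.1 := by omega
          have hw : wt v b = 1 := by unfold wt; simp [hww]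
          rw [hw] at hveq
          have : ((b.1, llev V B b).1 + 1, (b.1, llev V B b).2 - 1) = v := by
            show ((b.1 : ℤ) + 1, llev V B b - 1) = v
            have : v = (v.1, v.2) := rfl
            rw [this, Prod.mk.injEq]
            exact ⟨by omega, by omega⟩
          rw [this]
          exact Finset.mem_union_left _ hv
      · have hmem : (b'.1, llev V B b') ∈ comp V B :=
          Finset.mem_union_right _ (Finset.mem_image_of_mem _ hb')
        rcases hbc with hc | hc | hc
        · right; right
          have hw : wt b' b = 2 := by unfold wt; simp [hc]
          rw [hw] at hbeq
          refine ⟨by omega, ?_⟩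
          have : ((b.1, llev V B b).1, (b.1, llev V B b).2 - 2) = (b'.1, llev V B b') := by
            show ((b.1 : ℤ), llev V B b - 2) = (b'.1, llev V B b')
            rw [Prod.mk.injEq]
            exact ⟨hc.symm, by omega⟩
          rw [this]
          exact hmem
        · left
          have hww : b'.1 ≠ b.1 := by omega
          have hw : wt b' b = 1 := by unfold wt; simp [hww]
          rw [hw] at hbeq
          have : ((b.1, llev V B b).1 - 1, (b.1, llev V B b).2 - 1) = (b'.1, llev V B b') := by
            show ((b.1 : ℤ) - 1, llev V B b - 1) = (b'.1, llev V B b')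
            rw [Prod.mk.injEq]
            exact ⟨by omega, by omega⟩
          rw [this]
          exact hmem
        · right; left
          have hww : b'.1 ≠ b.1 := by omega
          have hw : wt b' b = 1 := by unfold wt; simp [hww]
          rw [hw] at hbeq
          have : ((b.1, llev V B b).1 + 1, (b.1, llev V B b).2 - 1) = (b'.1, llev V B b') := by
            show ((b.1 : ℤ) + 1, llev V B b - 1) = (b'.1, llev V B b')
            rw [Prod.mk.injEq]
            exact ⟨by omega, by omega⟩
          rw [this]
          exact hmem

lemma comp_touch : ∃ l : ℕ, ((0:ℤ), l) ∈ comp V B := by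
  refine ⟨llev V B ((0:ℤ), (0:ℕ)), ?_⟩
  exact Finset.mem_union_right _ (Finset.mem_image_of_mem _ (b00 hB))

end Composition2

section RT2

variable {S : Finset ℤ} {V B : Finset Site} {e : ℤ}
variable (hV : IsTriAnimal (Set.Ici 0) (S.erase 0) V)
  (hB : IsTriAnimal (Set.Ici 0) ({0} : Finset ℤ) B)
  (hpS : ∀ s ∈ S, Even (s - e))
  (hV1 : ∀ p ∈ V, 1 ≤ p.1)

include hB hV1

lemma r_lvl0 : lvl0 (comp V B) = llev V B ((0:ℤ), (0:ℕ)) := by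
  have hmem : llev V B ((0:ℤ), (0:ℕ)) ∈ {l : ℕ | ((0:ℤ), l) ∈ comp V B} :=
    Finset.mem_union_right _ (Finset.mem_image_of_mem _ (b00 hB))
  have hlb : ∀ l ∈ {l : ℕ | ((0:ℤ), l) ∈ comp V B}, llev V B ((0:ℤ), (0:ℕ)) ≤ l := by
    intro l hl
    rcases (mem_comp hB).1 hl with h | ⟨b, hb, hbe⟩
    · exfalso; have := hV1 _ h; simp at this
    · simp only [Prod.mk.injEq] at hbe
      obtain ⟨h1, h2⟩ := hbe
      rcases Nat.eq_zero_or_pos b.2 with h0 | h0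
      · have : b = ((0:ℤ), (0:ℕ)) := by
          have hb' : b = (b.1, b.2) := rfl
          rw [hb', h1, show b.2 = 0 from h0]
        rw [← h2, this]
      · have hc : collide ((0:ℤ), (0:ℕ)) b := Or.inl h1.symm
        have := n_L_lt hB (V := V) (b := b) (b' := ((0:ℤ), (0:ℕ))) (b00 hB) hc h0
        omega
  refine Nat.le_antisymm (Nat.sInf_le hmem) ?_
  exact hlb _ (Nat.sInf_mem (Set.nonempty_of_mem hmem))

lemma r_mm : mm (comp V B) = ((0:ℤ), llev V B ((0:ℤ), (0:ℕ))) := by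
  rw [mm, r_lvl0 hB hV1]

lemma r_above_in_image : ∀ p, above (comp V B) ((0:ℤ), llev V B ((0:ℤ), (0:ℕ))) p →
    p ∈ B.image fun b => (b.1, llev V B b) := by
  intro p h
  induction h with
  | refl => exact Finset.mem_image_of_mem _ (b00 hB)
  | @tail mid last hab hstep IH =>
    obtain ⟨b, hb, hbe⟩ := Finset.mem_image.1 IH
    rcases (mem_comp hB).1 hstep.1 with h | h
    · exfalso
      have hcc : collide last b := by rw [← hbe] at hstep; exact collide_symm hstep.2.1
      have := le_llev_of_V (B := B) (p := b) h hcc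
      have := one_le_wt last b
      have hlt := hstep.2.2
      have hbb : mid.2 = llev V B b := by rw [← hbe]
      omega
    · exact Finset.mem_image.2 h

include hV hpS

lemma r_upar : upar (comp V B) (mm (comp V B)) = B.image fun b => (b.1, llev V B b) := by
  rw [r_mm hB hV1]
  ext p
  constructor
  · intro hp
    exact r_above_in_image hB hV1 p (mem_upar.1 hp).2
  · intro hp
    obtain ⟨b, hb, hbe⟩ := Finset.mem_image.1 hp
    rw [mem_upar]
    refine ⟨by rw [← hbe]; exact Finset.mem_union_right _ (Finset.mem_image_of_mem _ hb), ?_⟩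
    have key : ∀ b ∈ B, above (comp V B) ((0:ℤ), llev V B ((0:ℤ), (0:ℕ)))
        (b.1, llev V B b) := by
      intro b2 hb2
      have hch := n_supp_chain hB b2 hb2
      clear hbe
      induction hch with
      | refl => exact Relation.ReflTransGen.refl
      | @tail s c hab hstep IH =>
        have hsB : s ∈ B := above_mem (b00 hB) hab
        refine Relation.ReflTransGen.tail (IH hsB) ?_
        refine ⟨Finset.mem_union_right _ (Finset.mem_image_of_mem _ hstep.1), hstep.2.1, ?_⟩
        show llev V B s < llev V B c
        exact n_L_lt hB hsB hstep.2.1 hstep.2.2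
    rw [← hbe]
    exact key b hb

lemma rt2V : exV (comp V B) = V := by
  rw [exV, r_upar hV hB hpS hV1, comp]
  ext x
  rw [Finset.mem_sdiff, Finset.mem_union]
  constructor
  · rintro ⟨h1 | h1, h2⟩
    · exact h1
    · exact absurd h1 h2
  · intro hx
    exact ⟨Or.inl hx, r_disj hB x hx⟩

lemma rt2P : exP (comp V B) = B := by
  have hcore := core_recompute ∅ B (llev V B)
    (fun w hw w' hw' hc => n_L_strict_iff hB hw hw' hc)
    (fun w _ v hv _ => absurd hv (Finset.notMem_empty v))
    (fun w hw w' hw' hc hlt => ani_tight hB hpB hw hw' hc hlt)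
    (fun w hw h1 => by
      obtain ⟨s, hsB, hsc, hslt, hsw⟩ := ani_supp hB hw h1
      exact ⟨s, Or.inr hsB, hsc, hslt, hsw⟩)
  rw [exP, r_upar hV hB hpS hV1, Finset.image_image]
  have hEq : Set.EqOn
      ((fun u : Site => (u.1, llev ∅ (B.image fun b => (b.1, llev V B b)) u))
        ∘ fun b => (b.1, llev V B b)) id ↑B := by
    intro b hb
    rw [Finset.mem_coe] at hb
    have hc := hcore b hb
    show ((b.1 : ℤ), llev ∅ (B.image fun b => (b.1, llev V B b)) (b.1, llev V B b)) = b
    rw [hc]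
  rw [Finset.image_congr hEq, Finset.image_id]

end RT2

/-! ### Counting framework -/

noncomputable def gf (C : Finset Site → Prop) : PowerSeries ℤ :=
  PowerSeries.mk fun n => (({A : Finset Site | C A ∧ A.card = n}).ncard : ℤ)

lemma gf_coeff (C : Finset Site → Prop) (n : ℕ) :
    (PowerSeries.coeff n) (gf C) = (({A : Finset Site | C A ∧ A.card = n}).ncard : ℤ) := by
  rw [gf, PowerSeries.coeff_mk]

lemma gf_congr {C C' : Finset Site → Prop} (h : ∀ A, C A ↔ C' A) : gf C = gf C' := by
  apply PowerSeries.ext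
  intro n
  rw [gf_coeff, gf_coeff]
  congr 2
  ext A
  exact and_congr_left fun _ => h A

lemma gf_bij {C C' : Finset Site → Prop} (f g : Finset Site → Finset Site)
    (hf : ∀ A, C A → C' (f A) ∧ (f A).card = A.card ∧ g (f A) = A)
    (hg : ∀ A, C' A → C (g A) ∧ f (g A) = A) : gf C = gf C' := by
  apply PowerSeries.ext
  intro n
  rw [gf_coeff, gf_coeff]
  congr 1
  have himg : {A : Finset Site | C' A ∧ A.card = n}
      = f '' {A : Finset Site | C A ∧ A.card = n} := by
    ext A'
    constructor
    · rintro ⟨hC', hcard⟩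
      obtain ⟨hCg, hfg⟩ := hg A' hC'
      refine ⟨g A', ⟨hCg, ?_⟩, hfg⟩
      have h2 := (hf (g A') hCg).2.1
      rw [hfg] at h2
      omega
    · rintro ⟨A, ⟨hC, hcard⟩, rfl⟩
      obtain ⟨h1, h2, _⟩ := hf A hC
      exact ⟨h1, by omega⟩
  rw [himg, Set.ncard_image_of_injOn]
  intro A hA A2 hA2 heq
  have h1 := (hf A hA.1).2.2
  have h2 := (hf A2 hA2.1).2.2
  rw [← h1, ← h2, heq]

lemma gf_split {C C1 C2 : Finset Site → Prop} (h : ∀ A, C A ↔ (C1 A ∨ C2 A))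
    (hdis : ∀ A, C1 A → C2 A → False)
    (hfin1 : ∀ n, {A : Finset Site | C1 A ∧ A.card = n}.Finite)
    (hfin2 : ∀ n, {A : Finset Site | C2 A ∧ A.card = n}.Finite) :
    gf C = gf C1 + gf C2 := by
  apply PowerSeries.ext
  intro n
  rw [map_add, gf_coeff, gf_coeff, gf_coeff]
  have hset : {A : Finset Site | C A ∧ A.card = n}
      = {A : Finset Site | C1 A ∧ A.card = n} ∪ {A : Finset Site | C2 A ∧ A.card = n} := by
    ext A
    simp only [Set.mem_setOf_eq, Set.mem_union]
    rw [h A]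
    tauto
  rw [hset, Set.ncard_union_eq ?_ (hfin1 n) (hfin2 n)]
  · push_cast
    ring
  · rw [Set.disjoint_left]
    rintro A ⟨h1, _⟩ ⟨h2, _⟩
    exact hdis A h1 h2


lemma gf_prod {C C1 C2 : Finset Site → Prop} (Φ : Finset Site → Finset Site × Finset Site)
    (Ψ : Finset Site → Finset Site → Finset Site)
    (hΦ : ∀ A, C A → C1 (Φ A).1 ∧ C2 (Φ A).2 ∧ (Φ A).1.card + (Φ A).2.card = A.card ∧
      Ψ (Φ A).1 (Φ A).2 = A)
    (hΨ : ∀ V B, C1 V → C2 B → C (Ψ V B) ∧ Φ (Ψ V B) = (V, B))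
    (hfin1 : ∀ n, {A : Finset Site | C1 A ∧ A.card = n}.Finite)
    (hfin2 : ∀ n, {A : Finset Site | C2 A ∧ A.card = n}.Finite) :
    gf C = gf C1 * gf C2 := by
  apply PowerSeries.ext
  intro n
  rw [PowerSeries.coeff_mul, gf_coeff]
  set T : Finset (Finset Site × Finset Site) :=
    (Finset.HasAntidiagonal.antidiagonal n).biUnion
      (fun p => (hfin1 p.1).toFinset ×ˢ (hfin2 p.2).toFinset) with hT
  have hTmem : ∀ VB : Finset Site × Finset Site,
      VB ∈ T ↔ (C1 VB.1 ∧ C2 VB.2 ∧ VB.1.card + VB.2.card = n) := by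
    intro VB
    rw [hT, Finset.mem_biUnion]
    constructor
    · rintro ⟨p, hp, hVB⟩
      rw [Finset.mem_product] at hVB
      have h1 := (hfin1 p.1).mem_toFinset.1 hVB.1
      have h2 := (hfin2 p.2).mem_toFinset.1 hVB.2
      rw [Finset.HasAntidiagonal.mem_antidiagonal] at hp
      obtain ⟨h1a, h1b⟩ := h1
      obtain ⟨h2a, h2b⟩ := h2
      exact ⟨h1a, h2a, by omega⟩
    · rintro ⟨h1, h2, h3⟩
      refine ⟨(VB.1.card, VB.2.card), Finset.HasAntidiagonal.mem_antidiagonal.2 h3, ?_⟩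
      rw [Finset.mem_product]
      exact ⟨(hfin1 _).mem_toFinset.2 ⟨h1, rfl⟩, (hfin2 _).mem_toFinset.2 ⟨h2, rfl⟩⟩
  have hset : {A : Finset Site | C A ∧ A.card = n}
      = (fun p : Finset Site × Finset Site => Ψ p.1 p.2) '' ↑T := by
    ext A
    constructor
    · rintro ⟨hC, hcard⟩
      obtain ⟨h1, h2, h3, h4⟩ := hΦ A hC
      exact ⟨Φ A, (Finset.mem_coe.2 ((hTmem (Φ A)).2 ⟨h1, h2, by rw [h3, hcard]⟩)), h4⟩
    · rintro ⟨p, hp, rfl⟩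
      rw [Finset.mem_coe] at hp
      obtain ⟨h1, h2, h3⟩ := (hTmem p).1 hp
      obtain ⟨hC, hΦΨ⟩ := hΨ p.1 p.2 h1 h2
      refine ⟨hC, ?_⟩
      show (Ψ p.1 p.2).card = n
      have h5 := (hΦ _ hC).2.2.1
      rw [hΦΨ] at h5
      have h5' : p.1.card + p.2.card = (Ψ p.1 p.2).card := h5
      omega
  have hinj : Set.InjOn (fun p : Finset Site × Finset Site => Ψ p.1 p.2) ↑T := by
    intro p hp p' hp' heq
    rw [Finset.mem_coe] at hp hp'
    obtain ⟨h1, h2, _⟩ := (hTmem p).1 hp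
    obtain ⟨h1', h2', _⟩ := (hTmem p').1 hp'
    have e1 := (hΨ p.1 p.2 h1 h2).2
    have e2 := (hΨ p'.1 p'.2 h1' h2').2
    simp only at heq
    rw [heq] at e1
    rw [e2] at e1
    simp only [Prod.mk.injEq] at e1
    exact Prod.ext e1.1.symm e1.2.symm
  rw [hset, Set.ncard_image_of_injOn hinj, Set.ncard_coe_finset]
  have hcb : T.card = ∑ p ∈ Finset.HasAntidiagonal.antidiagonal n,
      ((hfin1 p.1).toFinset.card * (hfin2 p.2).toFinset.card) := by
    rw [hT, Finset.card_biUnion]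
    · refine Finset.sum_congr rfl fun p _ => ?_
      rw [Finset.card_product]
    · intro p hp p' hp' hne
      rw [Function.onFun, Finset.disjoint_left]
      intro VB h1 h2
      rw [Finset.mem_product] at h1 h2
      have a1 := ((hfin1 p.1).mem_toFinset.1 h1.1).2
      have a2 := ((hfin2 p.2).mem_toFinset.1 h1.2).2
      have b1 := ((hfin1 p'.1).mem_toFinset.1 h2.1).2
      have b2 := ((hfin2 p'.2).mem_toFinset.1 h2.2).2
      apply hne
      ext
      · omega
      · omega
  rw [hcb]
  push_cast
  refine Finset.sum_congr rfl fun p _ => ?_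
  rw [gf_coeff, gf_coeff, Set.ncard_eq_toFinset_card _ (hfin1 p.1),
    Set.ncard_eq_toFinset_card _ (hfin2 p.2)]


/-! ### Shifting -/

noncomputable def shmap (c : ℤ) (A : Finset Site) : Finset Site :=
  A.image fun p => (p.1 + c, p.2)

lemma sh_mem {c : ℤ} {A : Finset Site} {x : Site} :
    x ∈ shmap c A ↔ (x.1 - c, x.2) ∈ A := by
  rw [shmap, Finset.mem_image]
  constructor
  · rintro ⟨p, hp, rfl⟩
    simpa using hp
  · intro h
    exact ⟨(x.1 - c, x.2), h, by simp⟩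

lemma sh_sh {c : ℤ} {A : Finset Site} : shmap c (shmap (-c) A) = A := by
  rw [shmap, shmap, Finset.image_image]
  have : ((fun p : Site => (p.1 + c, p.2)) ∘ fun p : Site => (p.1 + -c, p.2)) = id := by
    funext p
    show (p.1 + -c + c, p.2) = p
    rw [show p.1 + -c + c = p.1 by ring]
  rw [this, Finset.image_id]

lemma sh_sh' {c : ℤ} {A : Finset Site} : shmap (-c) (shmap c A) = A := by
  have := sh_sh (c := -c) (A := A)
  rwa [neg_neg] at this

lemma sh_card {c : ℤ} {A : Finset Site} : (shmap c A).card = A.card := by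
  rw [shmap, Finset.card_image_of_injective]
  intro p q hpq
  simp only [Prod.mk.injEq] at hpq
  ext
  · omega
  · exact hpq.2

lemma sh_animal {c : ℤ} {S : Finset ℤ} {A : Finset Site}
    (hA : IsTriAnimal (Set.Ici 0) S A) (hQ : ∀ p ∈ A, 0 ≤ p.1 + c) :
    IsTriAnimal (Set.Ici 0) (S.image (· + c)) (shmap c A) := by
  refine ⟨?_, ?_, ?_⟩
  · intro x hx
    rw [sh_mem] at hx
    have := hQ _ hx
    simp only [Set.mem_Ici]
    omega
  · intro x
    rw [sh_mem]
    show ((x - c, 0) : Site) ∈ A ↔ _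
    rw [hA.2.1 (x - c), Finset.mem_image]
    constructor
    · intro h
      exact ⟨x - c, h, by ring⟩
    · rintro ⟨s, hs, rfl⟩
      simpa using hs
  · intro x hx h1
    rw [sh_mem] at hx
    rcases hA.2.2 _ hx h1 with h | h | ⟨h2, h⟩
    · left
      rw [sh_mem]
      show ((x.1 - 1 - c, x.2 - 1) : Site) ∈ A
      rw [show x.1 - 1 - c = x.1 - c - 1 by ring]
      exact h
    · right; left
      rw [sh_mem]
      show ((x.1 + 1 - c, x.2 - 1) : Site) ∈ A
      rw [show x.1 + 1 - c = x.1 - c + 1 by ring]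
      exact h
    · right; right
      refine ⟨h2, ?_⟩
      rw [sh_mem]
      exact h

lemma gf_shift (S : Finset ℤ) (d : ℕ) (extra : Finset Site → Prop) :
    gf (fun A => IsTriAnimal (Set.Ici 0) S A ∧ (∀ p ∈ A, (d:ℤ) ≤ p.1) ∧ extra A)
      = gf (fun A => IsTriAnimal (Set.Ici 0) (S.image (· + (-(d:ℤ)))) A ∧ extra (shmap d A)) := by
  apply gf_bij (shmap (-(d:ℤ))) (shmap (d:ℤ))
  · rintro A ⟨hA, hpos, hex⟩
    refine ⟨⟨sh_animal hA (fun p hp => by have := hpos p hp; omega), ?_⟩, sh_card, sh_sh⟩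
    rw [sh_sh]
    exact hex
  · rintro A ⟨hA, hex⟩
    have h2 : (S.image (· + (-(d:ℤ)))).image (· + (d:ℤ)) = S := by
      rw [Finset.image_image]
      have : ((· + (d:ℤ)) ∘ (· + (-(d:ℤ)))) = id := by
        funext x
        show x + -(d:ℤ) + d = x
        ring
      rw [this, Finset.image_id]
    refine ⟨⟨?_, ?_, hex⟩, sh_sh'⟩
    · have := sh_animal hA (c := (d:ℤ)) (fun p hp => by
        have := hA.1 p hp
        simp only [Set.mem_Ici] at this
        omega)
      rwa [h2] at this
    · intro p hp
      rw [sh_mem] at hp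
      have := hA.1 _ hp
      simp only [Set.mem_Ici] at this
      omega

/-! ### Master factorizations -/

section Master

variable {S : Finset ℤ} {e : ℤ}

lemma master_out (hpar : ∀ s ∈ S, Even (s - e)) (h0 : 0 ∉ S) :
    gf (fun A => IsTriAnimal (Set.Ici 0) S A ∧ ∃ l : ℕ, ((0:ℤ), l) ∈ A)
      = gf (fun V => IsTriAnimal (Set.Ici 0) S V ∧ (∀ p ∈ V, 1 ≤ p.1) ∧
          ∃ l : ℕ, ((1:ℤ), l) ∈ V)
        * gf (IsTriAnimal (Set.Ici 0) ({0} : Finset ℤ)) := by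
  have herase : S.erase 0 = S := Finset.erase_eq_of_notMem h0
  apply gf_prod (fun A => (exV A, exP A)) comp
  · rintro A ⟨hA, ht⟩
    refine ⟨⟨?_, ?_, ?_⟩, exP_animal hA hpar ht, cards_split hA hpar ht, rt1 hA hpar ht⟩
    · have := exV_animal hA ht; rwa [herase] at this
    · exact exV_pos1 hA ht
    · exact exV_touch1 hA ht h0
  · rintro V B ⟨hV, hV1, htc1⟩ hB
    have hV' : IsTriAnimal (Set.Ici 0) (S.erase 0) V := by rwa [herase]
    have hx2 : 0 ∈ S → ∀ p ∈ V, 2 ≤ p.1 := fun h => absurd h h0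
    have hx1 : 0 ∉ S → ∃ l : ℕ, ((1:ℤ), l) ∈ V := fun _ => htc1
    refine ⟨⟨comp_animal hV' hB hpar hV1 hx2 hx1, comp_touch hV' hB hpar hV1⟩, ?_⟩
    rw [Prod.mk.injEq]
    exact ⟨rt2V hV' hB hpar hV1, rt2P hV' hB hpar hV1⟩
  · exact fun n => ani_finite _ (fun A (h : _ ∧ _) => h.1) n
  · exact fun n => ani_finite _ (fun A h => h) n

lemma master_in (hpar : ∀ s ∈ S, Even (s - e)) (h0 : 0 ∈ S) :
    gf (fun A => IsTriAnimal (Set.Ici 0) S A ∧ ∃ l : ℕ, ((0:ℤ), l) ∈ A)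
      = gf (fun V => IsTriAnimal (Set.Ici 0) (S.erase 0) V ∧ (∀ p ∈ V, 2 ≤ p.1))
        * gf (IsTriAnimal (Set.Ici 0) ({0} : Finset ℤ)) := by
  apply gf_prod (fun A => (exV A, exP A)) comp
  · rintro A ⟨hA, ht⟩
    refine ⟨⟨exV_animal hA ht, exV_pos2 hA hpar ht h0⟩,
      exP_animal hA hpar ht, cards_split hA hpar ht, rt1 hA hpar ht⟩
  · rintro V B ⟨hV, hV2⟩ hB
    have hV1 : ∀ p ∈ V, 1 ≤ p.1 := fun p hp => by have := hV2 p hp; omega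
    have hx2 : 0 ∈ S → ∀ p ∈ V, 2 ≤ p.1 := fun _ => hV2
    have hx1 : 0 ∉ S → ∃ l : ℕ, ((1:ℤ), l) ∈ V := fun h => absurd h0 h
    refine ⟨⟨comp_animal hV hB hpar hV1 hx2 hx1, comp_touch hV hB hpar hV1⟩, ?_⟩
    rw [Prod.mk.injEq]
    exact ⟨rt2V hV hB hpar hV1, rt2P hV hB hpar hV1⟩
  · exact fun n => ani_finite _ (fun A (h : _ ∧ _) => h.1) n
  · exact fun n => ani_finite _ (fun A h => h) n

end Master

/-! ### Assembly -/

noncomputable def Csrc (q k : ℕ) : Finset ℤ :=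
  (Finset.range k).image fun i : ℕ => (q : ℤ) + 2 * (i : ℤ)

lemma cs_mem {q k : ℕ} {x : ℤ} : x ∈ Csrc q k ↔ ∃ i : ℕ, i < k ∧ x = (q:ℤ) + 2 * i := by
  rw [Csrc, Finset.mem_image]
  constructor
  · rintro ⟨i, hi, rfl⟩
    exact ⟨i, Finset.mem_range.1 hi, rfl⟩
  · rintro ⟨i, hi, rfl⟩
    exact ⟨i, Finset.mem_range.2 hi, rfl⟩

lemma cs_par (q k : ℕ) : ∀ s ∈ Csrc q k, Even (s - (q:ℤ)) := by
  intro s hs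
  obtain ⟨i, _, rfl⟩ := cs_mem.1 hs
  exact ⟨i, by ring⟩

lemma cs_not0 {q k : ℕ} (hq : 1 ≤ q) : (0:ℤ) ∉ Csrc q k := by
  intro h
  obtain ⟨i, _, he⟩ := cs_mem.1 h
  omega

lemma cs_zero_mem {k : ℕ} (hk : 1 ≤ k) : (0:ℤ) ∈ Csrc 0 k :=
  cs_mem.2 ⟨0, by omega, by norm_num⟩

lemma cs_erase_in {k : ℕ} : (Csrc 0 (k+1)).erase 0 = Csrc 2 k := by
  ext x
  rw [Finset.mem_erase, cs_mem, cs_mem]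
  constructor
  · rintro ⟨hne, i, hi, rfl⟩
    have hi1 : 1 ≤ i := by
      rcases Nat.eq_zero_or_pos i with h | h
      · exfalso; apply hne; rw [h]; norm_num
      · exact h
    exact ⟨i - 1, by omega, by push_cast; omega⟩
  · rintro ⟨i, hi, rfl⟩
    refine ⟨by push_cast; omega, i + 1, by omega, by push_cast; omega⟩

lemma cs_image_down (q k d : ℕ) : (Csrc (q+d) k).image (· + (-(d:ℤ))) = Csrc q k := by
  ext x
  rw [Finset.mem_image]
  constructor
  · rintro ⟨y, hy, rfl⟩
    obtain ⟨i, hi, rfl⟩ := cs_mem.1 hy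
    exact cs_mem.2 ⟨i, hi, by push_cast; ring⟩
  · intro hx
    obtain ⟨i, hi, rfl⟩ := cs_mem.1 hx
    refine ⟨(q:ℤ) + d + 2 * i, cs_mem.2 ⟨i, hi, by push_cast; ring⟩, by ring⟩

lemma gf_empty_src : gf (IsTriAnimal (Set.Ici 0) (∅ : Finset ℤ)) = 1 := by
  apply PowerSeries.ext
  intro n
  rw [gf_coeff]
  rcases Nat.eq_zero_or_pos n with h0 | h1
  · subst h0
    have hset : {A : Finset Site | IsTriAnimal (Set.Ici 0) (∅ : Finset ℤ) A ∧ A.card = 0}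
        = {(∅ : Finset Site)} := by
      ext A
      simp only [Set.mem_setOf_eq, Set.mem_singleton_iff]
      constructor
      · rintro ⟨hA, _⟩
        exact ani_empty hA
      · rintro rfl
        refine ⟨⟨by simp, by simp, by simp⟩, rfl⟩
    rw [hset, Set.ncard_singleton]
    simp
  · have hset : {A : Finset Site | IsTriAnimal (Set.Ici 0) (∅ : Finset ℤ) A ∧ A.card = n}
        = ∅ := by
      ext A
      simp only [Set.mem_setOf_eq, Set.mem_empty_iff_false, iff_false, not_and]
      intro hA
      rw [ani_empty hA]
      simp
      omega
    rw [hset]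
    simp [PowerSeries.coeff_one]
    omega

lemma H0k : ∀ k : ℕ, gf (IsTriAnimal (Set.Ici 0) (Csrc 0 k))
    = gf (IsTriAnimal (Set.Ici 0) ({0} : Finset ℤ)) ^ k := by
  intro k
  induction k with
  | zero =>
    rw [pow_zero, show Csrc 0 0 = (∅ : Finset ℤ) by rw [Csrc]; simp]
    exact gf_empty_src
  | succ k IH =>
    have step1 : gf (IsTriAnimal (Set.Ici 0) (Csrc 0 (k+1)))
        = gf (fun A => IsTriAnimal (Set.Ici 0) (Csrc 0 (k+1)) A ∧ ∃ l : ℕ, ((0:ℤ), l) ∈ A) := by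
      apply gf_congr
      intro A
      constructor
      · intro h
        exact ⟨h, 0, (h.2.1 0).2 (cs_zero_mem (by omega))⟩
      · exact fun h => h.1
    have step2 := master_in (S := Csrc 0 (k+1)) (e := 0) (by
        have := cs_par 0 (k+1)
        simpa using this) (cs_zero_mem (by omega))
    have step3 : gf (fun V => IsTriAnimal (Set.Ici 0) ((Csrc 0 (k+1)).erase 0) V ∧
        ∀ p ∈ V, 2 ≤ p.1)
        = gf (IsTriAnimal (Set.Ici 0) (Csrc 0 k)) := by
      have e1 : gf (fun V => IsTriAnimal (Set.Ici 0) ((Csrc 0 (k+1)).erase 0) V ∧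
          ∀ p ∈ V, 2 ≤ p.1)
          = gf (fun V => IsTriAnimal (Set.Ici 0) (Csrc 2 k) V ∧
            (∀ p ∈ V, ((2:ℕ):ℤ) ≤ p.1) ∧ True) := by
        apply gf_congr
        intro A
        rw [cs_erase_in]
        constructor
        · rintro ⟨h1, h2⟩
          exact ⟨h1, fun p hp => by have := h2 p hp; push_cast; omega, trivial⟩
        · rintro ⟨h1, h2, _⟩
          exact ⟨h1, fun p hp => by have := h2 p hp; push_cast at this; omega⟩
      rw [e1, gf_shift (Csrc 2 k) 2 (fun _ => True)]
      apply gf_congr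
      intro A
      rw [show (Csrc 2 k).image (· + (-((2:ℕ):ℤ))) = Csrc 0 k from by
        have := cs_image_down 0 k 2
        simpa using this]
      simp
    rw [step1, step2, step3, IH, pow_succ]

lemma Tqk {k : ℕ} (hk : 1 ≤ k) : ∀ q : ℕ,
    gf (fun A => IsTriAnimal (Set.Ici 0) (Csrc q k) A ∧ ∃ l : ℕ, ((0:ℤ), l) ∈ A)
      = gf (IsTriAnimal (Set.Ici 0) ({0} : Finset ℤ)) ^ q
        * gf (IsTriAnimal (Set.Ici 0) ({0} : Finset ℤ)) ^ k := by
  intro q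
  induction q with
  | zero =>
    rw [pow_zero, one_mul, ← H0k k]
    apply gf_congr
    intro A
    constructor
    · exact fun h => h.1
    · intro h
      exact ⟨h, 0, (h.2.1 0).2 (cs_zero_mem hk)⟩
  | succ q IH =>
    have step2 := master_out (S := Csrc (q+1) k) (e := ((q:ℤ)+1)) (by
        have := cs_par (q+1) k
        intro s hs
        have h2 := this s hs
        have : ((q+1:ℕ):ℤ) = (q:ℤ)+1 := by push_cast; ring
        rwa [this] at h2) (cs_not0 (by omega))
    have step3 : gf (fun V => IsTriAnimal (Set.Ici 0) (Csrc (q+1) k) V ∧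
        (∀ p ∈ V, 1 ≤ p.1) ∧ ∃ l : ℕ, ((1:ℤ), l) ∈ V)
        = gf (fun A => IsTriAnimal (Set.Ici 0) (Csrc q k) A ∧ ∃ l : ℕ, ((0:ℤ), l) ∈ A) := by
      have e1 : gf (fun V => IsTriAnimal (Set.Ici 0) (Csrc (q+1) k) V ∧
          (∀ p ∈ V, 1 ≤ p.1) ∧ ∃ l : ℕ, ((1:ℤ), l) ∈ V)
          = gf (fun V => IsTriAnimal (Set.Ici 0) (Csrc (q+1) k) V ∧
            (∀ p ∈ V, ((1:ℕ):ℤ) ≤ p.1) ∧ ∃ l : ℕ, ((1:ℤ), l) ∈ V) := by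
        apply gf_congr
        intro A
        norm_num
      rw [e1, gf_shift (Csrc (q+1) k) 1 (fun X => ∃ l : ℕ, ((1:ℤ), l) ∈ X)]
      apply gf_congr
      intro A
      rw [show (Csrc (q+1) k).image (· + (-((1:ℕ):ℤ))) = Csrc q k from by
        have := cs_image_down q k 1
        simpa using this]
      constructor
      · rintro ⟨h1, l, hl⟩
        rw [sh_mem] at hl
        norm_num at hl
        exact ⟨h1, l, hl⟩
      · rintro ⟨h1, l, hl⟩
        refine ⟨h1, l, ?_⟩
        rw [sh_mem]
        norm_num
        exact hl
    rw [step2, step3, IH, pow_succ]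
    ring

lemma Hsum {k : ℕ} (hk : 1 ≤ k) : ∀ q : ℕ,
    gf (IsTriAnimal (Set.Ici 0) (Csrc q k))
      = (∑ j ∈ Finset.range (q+1), gf (IsTriAnimal (Set.Ici 0) ({0} : Finset ℤ)) ^ j)
        * gf (IsTriAnimal (Set.Ici 0) ({0} : Finset ℤ)) ^ k := by
  intro q
  induction q with
  | zero =>
    rw [H0k k]
    simp
  | succ q IH =>
    have hsplit := gf_split (C := IsTriAnimal (Set.Ici 0) (Csrc (q+1) k))
      (C1 := fun A => IsTriAnimal (Set.Ici 0) (Csrc (q+1) k) A ∧ ∀ p ∈ A, 1 ≤ p.1)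
      (C2 := fun A => IsTriAnimal (Set.Ici 0) (Csrc (q+1) k) A ∧ ∃ l : ℕ, ((0:ℤ), l) ∈ A)
      (by
        intro A
        constructor
        · intro hA
          by_cases htc : ∃ l : ℕ, ((0:ℤ), l) ∈ A
          · exact Or.inr ⟨hA, htc⟩
          · left
            refine ⟨hA, fun p hp => ?_⟩
            have h0 := hA.1 p hp
            simp only [Set.mem_Ici] at h0
            rcases eq_or_lt_of_le h0 with heq | hlt
            · exfalso
              apply htc
              refine ⟨p.2, ?_⟩
              have : p = ((0:ℤ), p.2) := by rw [heq]
              rwa [this] at hp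
            · omega
        · rintro (h | h) <;> exact h.1)
      (by
        rintro A ⟨_, hpos⟩ ⟨_, l, hl⟩
        have := hpos _ hl
        simp at this)
      (fun n => ani_finite _ (fun A (h : _ ∧ _) => h.1) n)
      (fun n => ani_finite _ (fun A (h : _ ∧ _) => h.1) n)
    have havoid : gf (fun A => IsTriAnimal (Set.Ici 0) (Csrc (q+1) k) A ∧ ∀ p ∈ A, 1 ≤ p.1)
        = gf (IsTriAnimal (Set.Ici 0) (Csrc q k)) := by
      have e1 : gf (fun A => IsTriAnimal (Set.Ici 0) (Csrc (q+1) k) A ∧ ∀ p ∈ A, 1 ≤ p.1)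
          = gf (fun A => IsTriAnimal (Set.Ici 0) (Csrc (q+1) k) A ∧
            (∀ p ∈ A, ((1:ℕ):ℤ) ≤ p.1) ∧ True) := by
        apply gf_congr
        intro A
        norm_num
      rw [e1, gf_shift (Csrc (q+1) k) 1 (fun _ => True)]
      apply gf_congr
      intro A
      rw [show (Csrc (q+1) k).image (· + (-((1:ℕ):ℤ))) = Csrc q k from by
        have := cs_image_down q k 1
        simpa using this]
      simp
    rw [hsplit, havoid, IH, Tqk hk (q+1),
      Finset.sum_range_succ (fun x => gf (IsTriAnimal (Set.Ici 0) ({0} : Finset ℤ)) ^ x) (q+1)]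
    ring

theorem final (q k : ℕ) (hk : 1 ≤ k) :
    (1 - gf (IsTriAnimal (Set.Ici 0) ({0} : Finset ℤ))) *
        gf (IsTriAnimal (Set.Ici 0) (Csrc q k))
      = (1 - gf (IsTriAnimal (Set.Ici 0) ({0} : Finset ℤ)) ^ (q + 1)) *
        gf (IsTriAnimal (Set.Ici 0) ({0} : Finset ℤ)) ^ k := by
  rw [Hsum hk q]
  set D := gf (IsTriAnimal (Set.Ici 0) ({0} : Finset ℤ))
  have hgeom : (∑ j ∈ Finset.range (q+1), D ^ j) * (D - 1) = D ^ (q+1) - 1 := geom_sum_mul D (q+1)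
  calc (1 - D) * ((∑ j ∈ Finset.range (q+1), D ^ j) * D ^ k)
      = -((∑ j ∈ Finset.range (q+1), D ^ j) * (D - 1)) * D ^ k := by ring
    _ = -(D ^ (q+1) - 1) * D ^ k := by rw [hgeom]
    _ = (1 - D ^ (q + 1)) * D ^ k := by ring


theorem stmt15 (q k : ℕ) (hk : 1 ≤ k) :
    (1 - triGF (Set.Ici 0) {0}) *
        triGF (Set.Ici 0) ((Finset.range k).image fun i : ℕ => (q : ℤ) + 2 * (i : ℤ))
      = (1 - triGF (Set.Ici 0) {0} ^ (q + 1)) * triGF (Set.Ici 0) {0} ^ k := by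
  have hD : triGF (Set.Ici 0) {0} = gf (IsTriAnimal (Set.Ici 0) ({0} : Finset ℤ)) := rfl
  have hH : triGF (Set.Ici 0) ((Finset.range k).image fun i : ℕ => (q : ℤ) + 2 * (i : ℤ))
      = gf (IsTriAnimal (Set.Ici 0) (Csrc q k)) := rfl
  rw [hD, hH]
  exact final q k hk
end
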